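/- arXiv:1312.1234 — 5 statements merged into one kernel-verified Lean document; each statement's English description precedes it below -/
import Mathlib

section
/- Let T be a finite tree and let u and v be endvertices of T such that T − u is isomorphic to T − v. Then u and v are similar in T, i.e. there is an automorphism of T mapping u to v. -/
open SimpleGraph

namespace ErnPaper

/-- The weight of a vertex `v` in a graph `G`: the number of vertices in a largest
connected component of `G - v`. -/
noncomputable def wt {V : Type} [Fintype V] (G : SimpleGraph V) (v : V) : ℕ :=
  sSup {n | ∃ c : (G.induce ({v}ᶜ : Set V)).ConnectedComponent, n = Nat.card c.supp}

/-- The centroid of a graph: the set of vertices of minimum weight. -/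
def centroid {V : Type} [Fintype V] (G : SimpleGraph V) : Set V :=
  {v | ∀ u, wt G v ≤ wt G u}

/-- The edge-reconstruction number of a finite graph `G`: the least `k` for which there exist
`k` distinct edges `e₁, …, e_k` of `G` such that any finite graph `H` having `k` distinct
edges `f₁, …, f_k` with `H - fᵢ ≅ G - eᵢ` for all `i` must be isomorphic to `G`. -/
noncomputable def ern {V : Type} [Fintype V] (G : SimpleGraph V) : ℕ :=
  sInf {k | ∃ s : Finset (Sym2 V), s.card = k ∧ (↑s : Set (Sym2 V)) ⊆ G.edgeSet ∧
    ∀ (W : Type) (_ : Fintype W) (H : SimpleGraph W) (t : Finset (Sym2 W)),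
      (↑t : Set (Sym2 W)) ⊆ H.edgeSet →
      (∃ φ : {e // e ∈ s} ≃ {f // f ∈ t},
        ∀ e : {e // e ∈ s},
          Nonempty (H.deleteEdges {(φ e).1} ≃g G.deleteEdges {e.1})) →
      Nonempty (H ≃g G)}

/-- The spider tree `S_{p,q,r}`: three paths with `p`, `q`, `r` edges respectively,
emanating from a common central vertex. -/
def spider (p q r : ℕ) : SimpleGraph (Unit ⊕ (Fin p ⊕ Fin q ⊕ Fin r)) :=
  SimpleGraph.fromRel fun x y =>
    match x, y with
    | Sum.inl _, Sum.inr (Sum.inl j) => (j : ℕ) = 0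
    | Sum.inl _, Sum.inr (Sum.inr (Sum.inl j)) => (j : ℕ) = 0
    | Sum.inl _, Sum.inr (Sum.inr (Sum.inr j)) => (j : ℕ) = 0
    | Sum.inr (Sum.inl i), Sum.inr (Sum.inl j) => (j : ℕ) = (i : ℕ) + 1
    | Sum.inr (Sum.inr (Sum.inl i)), Sum.inr (Sum.inr (Sum.inl j)) => (j : ℕ) = (i : ℕ) + 1
    | Sum.inr (Sum.inr (Sum.inr i)), Sum.inr (Sum.inr (Sum.inr j)) => (j : ℕ) = (i : ℕ) + 1
    | _, _ => False

/-- A pseudopath: a tree isomorphic to a path `P_k`, to `S_{1,1,2}`, or to `S_{1,2,3}`. -/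
def IsPseudopath {V : Type} (T : SimpleGraph V) : Prop :=
  (∃ k, Nonempty (T ≃g pathGraph k)) ∨
    Nonempty (T ≃g spider 1 1 2) ∨ Nonempty (T ≃g spider 1 2 3)

/-- `T - xv + yv`: delete the end-edge `xv` and add the new edge `yv`. -/
def replaceEdge {V : Type} (T : SimpleGraph V) (x v y : V) : SimpleGraph V :=
  SimpleGraph.fromEdgeSet ((T.edgeSet \ {s(x, v)}) ∪ {s(y, v)})

/-- The disjoint union of two simple graphs. -/
def disjUnion {α β : Type} (G : SimpleGraph α) (H : SimpleGraph β) :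
    SimpleGraph (α ⊕ β) :=
  SimpleGraph.fromRel fun x y =>
    match x, y with
    | Sum.inl a, Sum.inl b => G.Adj a b
    | Sum.inr a, Sum.inr b => H.Adj a b
    | _, _ => False

/-- The caterpillar `C(2,0,…,0,2)` with spine on `m` vertices: spine path `v₀ … v_{m-1}`,
with two extra endvertices adjacent to `v₀` and two to `v_{m-1}`. -/
def doubleBroom (m : ℕ) : SimpleGraph (Fin m ⊕ Fin 4) :=
  SimpleGraph.fromRel fun x y =>
    match x, y with
    | Sum.inl i, Sum.inl j => (j : ℕ) = (i : ℕ) + 1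
    | Sum.inl i, Sum.inr l =>
        ((i : ℕ) = 0 ∧ (l : ℕ) < 2) ∨ ((i : ℕ) = m - 1 ∧ 2 ≤ (l : ℕ))
    | _, _ => False


section Stmt2Aux

open Walk


variable {V : Type} {T : SimpleGraph V}

section TPath

noncomputable def tpath (hT : T.IsTree) (a b : V) : T.Walk a b :=
  (hT.existsUnique_path a b).choose

lemma tpath_isPath (hT : T.IsTree) (a b : V) : (tpath hT a b).IsPath :=
  (hT.existsUnique_path a b).choose_spec.1

lemma tpath_eq (hT : T.IsTree) {a b : V} (p : T.Walk a b) (hp : p.IsPath) :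
    p = tpath hT a b :=
  (hT.existsUnique_path a b).choose_spec.2 p hp

lemma tpath_nil (hT : T.IsTree) (a : V) : tpath hT a a = Walk.nil :=
  (tpath_eq hT Walk.nil Walk.IsPath.nil).symm

lemma tpath_map (hT : T.IsTree) (s : T ≃g T) (a b : V) :
    (tpath hT a b).map s.toHom = tpath hT (s a) (s b) :=
  tpath_eq hT _ (Walk.map_isPath_of_injective s.injective (tpath_isPath hT a b))

/-- concatenating an edge onto a path avoiding the new endpoint is a path -/
lemma isPath_concat {a b c : V} {q : T.Walk a b} (hq : q.IsPath) (h : T.Adj b c)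
    (hc : c ∉ q.support) : (q.concat h).IsPath := by
  rw [← isPath_reverse_iff, reverse_concat]
  rw [cons_isPath_iff, isPath_reverse_iff, support_reverse, List.mem_reverse]
  exact ⟨hq, hc⟩

end TPath

section Gate

/-- The first vertex on the unique path from `c` to `w`. -/
noncomputable def gate (hT : T.IsTree) (c w : V) : V :=
  (tpath hT c w).getVert 1

lemma gate_spec (hT : T.IsTree) {c w : V} (h : c ≠ w) :
    T.Adj c (gate hT c w) ∧
      ∃ q : T.Walk (gate hT c w) w, q.IsPath ∧ c ∉ q.support := by
  have hnil : ¬(tpath hT c w).Nil := not_nil_of_ne h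
  refine ⟨adj_snd hnil, (tpath hT c w).tail, (tpath_isPath hT c w).tail, ?_⟩
  have hnodup := (tpath_isPath hT c w).support_nodup
  rw [support_eq_cons (tpath hT c w)] at hnodup
  have := (List.nodup_cons.mp hnodup).1
  exact fun hm => this (by rw [← support_tail_of_not_nil _ hnil]; exact hm)

lemma gate_adj (hT : T.IsTree) {c w : V} (h : c ≠ w) : T.Adj c (gate hT c w) :=
  (gate_spec hT h).1

lemma gate_eq (hT : T.IsTree) {c w g : V} (hadj : T.Adj c g) (q : T.Walk g w)
    (hq : q.IsPath) (hc : c ∉ q.support) : gate hT c w = g := by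
  have hpath : (Walk.cons hadj q).IsPath := (cons_isPath_iff hadj q).2 ⟨hq, hc⟩
  have := tpath_eq hT _ hpath
  unfold gate
  rw [← this]
  exact snd_cons q hadj

lemma gate_of_adj (hT : T.IsTree) {c w : V} (h : T.Adj c w) : gate hT c w = w :=
  gate_eq hT h Walk.nil Walk.IsPath.nil (by simp [h.ne])

/-- adjacent vertices distinct from `c` have the same gate -/
lemma gate_eq_of_adj (hT : T.IsTree) {c a b : V} (hab : T.Adj a b) (ha : a ≠ c) (hb : b ≠ c) :
    gate hT c a = gate hT c b := by
  haveI := Classical.decEq V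
  obtain ⟨hcg, q, hq, hcq⟩ := gate_spec hT (Ne.symm ha)
  by_cases hbq : b ∈ q.support
  · have := gate_eq hT hcg (q.takeUntil b hbq) (hq.takeUntil hbq)
      (fun hmem => hcq (Walk.support_takeUntil_subset q hbq hmem))
    rw [this]
  · have := gate_eq hT hcg (q.concat hab) (isPath_concat hq hab hbq)
      (by rw [support_concat]; simp only [List.concat_eq_append, List.mem_append,
            List.mem_singleton]; push_neg; exact ⟨hcq, Ne.symm hb⟩)
    rw [this]

lemma gate_map (hT : T.IsTree) (s : T ≃g T) {c w : V} (hc : s c = c) (h : c ≠ w) :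
    gate hT c (s w) = s (gate hT c w) := by
  obtain ⟨hcg, q, hq, hcq⟩ := gate_spec hT h
  have hadj2 : T.Adj c (s (gate hT c w)) := by
    have := s.map_adj_iff.mpr hcg
    rwa [hc] at this
  refine gate_eq hT hadj2 (q.map s.toHom)
    (Walk.map_isPath_of_injective s.injective hq) ?_
  rw [Walk.support_map, List.mem_map]
  rintro ⟨x, hx, hsx⟩
  have : x = c := s.injective (by rwa [hc])
  exact hcq (this ▸ hx)

end Gate


section Halves

lemma claimA (hT : T.IsTree) {c c' : V} (h : T.Adj c c') (w : V) :
    c' ∈ (tpath hT w c).support ↔ c ∉ (tpath hT w c').support := by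
  haveI := Classical.decEq V
  constructor
  · intro h1 hc
    have htake : (tpath hT w c).takeUntil c' h1 = tpath hT w c' :=
      tpath_eq hT _ ((tpath_isPath hT w c).takeUntil h1)
    have hnodup := (tpath_isPath hT w c).support_nodup
    rw [← take_spec (tpath hT w c) h1, support_append] at hnodup
    have hdisj := List.disjoint_of_nodup_append hnodup
    have hcdrop : c ∈ ((tpath hT w c).dropUntil c' h1).support.tail := by
      have hmem : c ∈ ((tpath hT w c).dropUntil c' h1).support := end_mem_support _
      rw [support_eq_cons, List.mem_cons] at hmem
      rcases hmem with hmem | hmem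
      · exact absurd hmem h.ne
      · exact hmem
    have hnot : c ∉ ((tpath hT w c).takeUntil c' h1).support := fun hmem => hdisj hmem hcdrop
    rw [htake] at hnot
    exact hnot hc
  · intro h1
    have hpath : ((tpath hT w c').concat h.symm).IsPath :=
      isPath_concat (tpath_isPath hT w c') h.symm h1
    have := tpath_eq hT _ hpath
    rw [← this, support_concat]
    simp only [List.concat_eq_append, List.mem_append, List.mem_singleton]
    left; exact end_mem_support _

/-- the half of the tree on the `c`-side of the edge `cc'` -/
def inHalf (hT : T.IsTree) (c c' w : V) : Prop := c' ∉ (tpath hT w c).support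

lemma inHalf_c (hT : T.IsTree) {c c' : V} (h : c ≠ c') : inHalf hT c c' c := by
  unfold inHalf
  rw [← tpath_eq hT Walk.nil Walk.IsPath.nil]
  simp [Ne.symm h]

lemma not_inHalf_c' (hT : T.IsTree) (c c' : V) : ¬ inHalf hT c c' c' := by
  unfold inHalf
  exact fun hx => hx (start_mem_support _)

/-- an isomorphism `s` inverting the edge `cc'` exchanges the two halves -/
lemma inHalf_map (hT : T.IsTree) (s : T ≃g T) {c c' : V} (h : T.Adj c c')
    (hc : s c = c') (hc' : s c' = c) (w : V) :
    inHalf hT c c' (s w) ↔ ¬ inHalf hT c c' w := by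
  have key : c' ∈ (tpath hT (s w) c).support ↔ c ∈ (tpath hT w c').support := by
    have hq : (((tpath hT w c').map s.toHom).copy rfl hc') = tpath hT (s w) c := by
      refine tpath_eq hT _ ?_
      rw [Walk.isPath_copy]
      exact Walk.map_isPath_of_injective s.injective (tpath_isPath hT w c')
    rw [← hq, Walk.support_copy, Walk.support_map, List.mem_map]
    constructor
    · rintro ⟨x, hx, hsx⟩
      have hxc : x = c := s.injective ((show s x = c' from hsx).trans hc.symm)
      rwa [hxc] at hx
    · intro hx
      exact ⟨c, hx, hc⟩
  unfold inHalf
  rw [key, claimA hT h w, not_not]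

end Halves


/-- Build a self-isomorphism from an involutive map preserving adjacency. -/
def isoOfInvolutive (f : V → V) (hf : Function.Involutive f)
    (hadj : ∀ a b, T.Adj a b → T.Adj (f a) (f b)) : T ≃g T where
  toEquiv := ⟨f, f, hf.leftInverse, hf.rightInverse⟩
  map_rel_iff' := by
    intro a b
    constructor
    · intro h
      have h2 := hadj _ _ h
      simp only [Equiv.coe_fn_mk] at h2
      rwa [hf a, hf b] at h2
    · exact hadj a b

@[simp] lemma isoOfInvolutive_apply (f : V → V) (hf : Function.Involutive f)
    (hadj : ∀ a b, T.Adj a b → T.Adj (f a) (f b)) (w : V) :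
    isoOfInvolutive f hf hadj w = f w := rfl

section SwapEdge

/-- cross edges between the two halves: only the edge `cc'` itself -/
lemma cross_edge (hT : T.IsTree) {c c' a b : V} (h : T.Adj c c')
    (ha : inHalf hT c c' a) (hb : ¬ inHalf hT c c' b) (hab : T.Adj a b) :
    a = c ∧ b = c' := by
  haveI := Classical.decEq V
  have hbp : b ∉ (tpath hT a c).support := by
    intro hbp
    have hdrop : (tpath hT a c).dropUntil b hbp = tpath hT b c :=
      tpath_eq hT _ ((tpath_isPath hT a c).dropUntil hbp)
    apply hb
    unfold inHalf
    intro hmem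
    rw [← hdrop] at hmem
    exact ha (Walk.support_dropUntil_subset _ hbp hmem)
  -- cons path b → c
  have hcons : (Walk.cons hab.symm (tpath hT a c)).IsPath :=
    (cons_isPath_iff _ _).2 ⟨tpath_isPath hT a c, hbp⟩
  have hbc : b = c' := by
    have hc'mem : c' ∈ (Walk.cons hab.symm (tpath hT a c)).support := by
      rw [tpath_eq hT _ hcons]
      by_contra hcon
      exact hb hcon
    rw [support_cons, List.mem_cons] at hc'mem
    rcases hc'mem with h1 | h1
    · exact h1.symm
    · exact absurd h1 ha
  subst hbc
  refine ⟨?_, rfl⟩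
  by_contra hac
  have hac' : a ≠ b := hab.ne
  have hw : (Walk.cons hab (Walk.cons h.symm Walk.nil)).IsPath := by
    rw [cons_isPath_iff, cons_isPath_iff]
    refine ⟨⟨Walk.IsPath.nil, by simp [h.ne.symm]⟩, ?_⟩
    simp [hac', hac]
  have := tpath_eq hT _ hw
  apply ha
  rw [← this]
  simp

open scoped Classical in
/-- swap construction when `s` inverts an edge -/
lemma swap_of_invert (hT : T.IsTree) (s : T ≃g T) {c c' : V} (h : T.Adj c c')
    (hc : s c = c') (hc' : s c' = c) (x : V) (hxK : inHalf hT c c' x) :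
    ∃ t : T ≃g T, t x = s x ∧ t (s x) = x := by
  set f : V → V := fun w => if inHalf hT c c' w then s w else s.symm w with hf
  have hsymc : s.symm c = c' := by rw [← hc']; exact s.symm_apply_apply c'
  have hsymc' : s.symm c' = c := by rw [← hc]; exact s.symm_apply_apply c
  have hmap := inHalf_map hT s h hc hc'
  have hmapsym : ∀ w, inHalf hT c c' (s.symm w) ↔ ¬ inHalf hT c c' w := by
    intro w
    have := inHalf_map hT s h hc hc' (s.symm w)
    rw [s.apply_symm_apply] at this
    tauto
  have hinv : Function.Involutive f := by
    intro w
    by_cases hw : inHalf hT c c' w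
    · have h1 : f w = s w := if_pos hw
      have h2 : ¬ inHalf hT c c' (s w) := by rw [hmap w]; exact not_not_intro hw
      rw [h1, hf]; simp only [h2, if_neg, not_false_eq_true]
      exact s.symm_apply_apply w
    · have h1 : f w = s.symm w := if_neg hw
      have h2 : inHalf hT c c' (s.symm w) := (hmapsym w).2 hw
      rw [h1, hf]; simp only [h2, if_pos]
      exact s.apply_symm_apply w
  have hadj : ∀ a b, T.Adj a b → T.Adj (f a) (f b) := by
    intro a b hab
    by_cases haK : inHalf hT c c' a <;> by_cases hbK : inHalf hT c c' b
    · simp only [hf, haK, hbK, if_pos]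
      exact s.map_adj_iff.2 hab
    · obtain ⟨h1, h2⟩ := cross_edge hT h haK hbK hab
      subst h1; subst h2
      simp only [hf, haK, hbK, if_pos, if_neg, not_false_eq_true]
      rw [hc, hsymc']
      exact h.symm
    · obtain ⟨h1, h2⟩ := cross_edge hT h hbK haK hab.symm
      subst h1; subst h2
      simp only [hf, haK, hbK, if_pos, if_neg, not_false_eq_true]
      rw [hc, hsymc']
      exact h
    · simp only [hf, haK, hbK, if_neg, not_false_eq_true]
      exact s.symm.map_adj_iff.2 hab
  refine ⟨isoOfInvolutive f hinv hadj, ?_, ?_⟩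
  · show f x = s x
    simp [hf, hxK]
  · show f (s x) = x
    have h2 : ¬ inHalf hT c c' (s x) := by rw [hmap x]; exact not_not_intro hxK
    simp only [hf, h2, if_neg, not_false_eq_true]
    exact s.symm_apply_apply x

end SwapEdge

section SwapFix

lemma tpath_gate (hT : T.IsTree) {c x : V} (h : c ≠ x) :
    tpath hT c x = Walk.cons (gate_adj hT h) (tpath hT (gate hT c x) x) := by
  obtain ⟨hcg, q, hq, hcq⟩ := gate_spec hT h
  have hqe : q = tpath hT (gate hT c x) x := tpath_eq hT q hq
  rw [← hqe]
  exact (tpath_eq hT _ ((cons_isPath_iff _ _).2 ⟨hq, hcq⟩)).symm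

lemma tpath_gate_length (hT : T.IsTree) {c x : V} (h : c ≠ x) :
    (tpath hT c x).length = (tpath hT (gate hT c x) x).length + 1 := by
  conv_lhs => rw [tpath_gate hT h]
  simp

open scoped Classical in
lemma swap_of_fix (hT : T.IsTree) : ∀ (d : ℕ) (s : T ≃g T) (c x : V), s c = c →
    (tpath hT c x).length ≤ d → ∃ t : T ≃g T, t x = s x ∧ t (s x) = x := by
  intro d
  induction d with
  | zero =>
    intro s c x hc hlen
    have hcx : c = x := Walk.eq_of_length_eq_zero (Nat.le_zero.mp hlen)
    subst hcx
    exact ⟨(Iso.refl : T ≃g T), by simp [hc], by simp [hc]⟩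
  | succ d ih =>
    intro s c x hc hlen
    by_cases hxc : x = c
    · subst hxc
      exact ⟨(Iso.refl : T ≃g T), by simp [hc], by simp [hc]⟩
    by_cases hfix : s x = x
    · exact ⟨(Iso.refl : T ≃g T), by simp [hfix], by simp [hfix]⟩
    have hcx : c ≠ x := Ne.symm hxc
    have hyc : s x ≠ c := by
      intro hh
      exact hxc (s.injective (hh.trans hc.symm))
    have hcy : c ≠ s x := Ne.symm hyc
    have hb_eq : gate hT c (s x) = s (gate hT c x) := gate_map hT s hc hcx
    by_cases hab : gate hT c x = gate hT c (s x)
    · have hsa : s (gate hT c x) = gate hT c x := by rw [← hb_eq, ← hab]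
      have hlen' : (tpath hT (gate hT c x) x).length ≤ d := by
        have h2 := tpath_gate_length hT hcx
        omega
      exact ih s (gate hT c x) x hsa hlen'
    · -- piecewise construction
      set a := gate hT c x with ha_def
      set b := gate hT c (s x) with hb_def
      have hsymc : s.symm c = c := by
        nth_rewrite 1 [← hc]
        exact s.toEquiv.symm_apply_apply c
      have hsymb : s.symm b = a := by
        rw [hb_eq]; exact s.toEquiv.symm_apply_apply a
      have hsa : s a = b := hb_eq.symm
      have hca : T.Adj c a := gate_adj hT hcx
      have hcb : T.Adj c b := gate_adj hT hcy
      set f : V → V := fun w =>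
        if w = c then w else if gate hT c w = a then s w
        else if gate hT c w = b then s.symm w else w with hf_def
      have hfe : ∀ w, f w =
          if w = c then w else if gate hT c w = a then s w
          else if gate hT c w = b then s.symm w else w := fun w => rfl
      have hfc : ∀ w, w ≠ c → s w ≠ c := fun w hw hh => hw (s.injective (hh.trans hc.symm))
      have hfc' : ∀ w, w ≠ c → s.symm w ≠ c := fun w hw hh => by
        apply hw
        have h3 : s (s.symm w) = s c := congrArg s hh
        rw [RelIso.apply_symm_apply, hc] at h3
        exact h3
      have hgs : ∀ w, w ≠ c → gate hT c (s w) = s (gate hT c w) := fun w hw =>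
        gate_map hT s hc (Ne.symm hw)
      have hgs' : ∀ w, w ≠ c → gate hT c (s.symm w) = s.symm (gate hT c w) := fun w hw =>
        gate_map hT s.symm hsymc (Ne.symm hw)
      have hfc2 : f c = c := by rw [hfe, if_pos rfl]
      have hf1 : ∀ w, w ≠ c → gate hT c w = a → f w = s w := by
        intro w hw hg
        rw [hfe, if_neg hw, if_pos hg]
      have hf2 : ∀ w, w ≠ c → gate hT c w = b → f w = s.symm w := by
        intro w hw hg
        rw [hfe, if_neg hw, if_neg (hg ▸ (Ne.symm hab) : ¬ gate hT c w = a), if_pos hg]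
      have hf3 : ∀ w, w ≠ c → gate hT c w ≠ a → gate hT c w ≠ b → f w = w := by
        intro w hw hg1 hg2
        rw [hfe, if_neg hw, if_neg hg1, if_neg hg2]
      have hinv : Function.Involutive f := by
        intro w
        by_cases hw : w = c
        · rw [hw, hfc2, hfc2]
        by_cases hg1 : gate hT c w = a
        · rw [hf1 w hw hg1]
          have h2 : gate hT c (s w) = b := by rw [hgs w hw, hg1, hsa]
          rw [hf2 (s w) (hfc w hw) h2]
          exact s.toEquiv.symm_apply_apply w
        by_cases hg2 : gate hT c w = b
        · rw [hf2 w hw hg2]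
          have h2 : gate hT c (s.symm w) = a := by rw [hgs' w hw, hg2, hsymb]
          rw [hf1 (s.symm w) (hfc' w hw) h2]
          exact s.toEquiv.apply_symm_apply w
        · rw [hf3 w hw hg1 hg2, hf3 w hw hg1 hg2]
      have hadj : ∀ w w', T.Adj w w' → T.Adj (f w) (f w') := by
        have key : ∀ w', T.Adj c w' → T.Adj (f c) (f w') := by
          intro w' hadj
          have hw'c : w' ≠ c := fun hh => T.irrefl (hh ▸ hadj)
          have hgw' : gate hT c w' = w' := gate_of_adj hT hadj
          rw [hfc2]
          by_cases h1 : w' = a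
          · rw [hf1 w' hw'c (hgw'.trans h1), h1, hsa]
            exact hcb
          by_cases h2 : w' = b
          · rw [hf2 w' hw'c (hgw'.trans h2), h2, hsymb]
            exact hca
          · rw [hf3 w' hw'c (hgw'.trans_ne h1) (hgw'.trans_ne h2)]
            exact hadj
        intro w w' hadj
        by_cases hw : w = c
        · rw [hw]
          exact key w' (hw ▸ hadj)
        by_cases hw' : w' = c
        · rw [hw']
          exact (key w ((hw' ▸ hadj).symm)).symm
        · have hg : gate hT c w = gate hT c w' := gate_eq_of_adj hT hadj hw hw'
          by_cases h1 : gate hT c w = a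
          · rw [hf1 w hw h1, hf1 w' hw' (hg ▸ h1)]
            exact s.map_adj_iff.2 hadj
          by_cases h2 : gate hT c w = b
          · rw [hf2 w hw h2, hf2 w' hw' (hg ▸ h2)]
            exact s.symm.map_adj_iff.2 hadj
          · rw [hf3 w hw h1 h2, hf3 w' hw' (hg ▸ h1) (hg ▸ h2)]
            exact hadj
      refine ⟨isoOfInvolutive f hinv hadj, ?_, ?_⟩
      · show f x = s x
        exact hf1 x hxc rfl
      · show f (s x) = x
        rw [hf2 (s x) hyc rfl]
        exact s.toEquiv.symm_apply_apply x

end SwapFix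

section InducedTree

/-- internal vertices of a path have at least two neighbours -/
lemma two_le_ncard_internal [Finite V] {x y w : V} (p : T.Walk x y) (hp : p.IsPath)
    (hw : w ∈ p.support) (hwx : w ≠ x) (hwy : w ≠ y) :
    2 ≤ (T.neighborSet w).ncard := by
  induction p with
  | nil =>
    simp only [Walk.support_nil, List.mem_singleton] at hw
    exact absurd hw hwx
  | @cons x z y h q ih =>
    rw [Walk.support_cons, List.mem_cons] at hw
    rcases hw with hw | hw
    · exact absurd hw hwx
    rw [Walk.cons_isPath_iff] at hp
    by_cases hz : w = z
    · subst hz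
      cases q with
      | nil => exact absurd rfl hwy
      | @cons _ z2 _ h2 r =>
        have hxz2 : x ≠ z2 := by
          intro hh
          apply hp.2
          rw [Walk.support_cons, List.mem_cons]
          right
          rw [hh]
          exact Walk.start_mem_support r
        have hsub : {x, z2} ⊆ T.neighborSet w := by
          intro t ht
          rcases ht with ht | ht
          · rw [ht]; exact h.symm
          · rw [ht]; exact h2
        calc 2 = ({x, z2} : Set V).ncard := (Set.ncard_pair hxz2).symm
        _ ≤ (T.neighborSet w).ncard := Set.ncard_le_ncard hsub (Set.toFinite _)
    · exact ih hp.1 hw hz hwy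

/-- lift a walk whose support lies in `s` to the induced graph -/
def liftWalk {s : Set V} : ∀ {x y : V} (p : T.Walk x y) (_hx : x ∈ s) (_hy : y ∈ s)
    (_h : ∀ w ∈ p.support, w ∈ s), (T.induce s).Walk ⟨x, _hx⟩ ⟨y, _hy⟩
  | x, _, Walk.nil, hx, hy, _ => Walk.nil.copy rfl (by congr!)
  | x, y, Walk.cons (v := z) h q, hx, hy, hsup => by
    have hz : z ∈ s := hsup z (by rw [Walk.support_cons]; exact List.mem_cons_of_mem _ (Walk.start_mem_support q))
    exact Walk.cons (by exact h) (liftWalk q hz hy (fun w hw => hsup w (by rw [Walk.support_cons]; exact List.mem_cons_of_mem _ hw)))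

lemma isAcyclic_induce (hA : T.IsAcyclic) (s : Set V) : (T.induce s).IsAcyclic := by
  intro v c hc
  exact hA (c.map (SimpleGraph.Embedding.induce (G := T) s).toHom)
    (hc.map (SimpleGraph.Embedding.induce (G := T) s).injective)

end InducedTree

section TreeBasics

lemma ncard_neighborSet_eq_degree [Fintype V] (w : V) [Fintype (T.neighborSet w)] :
    (T.neighborSet w).ncard = T.degree w := by
  classical
  rw [← card_neighborFinset_eq_degree, neighborFinset_def, Set.ncard_eq_toFinset_card']

lemma exists_neighbor [Fintype V] (hT : T.IsTree) (h2 : 2 ≤ Fintype.card V) (w : V) :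
    ∃ z, T.Adj w z := by
  have : ∃ z : V, z ≠ w := by
    by_contra hcon
    push_neg at hcon
    have : Fintype.card V ≤ 1 := Fintype.card_le_one_iff.2 (fun a b => (hcon a).trans (hcon b).symm)
    omega
  obtain ⟨z, hz⟩ := this
  obtain ⟨p⟩ := hT.isConnected.preconnected w z
  have hnil : ¬ p.Nil := Walk.not_nil_of_ne (Ne.symm hz)
  exact ⟨p.getVert 1, Walk.adj_snd hnil⟩

lemma exists_leaf [Fintype V] (hT : T.IsTree) (h2 : 2 ≤ Fintype.card V) :
    ∃ w, (T.neighborSet w).ncard = 1 := by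
  classical
  by_contra hcon
  push_neg at hcon
  have hge : ∀ w, 2 ≤ T.degree w := by
    intro w
    obtain ⟨z, hz⟩ := exists_neighbor hT h2 w
    have h1 : 1 ≤ T.degree w := by
      rw [← card_neighborFinset_eq_degree]
      exact Finset.card_pos.2 ⟨z, by rwa [mem_neighborFinset]⟩
    have hne : T.degree w ≠ 1 := by
      rw [← ncard_neighborSet_eq_degree]
      exact hcon w
    omega
  have hsum := T.sum_degrees_eq_twice_card_edges
  have hcard := hT.card_edgeFinset
  have hbound : 2 * Fintype.card V ≤ ∑ v, T.degree v := by
    calc 2 * Fintype.card V = ∑ _v : V, 2 := by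
          rw [Finset.sum_const, Finset.card_univ]; ring
    _ ≤ ∑ v, T.degree v := Finset.sum_le_sum (fun i _ => hge i)
  omega

lemma exists_internal [Fintype V] (hT : T.IsTree) (h3 : 3 ≤ Fintype.card V) :
    ∃ w, 2 ≤ (T.neighborSet w).ncard := by
  classical
  by_contra hcon
  push_neg at hcon
  have hle : ∀ w, T.degree w ≤ 1 := by
    intro w
    have := hcon w
    rw [ncard_neighborSet_eq_degree] at this
    omega
  have hsum := T.sum_degrees_eq_twice_card_edges
  have hcard := hT.card_edgeFinset
  have hbound : ∑ v, T.degree v ≤ Fintype.card V := by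
    calc ∑ v, T.degree v ≤ ∑ _v : V, 1 := Finset.sum_le_sum (fun i _ => hle i)
    _ = Fintype.card V := by rw [Finset.sum_const, Finset.card_univ]; ring
  omega

lemma isTree_induce_leaves [Fintype V] (hT : T.IsTree) {L : Set V}
    (hL : ∀ w ∈ L, (T.neighborSet w).ncard ≤ 1) (hne : Lᶜ.Nonempty) :
    (T.induce Lᶜ).IsTree := by
  rw [isTree_iff]
  constructor
  · rw [connected_iff]
    constructor
    · intro a b
      have hsup : ∀ w ∈ (tpath hT a.1 b.1).support, w ∈ Lᶜ := by
        intro w hw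
        by_cases hwa : w = a.1
        · rw [hwa]; exact a.2
        by_cases hwb : w = b.1
        · rw [hwb]; exact b.2
        · intro hwL
          have := two_le_ncard_internal (tpath hT a.1 b.1) (tpath_isPath hT a.1 b.1) hw hwa hwb
          have := hL w hwL
          omega
      have := liftWalk (tpath hT a.1 b.1) a.2 b.2 hsup
      exact ⟨this.copy (Subtype.ext rfl) (Subtype.ext rfl)⟩
    · exact hne.to_subtype
  · exact isAcyclic_induce hT.2 _

end TreeBasics

section Dichotomy

/-- restrict a self-isomorphism to an invariant set -/
def restrictIso (s : T ≃g T) (P : Set V) (hP : ∀ w, w ∈ P ↔ s w ∈ P) :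
    T.induce P ≃g T.induce P where
  toEquiv := s.toEquiv.subtypeEquiv hP
  map_rel_iff' := by
    intro a b
    simp only [Equiv.subtypeEquiv_apply, comap_adj, Function.Embedding.coe_subtype]
    exact s.map_adj_iff

@[simp] lemma restrictIso_apply (s : T ≃g T) (P : Set V) (hP : ∀ w, w ∈ P ↔ s w ∈ P)
    (w : P) : (restrictIso s P hP w : V) = s w := rfl

lemma iso_ncard_neighborSet (s : T ≃g T) (w : V) :
    (T.neighborSet (s w)).ncard = (T.neighborSet w).ncard := by
  rw [← Nat.card_coe_set_eq, ← Nat.card_coe_set_eq]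
  exact (Nat.card_congr (s.mapNeighborSet w)).symm

lemma dichotomy_aux : ∀ (n : ℕ) {V : Type} [Fintype V] (T : SimpleGraph V),
    T.IsTree → ∀ s : T ≃g T, Fintype.card V ≤ n →
    (∃ c, s c = c) ∨ (∃ c c', T.Adj c c' ∧ s c = c' ∧ s c' = c) := by
  intro n
  induction n with
  | zero =>
    intro V _ T hT s hcard
    obtain ⟨v⟩ := hT.isConnected.nonempty
    have : 0 < Fintype.card V := Fintype.card_pos_iff.2 ⟨v⟩
    omega
  | succ n ih =>
    intro V _ T hT s hcard
    obtain ⟨v⟩ := hT.isConnected.nonempty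
    by_cases h1 : Fintype.card V ≤ 1
    · left
      exact ⟨v, (Fintype.card_le_one_iff.1 h1 _ _)⟩
    push_neg at h1
    by_cases hfix : ∃ c, s c = c
    · exact Or.inl hfix
    push_neg at hfix
    by_cases h2 : Fintype.card V ≤ 2
    · right
      have hsvv : s v ≠ v := hfix v
      have hall : ∀ x : V, x = v ∨ x = s v := by
        classical
        intro x
        have hpair : ({v, s v} : Finset V).card = 2 := by
          rw [Finset.card_insert_of_notMem (by simpa using (Ne.symm hsvv)), Finset.card_singleton]
        have huniv : ({v, s v} : Finset V) = Finset.univ := by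
          apply Finset.eq_univ_of_card
          have := Finset.card_le_univ ({v, s v} : Finset V)
          rw [hpair] at this ⊢
          omega
        have hx : x ∈ ({v, s v} : Finset V) := huniv ▸ Finset.mem_univ x
        simpa using hx
      have hssv : s (s v) = v := by
        rcases hall (s (s v)) with h3 | h3
        · exact h3
        · exact absurd (s.injective h3) hsvv
      obtain ⟨z, hz⟩ := exists_neighbor hT h1 v
      have hzv : z ≠ v := fun hh => T.irrefl (hh ▸ hz)
      have hzsv : z = s v := (hall z).resolve_left hzv
      exact ⟨v, s v, hzsv ▸ hz, rfl, hssv⟩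
    push_neg at h2
    -- card ≥ 3 : prune the leaves
    set L : Set V := {w | (T.neighborSet w).ncard ≤ 1} with hL_def
    have hLmem : ∀ w ∈ L, (T.neighborSet w).ncard ≤ 1 := fun w hw => hw
    obtain ⟨w0, hw0⟩ := exists_internal hT h2
    obtain ⟨l0, hl0⟩ := exists_leaf hT (by omega)
    have hne : Lᶜ.Nonempty := ⟨w0, by simp only [hL_def, Set.mem_compl_iff, Set.mem_setOf_eq]; omega⟩
    have hT' : (T.induce Lᶜ).IsTree := isTree_induce_leaves hT hLmem hne
    have hinv : ∀ w, w ∈ Lᶜ ↔ s w ∈ Lᶜ := by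
      intro w
      simp only [hL_def, Set.mem_compl_iff, Set.mem_setOf_eq]
      rw [iso_ncard_neighborSet s w]
    have hlt : Fintype.card ↥Lᶜ < Fintype.card V := by
      apply Fintype.card_subtype_lt (x := l0)
      simp only [hL_def, Set.mem_compl_iff, Set.mem_setOf_eq, not_not]
      omega
    have hres := ih (T.induce Lᶜ) hT' (restrictIso s Lᶜ hinv) (by omega)
    rcases hres with ⟨c, hc⟩ | ⟨c, c', hadj, hc, hc'⟩
    · left
      exact ⟨c.1, congrArg Subtype.val hc⟩
    · right
      refine ⟨c.1, c'.1, hadj, congrArg Subtype.val hc, congrArg Subtype.val hc'⟩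

lemma not_inHalf_iff (hT : T.IsTree) {c c' : V} (h : T.Adj c c') (w : V) :
    ¬ inHalf hT c c' w ↔ inHalf hT c' c w := by
  unfold inHalf
  rw [not_not]
  exact claimA hT h w

/-- In a tree, if some automorphism maps `x` to `y`, some automorphism swaps them. -/
lemma tree_swap [Fintype V] (hT : T.IsTree) (s : T ≃g T) (x : V) :
    ∃ t : T ≃g T, t x = s x ∧ t (s x) = x := by
  rcases dichotomy_aux (Fintype.card V) T hT s le_rfl with ⟨c, hc⟩ | ⟨c, c', hadj, hc, hc'⟩
  · exact swap_of_fix hT (tpath hT c x).length s c x hc le_rfl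
  · by_cases hx : inHalf hT c c' x
    · exact swap_of_invert hT s hadj hc hc' x hx
    · exact swap_of_invert hT s hadj.symm hc' hc x ((not_inHalf_iff hT hadj x).mp hx)

end Dichotomy

section IsoHelpers

variable {W : Type} {G : SimpleGraph V} {H : SimpleGraph W}

/-- isomorphisms preserve the number of neighbours -/
lemma iso_ncard_neighborSet' (f : G ≃g H) (w : V) :
    (H.neighborSet (f w)).ncard = (G.neighborSet w).ncard := by
  rw [← Nat.card_coe_set_eq, ← Nat.card_coe_set_eq]
  exact (Nat.card_congr (f.mapNeighborSet w)).symm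

/-- restrict an isomorphism to the complement of a point -/
def pointRestrict {A : Set V} {B : Set W} (f : G.induce A ≃g H.induce B) (a : A) :
    (G.induce A).induce ({a}ᶜ : Set A) ≃g (H.induce B).induce ({f a}ᶜ : Set B) where
  toEquiv := f.toEquiv.subtypeEquiv (fun w => by
    simp only [Set.mem_compl_iff, Set.mem_singleton_iff]
    constructor
    · intro hw hc
      exact hw (f.injective hc)
    · intro hw hc
      subst hc
      exact hw rfl)
  map_rel_iff' := by
    intro a b
    simp only [Equiv.subtypeEquiv_apply, comap_adj, Function.Embedding.coe_subtype]
    exact f.map_adj_iff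

@[simp] lemma pointRestrict_apply {A : Set V} {B : Set W} (f : G.induce A ≃g H.induce B)
    (a : A) (w : ({a}ᶜ : Set A)) : ((pointRestrict f a) w : B) = f w.1 := rfl

/-- recast an induced subgraph along an equality of sets -/
def setCongrIso {A B : Set V} (h : A = B) : G.induce A ≃g G.induce B where
  toEquiv := Equiv.setCongr h
  map_rel_iff' := by
    intro a b
    rfl

@[simp] lemma setCongrIso_apply {A B : Set V} (h : A = B) (w : A) :
    ((setCongrIso (G := G) h) w : V) = w.1 := rfl

/-- collapse a doubly-induced subgraph -/
def collapsePair (x : V) (y : ↥({x}ᶜ : Set V)) :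
    (G.induce {x}ᶜ).induce ({y}ᶜ : Set ↥({x}ᶜ : Set V)) ≃g G.induce ({x, y.1}ᶜ : Set V) where
  toEquiv := {
    toFun := fun w => ⟨w.1.1, by
      have h1 : w.1.1 ≠ x := w.1.2
      have h2 : w.1 ≠ y := w.2
      have h3 : w.1.1 ≠ y.1 := fun hh => h2 (Subtype.ext hh)
      simp only [Set.mem_compl_iff, Set.mem_insert_iff, Set.mem_singleton_iff]
      tauto⟩
    invFun := fun z => ⟨⟨z.1, by
        have h1 : z.1 ∉ ({x, y.1} : Set V) := z.2
        simp only [Set.mem_insert_iff, Set.mem_singleton_iff] at h1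
        push_neg at h1
        simp only [Set.mem_compl_iff, Set.mem_singleton_iff]
        exact h1.1⟩, by
        have h1 : z.1 ∉ ({x, y.1} : Set V) := z.2
        simp only [Set.mem_insert_iff, Set.mem_singleton_iff] at h1
        push_neg at h1
        simp only [Set.mem_compl_iff, Set.mem_singleton_iff]
        intro hh
        exact h1.2 (congrArg Subtype.val hh)⟩
    left_inv := fun w => by ext; rfl
    right_inv := fun z => by ext; rfl }
  map_rel_iff' := by
    intro a b
    rfl

@[simp] lemma collapsePair_apply (x : V) (y : ↥({x}ᶜ : Set V))
    (w : ({y}ᶜ : Set ↥({x}ᶜ : Set V))) : ((collapsePair (G := G) x y) w : V) = w.1.1 := rfl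

@[simp] lemma collapsePair_symm_apply (x : V) (y : ↥({x}ᶜ : Set V))
    (z : ({x, y.1}ᶜ : Set V)) : (((collapsePair (G := G) x y).symm z : ↥({x}ᶜ : Set V)) : V) = z.1 := rfl

/-- number of neighbours inside an induced subgraph -/
lemma ncard_neighborSet_induce (A : Set V) (a : A) :
    ((G.induce A).neighborSet a).ncard = (G.neighborSet a.1 ∩ A).ncard := by
  have e : ((G.induce A).neighborSet a) ≃ ↥(G.neighborSet a.1 ∩ A) := {
    toFun := fun w => ⟨w.1.1, ⟨w.2, w.1.2⟩⟩
    invFun := fun z => ⟨⟨z.1, z.2.2⟩, z.2.1⟩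
    left_inv := fun w => by ext; rfl
    right_inv := fun z => by ext; rfl }
  rw [← Nat.card_coe_set_eq, ← Nat.card_coe_set_eq]
  exact Nat.card_congr e

end IsoHelpers

section Extend

open scoped Classical

/-- extend a map on `S` to all of `V`, sending `u ↦ v` and `v ↦ u` -/
noncomputable def extFun (S : Set V) (u v : V) (t : ↥S → ↥S) : V → V :=
  fun w => if hw : w ∈ S then (t ⟨w, hw⟩ : V) else if w = u then v else u

lemma extFun_mem {S : Set V} (u v : V) (t : ↥S → ↥S) {w : V} (hw : w ∈ S) :
    extFun S u v t w = (t ⟨w, hw⟩ : V) := dif_pos hw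

lemma extFun_not_mem {S : Set V} (u v : V) (t : ↥S → ↥S) {w : V} (hw : w ∉ S) :
    extFun S u v t w = if w = u then v else u := dif_neg hw

variable {S : Set V} {u v u₁ v₁ : V}

/-- hypotheses bundle for the extension -/
structure ExtHyp (T : SimpleGraph V) (S : Set V) (u v u₁ v₁ : V)
    (t : T.induce S ≃g T.induce S) : Prop where
  hS : ∀ w, w ∈ S ↔ w ≠ u ∧ w ≠ v
  huv : u ≠ v
  hnadj : ¬ T.Adj u v
  hu1 : T.neighborSet u = {u₁}
  hv1 : T.neighborSet v = {v₁}
  hmu1 : u₁ ∈ S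
  hmv1 : v₁ ∈ S
  ht1 : (t ⟨u₁, hmu1⟩ : V) = v₁
  ht2 : (t ⟨v₁, hmv1⟩ : V) = u₁

lemma ExtHyp.symm {t : T.induce S ≃g T.induce S} (h : ExtHyp T S u v u₁ v₁ t) :
    ExtHyp T S v u v₁ u₁ t.symm := by
  have e1 : t ⟨u₁, h.hmu1⟩ = ⟨v₁, h.hmv1⟩ := Subtype.ext h.ht1
  have e2 : t ⟨v₁, h.hmv1⟩ = ⟨u₁, h.hmu1⟩ := Subtype.ext h.ht2
  have f1 : t.symm ⟨v₁, h.hmv1⟩ = ⟨u₁, h.hmu1⟩ := by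
    rw [← e1, RelIso.symm_apply_apply]
  have f2 : t.symm ⟨u₁, h.hmu1⟩ = ⟨v₁, h.hmv1⟩ := by
    rw [← e2, RelIso.symm_apply_apply]
  exact ⟨fun w => by rw [h.hS w]; tauto, h.huv.symm, fun hh => h.hnadj hh.symm,
    h.hv1, h.hu1, h.hmv1, h.hmu1, congrArg Subtype.val f1, congrArg Subtype.val f2⟩

lemma extFun_adj {t : T.induce S ≃g T.induce S} (h : ExtHyp T S u v u₁ v₁ t)
    {a b : V} (hadj : T.Adj a b) : T.Adj (extFun S u v t a) (extFun S u v t b) := by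
  have hu_not : u ∉ S := fun hh => ((h.hS u).1 hh).1 rfl
  have hv_not : v ∉ S := fun hh => ((h.hS v).1 hh).2 rfl
  have hAdj_u : ∀ w, T.Adj u w → w = u₁ := by
    intro w hw
    have h2 : w ∈ T.neighborSet u := hw
    rwa [h.hu1, Set.mem_singleton_iff] at h2
  have hAdj_v : ∀ w, T.Adj v w → w = v₁ := by
    intro w hw
    have h2 : w ∈ T.neighborSet v := hw
    rwa [h.hv1, Set.mem_singleton_iff] at h2
  have hadj_uu1 : T.Adj u u₁ := by
    have h2 : u₁ ∈ T.neighborSet u := by rw [h.hu1]; rfl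
    exact h2
  have hadj_vv1 : T.Adj v v₁ := by
    have h2 : v₁ ∈ T.neighborSet v := by rw [h.hv1]; rfl
    exact h2
  have key : ∀ a b, T.Adj a b → a ∉ S → T.Adj (extFun S u v t a) (extFun S u v t b) := by
    intro a b hadj ha
    have ha' : a = u ∨ a = v := by
      by_contra hcon
      push_neg at hcon
      exact ha ((h.hS a).2 hcon)
    rcases ha' with h1 | h1
    · have hb : b = u₁ := hAdj_u b (h1 ▸ hadj)
      rw [h1, hb, extFun_not_mem u v t hu_not, if_pos rfl, extFun_mem u v t h.hmu1, h.ht1]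
      exact hadj_vv1
    · have hb : b = v₁ := hAdj_v b (h1 ▸ hadj)
      rw [h1, hb, extFun_not_mem u v t hv_not, if_neg (Ne.symm h.huv),
        extFun_mem u v t h.hmv1, h.ht2]
      exact hadj_uu1
  by_cases ha : a ∈ S
  · by_cases hb : b ∈ S
    · rw [extFun_mem u v t ha, extFun_mem u v t hb]
      have h2 : (T.induce S).Adj ⟨a, ha⟩ ⟨b, hb⟩ := hadj
      exact t.map_adj_iff.2 h2
    · exact (key b a hadj.symm hb).symm
  · exact key a b hadj ha

lemma extFun_left_inv {t : T.induce S ≃g T.induce S} (h : ExtHyp T S u v u₁ v₁ t) (w : V) :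
    extFun S v u (⇑t.symm) (extFun S u v (⇑t) w) = w := by
  have hu_not : u ∉ S := fun hh => ((h.hS u).1 hh).1 rfl
  have hv_not : v ∉ S := fun hh => ((h.hS v).1 hh).2 rfl
  by_cases hw : w ∈ S
  · rw [extFun_mem u v (⇑t) hw]
    have hmem : ((t ⟨w, hw⟩ : ↥S) : V) ∈ S := (t ⟨w, hw⟩).2
    rw [extFun_mem v u (⇑t.symm) hmem]
    have h2 : (⟨((t ⟨w, hw⟩ : ↥S) : V), hmem⟩ : ↥S) = t ⟨w, hw⟩ := rfl
    rw [h2, RelIso.symm_apply_apply]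
  · have hw' : w = u ∨ w = v := by
      by_contra hcon
      push_neg at hcon
      exact hw ((h.hS w).2 hcon)
    rcases hw' with h1 | h1
    · rw [h1, extFun_not_mem u v (⇑t) hu_not, if_pos rfl, extFun_not_mem v u (⇑t.symm) hv_not,
        if_pos rfl]
    · rw [h1, extFun_not_mem u v (⇑t) hv_not, if_neg (Ne.symm h.huv),
        extFun_not_mem v u (⇑t.symm) hu_not, if_neg h.huv]

/-- the extension of `t` to an automorphism of `T` -/
noncomputable def extendIso {t : T.induce S ≃g T.induce S} (h : ExtHyp T S u v u₁ v₁ t) :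
    T ≃g T where
  toEquiv := {
    toFun := extFun S u v (⇑t)
    invFun := extFun S v u (⇑t.symm)
    left_inv := extFun_left_inv h
    right_inv := by
      have h2 := h.symm
      intro w
      have h3 := extFun_left_inv h2 w
      simpa using h3 }
  map_rel_iff' := by
    intro a b
    constructor
    · intro hadj
      have hadj' : T.Adj (extFun S u v (⇑t) a) (extFun S u v (⇑t) b) := hadj
      have h2 := extFun_adj h.symm hadj'
      rwa [extFun_left_inv h a, extFun_left_inv h b] at h2
    · exact extFun_adj h

lemma extendIso_apply_u {t : T.induce S ≃g T.induce S} (h : ExtHyp T S u v u₁ v₁ t) :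
    extendIso h u = v := by
  show extFun S u v (⇑t) u = v
  have hu_not : u ∉ S := fun hh => ((h.hS u).1 hh).1 rfl
  rw [extFun_not_mem u v (⇑t) hu_not, if_pos rfl]

end Extend

section Main

open scoped Classical

lemma nat_card_compl_lt [Finite V] (x : V) : Nat.card ↥({x}ᶜ : Set V) < Nat.card V := by
  rw [Nat.card_coe_set_eq, ← Set.ncard_univ]
  refine Set.ncard_lt_ncard ?_ Set.finite_univ
  rw [Set.ssubset_univ_iff]
  intro h
  have : x ∈ ({x}ᶜ : Set V) := h ▸ Set.mem_univ x
  exact this rfl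

lemma main_aux : ∀ (n : ℕ) {V : Type} [Fintype V] (T : SimpleGraph V), T.IsTree →
    ∀ u v : V, (T.neighborSet u).ncard = 1 → (T.neighborSet v).ncard = 1 →
    Nonempty (T.induce ({u}ᶜ : Set V) ≃g T.induce ({v}ᶜ : Set V)) →
    Nat.card V ≤ n → ∃ φ : T ≃g T, φ u = v := by
  intro n
  induction n with
  | zero =>
    intro V _ T hT u v hu hv hiso hcard
    obtain ⟨w⟩ := hT.isConnected.nonempty
    haveI : Nonempty V := ⟨w⟩
    have : 0 < Nat.card V := Nat.card_pos
    omega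
  | succ n ih =>
    intro V _ T hT u v hu hv hiso hcard
    obtain ⟨f⟩ := hiso
    by_cases huv : u = v
    · exact ⟨Iso.refl, huv⟩
    obtain ⟨u₁, hu1⟩ := Set.ncard_eq_one.mp hu
    obtain ⟨v₁, hv1⟩ := Set.ncard_eq_one.mp hv
    have hadj_uu1 : T.Adj u u₁ := by
      have : u₁ ∈ T.neighborSet u := by rw [hu1]; rfl
      exact this
    have hadj_vv1 : T.Adj v v₁ := by
      have : v₁ ∈ T.neighborSet v := by rw [hv1]; rfl
      exact this
    have hAdj_u : ∀ w, T.Adj u w → w = u₁ := by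
      intro w hw
      have h2 : w ∈ T.neighborSet u := hw
      rwa [hu1, Set.mem_singleton_iff] at h2
    have hAdj_v : ∀ w, T.Adj v w → w = v₁ := by
      intro w hw
      have h2 : w ∈ T.neighborSet v := hw
      rwa [hv1, Set.mem_singleton_iff] at h2
    have hu1u : u₁ ≠ u := hadj_uu1.ne'
    have hv1v : v₁ ≠ v := hadj_vv1.ne'
    by_cases hadjuv : T.Adj u v
    · -- K2-like case : u and v are adjacent leaves; swap them
      have hu1v : u₁ = v := (hAdj_u v hadjuv).symm
      have hv1u : v₁ = u := (hAdj_v u hadjuv.symm).symm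
      set g : V → V := fun w => if w = u then v else if w = v then u else w with hg_def
      have hge : ∀ w, g w = if w = u then v else if w = v then u else w := fun _ => rfl
      have hgu : g u = v := by rw [hge, if_pos rfl]
      have hgv : g v = u := by rw [hge, if_neg (Ne.symm huv), if_pos rfl]
      have hgw : ∀ w, w ≠ u → w ≠ v → g w = w := by
        intro w h1 h2
        rw [hge, if_neg h1, if_neg h2]
      have hinv : Function.Involutive g := by
        intro w
        by_cases h1 : w = u
        · rw [h1, hgu, hgv]
        by_cases h2 : w = v
        · rw [h2, hgv, hgu]
        · rw [hgw w h1 h2, hgw w h1 h2]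
      have hadjg : ∀ a b, T.Adj a b → T.Adj (g a) (g b) := by
        intro a b hab
        by_cases h1 : a = u
        · have hb : b = v := by rw [← hu1v]; exact hAdj_u b (h1 ▸ hab)
          rw [h1, hb, hgu, hgv]
          exact hadjuv.symm
        by_cases h2 : a = v
        · have hb : b = u := by rw [← hv1u]; exact hAdj_v b (h2 ▸ hab)
          rw [h2, hb, hgv, hgu]
          exact hadjuv
        · have hbu : b ≠ u := by
            intro hh
            exact h2 ((hAdj_u a (hh ▸ hab).symm).trans hu1v)
          have hbv : b ≠ v := by
            intro hh
            exact h1 ((hAdj_v a (hh ▸ hab).symm).trans hv1u)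
          rw [hgw a h1 h2, hgw b hbu hbv]
          exact hab
      refine ⟨isoOfInvolutive g hinv hadjg, ?_⟩
      show g u = v
      exact hgu
    · -- u and v are not adjacent
      have hu1v : u₁ ≠ v := fun hh => hadjuv (hh ▸ hadj_uu1)
      have hv1u : v₁ ≠ u := fun hh => hadjuv (hh ▸ hadj_vv1).symm
      set S : Set V := ({u, v}ᶜ : Set V) with hS_def
      have hSiff : ∀ w, w ∈ S ↔ w ≠ u ∧ w ≠ v := by
        intro w
        simp only [hS_def, Set.mem_compl_iff, Set.mem_insert_iff, Set.mem_singleton_iff]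
        tauto
      have hmu1 : u₁ ∈ S := (hSiff u₁).2 ⟨hu1u, hu1v⟩
      have hmv1 : v₁ ∈ S := (hSiff v₁).2 ⟨hv1u, hv1v⟩
      by_cases hcommon : u₁ = v₁
      · -- common neighbour : swap `u,v`, identity elsewhere
        have hyp : ExtHyp T S u v u₁ v₁ (Iso.refl) :=
          ⟨hSiff, huv, hadjuv, hu1, hv1, hmu1, hmv1, hcommon, hcommon.symm⟩
        exact ⟨extendIso hyp, extendIso_apply_u hyp⟩
      · -- main case
        have hvmem : v ∈ ({u}ᶜ : Set V) := Ne.symm huv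
        have humem : u ∈ ({v}ᶜ : Set V) := huv
        set vu : ↥({u}ᶜ : Set V) := ⟨v, hvmem⟩ with hvu_def
        set uv : ↥({v}ᶜ : Set V) := ⟨u, humem⟩ with huv_def
        haveI : Fintype ↥({v}ᶜ : Set V) := Fintype.ofFinite _
        have hT' : (T.induce ({v}ᶜ : Set V)).IsTree := by
          refine isTree_induce_leaves hT ?_ ⟨u, humem⟩
          intro w hw
          rw [Set.mem_singleton_iff] at hw
          rw [hw, hv]
        obtain ⟨h', hh'⟩ : ∃ h' : T.induce ({u}ᶜ : Set V) ≃g T.induce ({v}ᶜ : Set V),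
            h' vu = uv := by
          by_cases hfv : f vu = uv
          · exact ⟨f, hfv⟩
          · -- use the induction hypothesis on T - v
            have h_uv_leaf : ((T.induce ({v}ᶜ : Set V)).neighborSet uv).ncard = 1 := by
              rw [ncard_neighborSet_induce]
              have : T.neighborSet u ∩ ({v}ᶜ : Set V) = {u₁} := by
                rw [hu1]
                apply Set.inter_eq_self_of_subset_left
                rw [Set.singleton_subset_iff]
                exact hu1v
              rw [this, Set.ncard_singleton]
            have h_fv_leaf : ((T.induce ({v}ᶜ : Set V)).neighborSet (f vu)).ncard = 1 := by
              rw [iso_ncard_neighborSet' f vu, ncard_neighborSet_induce]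
              have : T.neighborSet v ∩ ({u}ᶜ : Set V) = {v₁} := by
                rw [hv1]
                apply Set.inter_eq_self_of_subset_left
                rw [Set.singleton_subset_iff]
                exact hv1u
              rw [this, Set.ncard_singleton]
            have hiso' : Nonempty ((T.induce ({v}ᶜ : Set V)).induce {uv}ᶜ ≃g
                (T.induce ({v}ᶜ : Set V)).induce {f vu}ᶜ) := by
              refine ⟨((collapsePair v uv).trans ((setCongrIso (by rw [Set.pair_comm])).trans
                ((collapsePair u vu).symm.trans (pointRestrict f vu))))⟩
            have hcard' : Nat.card ↥({v}ᶜ : Set V) ≤ n := by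
              have := nat_card_compl_lt (V := V) v
              omega
            obtain ⟨β, hβ⟩ := ih (T.induce ({v}ᶜ : Set V)) hT' uv (f vu)
              h_uv_leaf h_fv_leaf hiso' hcard'
            refine ⟨f.trans β.symm, ?_⟩
            show β.symm (f vu) = uv
            rw [← hβ, RelIso.symm_apply_apply]
        -- h' sends v₁ to u₁
        have hv1mem : v₁ ∈ ({u}ᶜ : Set V) := hv1u
        have h'v1 : (h' ⟨v₁, hv1mem⟩ : V) = u₁ := by
          have hadj2 : (T.induce ({u}ᶜ : Set V)).Adj vu ⟨v₁, hv1mem⟩ := hadj_vv1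
          have hadj3 := h'.map_adj_iff.2 hadj2
          rw [hh'] at hadj3
          have hadj4 : T.Adj u (h' ⟨v₁, hv1mem⟩ : V) := hadj3
          exact hAdj_u _ hadj4
        -- assemble the self-isomorphism of T - u - v
        set s : T.induce S ≃g T.induce S :=
          ((collapsePair u vu).symm.trans ((pointRestrict h' vu).trans
            ((setCongrIso (by rw [hh'])).trans ((collapsePair v uv).trans
              (setCongrIso (by rw [Set.pair_comm])))))) with hs_def
        have hs_val : ∀ (w : ↥S) (hw : w.1 ∈ ({u}ᶜ : Set V)),
            ((s w) : V) = (h' ⟨w.1, hw⟩ : V) := fun w hw => rfl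
        haveI : Fintype ↥S := Fintype.ofFinite _
        have hS_tree : (T.induce S).IsTree := by
          refine isTree_induce_leaves hT ?_ ⟨u₁, hmu1⟩
          intro w hw
          rw [Set.mem_insert_iff, Set.mem_singleton_iff] at hw
          rcases hw with hw | hw
          · rw [hw, hu]
          · rw [hw, hv]
        set x : ↥S := ⟨v₁, hmv1⟩ with hx_def
        obtain ⟨t, ht1, ht2⟩ := tree_swap hS_tree s x
        have hsx : s x = ⟨u₁, hmu1⟩ := by
          apply Subtype.ext
          rw [hs_val x hv1mem]
          exact h'v1
        rw [hsx] at ht1 ht2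
        have hyp : ExtHyp T S u v u₁ v₁ t :=
          ⟨hSiff, huv, hadjuv, hu1, hv1, hmu1, hmv1,
            congrArg Subtype.val ht2, congrArg Subtype.val ht1⟩
        exact ⟨extendIso hyp, extendIso_apply_u hyp⟩

end Main


end Stmt2Aux

/-- Removal-similar endvertices of a finite tree are similar: if `u`, `v` are endvertices
with `T - u ≅ T - v`, then some automorphism of `T` maps `u` to `v`. -/
theorem stmt2 {V : Type} [Fintype V] (T : SimpleGraph V) (hT : T.IsTree) (u v : V)
    (hu : (T.neighborSet u).ncard = 1) (hv : (T.neighborSet v).ncard = 1)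
    (h : Nonempty (T.induce ({u}ᶜ : Set V) ≃g T.induce ({v}ᶜ : Set V))) :
    ∃ φ : T ≃g T, φ u = v := by
  exact main_aux (Nat.card V) T hT u v hu hv h le_rfl

end ErnPaper
end

section
/- Let T be a finite tree and let u and v be end-cutvertices of T such that T − u is isomorphic to T − v. Then u and v are similar in T, i.e. there is an automorphism of T mapping u to v. -/
open SimpleGraph

namespace ErnPaper

/-- An end-cutvertex of a tree: a vertex of degree at least 2 that is adjacent to exactly
one vertex of degree greater than 1. -/
def IsEndCutvertex {V : Type} (T : SimpleGraph V) (u : V) : Prop :=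
  2 ≤ (T.neighborSet u).ncard ∧
    {w | w ∈ T.neighborSet u ∧ 2 ≤ (T.neighborSet w).ncard}.ncard = 1

variable {V : Type} {W : Type}

lemma adj_pow_aux (G : SimpleGraph V) (f : Equiv.Perm V)
    (h : ∀ x y, G.Adj x y → G.Adj (f x) (f y)) :
    ∀ (n : ℕ) (x y : V), G.Adj x y → G.Adj ((f ^ n) x) ((f ^ n) y) := by
  intro n
  induction n with
  | zero => intro x y hxy; simpa using hxy
  | succ k ih =>
    intro x y hxy
    have := h _ _ (ih x y hxy)
    rw [pow_succ', Equiv.Perm.mul_apply, Equiv.Perm.mul_apply]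
    exact this

noncomputable def isoOfMapAdj [Finite V] (G : SimpleGraph V) (f : Equiv.Perm V)
    (h : ∀ x y, G.Adj x y → G.Adj (f x) (f y)) : G ≃g G where
  toEquiv := f
  map_rel_iff' := by
    intro x y
    constructor
    · intro hf
      have hn : 1 ≤ orderOf f := orderOf_pos f
      have h2 := adj_pow_aux G f h (orderOf f - 1) _ _ hf
      have hid : ∀ z : V, (f ^ (orderOf f - 1)) (f z) = z := by
        intro z
        have h3 : f ^ (orderOf f - 1) * f = 1 := by
          rw [← pow_succ, Nat.sub_add_cancel hn]
          exact pow_orderOf_eq_one f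
        have := congrArg (fun (g : Equiv.Perm V) => g z) h3
        simpa [Equiv.Perm.mul_apply] using this
      rwa [hid, hid] at h2
    · exact h x y

@[simp] lemma isoOfMapAdj_apply [Finite V] (G : SimpleGraph V) (f : Equiv.Perm V)
    (h : ∀ x y, G.Adj x y → G.Adj (f x) (f y)) (x : V) : isoOfMapAdj G f h x = f x := rfl

noncomputable def induceInduce (G : SimpleGraph V) (s : Set V) (t : Set s) :
    (G.induce s).induce t ≃g G.induce (Subtype.val '' t) where
  toEquiv := Equiv.Set.image Subtype.val t Subtype.val_injective
  map_rel_iff' := by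
    intro a b
    simp only [Equiv.Set.image_apply]
    exact Iff.rfl

noncomputable def isoRestrict {G : SimpleGraph V} {s1 s2 : Set V}
    (f : G.induce s1 ≃g G.induce s2) {t1 t2 : Set V} (h1 : t1 ⊆ s1) (h2 : t2 ⊆ s2)
    (hf : ∀ x (hx : x ∈ t1), ((f ⟨x, h1 hx⟩ : ↥s2) : V) ∈ t2)
    (hg : ∀ y (hy : y ∈ t2), ((f.symm ⟨y, h2 hy⟩ : ↥s1) : V) ∈ t1) :
    G.induce t1 ≃g G.induce t2 where
  toEquiv :=
  { toFun := fun x => ⟨((f ⟨x.1, h1 x.2⟩ : ↥s2) : V), hf x.1 x.2⟩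
    invFun := fun y => ⟨((f.symm ⟨y.1, h2 y.2⟩ : ↥s1) : V), hg y.1 y.2⟩
    left_inv := by
      intro x
      apply Subtype.ext
      dsimp only
      have h : (⟨((f ⟨x.1, h1 x.2⟩ : ↥s2) : V), h2 (hf x.1 x.2)⟩ : ↥s2) = f ⟨x.1, h1 x.2⟩ :=
        Subtype.ext rfl
      rw [h]
      simp
    right_inv := by
      intro y
      apply Subtype.ext
      dsimp only
      have h : (⟨((f.symm ⟨y.1, h2 y.2⟩ : ↥s1) : V), h1 (hg y.1 y.2)⟩ : ↥s1) =
          f.symm ⟨y.1, h2 y.2⟩ := Subtype.ext rfl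
      rw [h]
      simp }
  map_rel_iff' := by
    intro a b
    exact f.map_rel_iff

@[simp] lemma isoRestrict_apply {G : SimpleGraph V} {s1 s2 : Set V}
    (f : G.induce s1 ≃g G.induce s2) {t1 t2 : Set V} (h1 : t1 ⊆ s1) (h2 : t2 ⊆ s2)
    (hf : ∀ x (hx : x ∈ t1), ((f ⟨x, h1 hx⟩ : ↥s2) : V) ∈ t2)
    (hg : ∀ y (hy : y ∈ t2), ((f.symm ⟨y, h2 hy⟩ : ↥s1) : V) ∈ t1) (x : ↥t1) :
    (isoRestrict f h1 h2 hf hg x : V) = ((f ⟨x.1, h1 x.2⟩ : ↥s2) : V) := rfl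

noncomputable def isoDelete {G : SimpleGraph V} {H : SimpleGraph W} (f : G ≃g H) (x : V) :
    G.induce {x}ᶜ ≃g H.induce {f x}ᶜ where
  toEquiv := f.toEquiv.subtypeEquiv (by
    intro a
    simp only [Set.mem_compl_iff, Set.mem_singleton_iff]
    constructor
    · intro ha hc; exact ha (f.toEquiv.injective (by rw [hc]; rfl))
    · intro ha hc; subst hc; exact ha rfl)
  map_rel_iff' := by
    intro a b
    exact f.map_rel_iff

noncomputable def induceSetCongr (G : SimpleGraph V) {s t : Set V} (h : s = t) :
    G.induce s ≃g G.induce t where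
  toEquiv := Equiv.setCongr h
  map_rel_iff' := Iff.rfl

lemma nd_map {G : SimpleGraph V} {H : SimpleGraph W} (f : G ≃g H) (x : V) :
    (H.neighborSet (f x)).ncard = (G.neighborSet x).ncard := by
  rw [← Nat.card_coe_set_eq, ← Nat.card_coe_set_eq]
  exact Nat.card_congr (f.mapNeighborSet x).symm

lemma isEndCutvertex_map {G : SimpleGraph V} {H : SimpleGraph W} (f : G ≃g H) {x : V}
    (hx : IsEndCutvertex G x) : IsEndCutvertex H (f x) := by
  obtain ⟨hx1, hx2⟩ := hx
  constructor
  · rw [nd_map f]; exact hx1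
  · have himg : {w | w ∈ H.neighborSet (f x) ∧ 2 ≤ (H.neighborSet w).ncard} =
        f '' {w | w ∈ G.neighborSet x ∧ 2 ≤ (G.neighborSet w).ncard} := by
      ext y
      constructor
      · rintro ⟨hy1, hy2⟩
        refine ⟨f.symm y, ⟨?_, ?_⟩, by simp⟩
        · exact f.map_rel_iff.mp (by simpa using hy1)
        · rw [← nd_map f (f.symm y)]
          simpa using hy2
      · rintro ⟨w, ⟨hw1, hw2⟩, rfl⟩
        refine ⟨f.map_rel_iff.mpr hw1, ?_⟩
        rw [nd_map f w]
        exact hw2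
    rw [himg, Set.ncard_image_of_injective _ f.injective]
    exact hx2

lemma induce_neighborSet_ncard (G : SimpleGraph V) (s : Set V) (x : ↥s) :
    ((G.induce s).neighborSet x).ncard = (G.neighborSet x.1 ∩ s).ncard := by
  have h : (G.neighborSet x.1 ∩ s) = Subtype.val '' ((G.induce s).neighborSet x) := by
    ext y
    constructor
    · rintro ⟨hy1, hy2⟩
      exact ⟨⟨y, hy2⟩, hy1, rfl⟩
    · rintro ⟨⟨y, hy⟩, hmem, rfl⟩
      exact ⟨hmem, hy⟩
  rw [h, Set.ncard_image_of_injective _ Subtype.val_injective]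


lemma internal_two_nbrs {G : SimpleGraph V} :
    ∀ {x y : V} (p : G.Walk x y), p.IsPath → ∀ z ∈ p.support, z ≠ x → z ≠ y →
      ∃ a b, a ≠ b ∧ G.Adj z a ∧ G.Adj z b ∧ a ∈ p.support ∧ b ∈ p.support := by
  intro x y p
  induction p with
  | nil =>
    intro _ z hz hzx _
    simp only [Walk.support_nil, List.mem_singleton] at hz
    exact absurd hz hzx
  | @cons x x2 y h q ih =>
    intro hp z hz hzx hzy
    rw [Walk.cons_isPath_iff] at hp
    rw [Walk.support_cons, List.mem_cons] at hz
    rcases hz with rfl | hz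
    · exact absurd rfl hzx
    · by_cases hzx2 : z = x2
      · subst hzx2
        cases q with
        | nil => exact absurd rfl hzy
        | @cons _ x3 _ h2 q2 =>
          refine ⟨x, x3, ?_, h.symm, h2, by simp [Walk.support_cons], ?_⟩
          · rintro rfl
            exact hp.2 (by simp [Walk.support_cons])
          · rw [Walk.support_cons]
            exact List.mem_cons_of_mem _ (by simp [Walk.support_cons])
      · obtain ⟨a, b, hab, ha, hb, has, hbs⟩ := ih hp.1 z hz hzx2 hzy
        exact ⟨a, b, hab, ha, hb,
          by rw [Walk.support_cons]; exact List.mem_cons_of_mem _ has,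
          by rw [Walk.support_cons]; exact List.mem_cons_of_mem _ hbs⟩

lemma path_avoid [Finite V] {G : SimpleGraph V} {Dlow Dctr : Set V}
    (hlow : ∀ a ∈ Dlow, (G.neighborSet a).ncard ≤ 1)
    (hctr : ∀ c ∈ Dctr, ∃ e, G.neighborSet c ⊆ Dlow ∪ {e})
    {x y : V} (hx : x ∉ Dlow ∪ Dctr) (hy : y ∉ Dlow ∪ Dctr) (w : G.Walk x y) :
    ∃ p : G.Walk x y, ∀ z ∈ p.support, z ∉ Dlow ∪ Dctr := by
  classical
  obtain ⟨p, hp⟩ := w.toPath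
  have two_nbrs : ∀ z ∈ p.support, z ∉ Dlow ∪ Dctr → True := fun _ _ _ => trivial
  have hDlow : ∀ z ∈ p.support, z ∉ Dlow := by
    intro z hzs hzD
    have hzx : z ≠ x := by rintro rfl; exact hx (Or.inl hzD)
    have hzy : z ≠ y := by rintro rfl; exact hy (Or.inl hzD)
    obtain ⟨a, b, hab, ha, hb, -, -⟩ := internal_two_nbrs p hp z hzs hzx hzy
    have h1 : 1 < (G.neighborSet z).ncard := by
      rw [Set.one_lt_ncard_iff (Set.toFinite _)]
      exact ⟨a, b, ha, hb, hab⟩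
    have h2 := hlow z hzD
    omega
  refine ⟨p, fun z hzs => ?_⟩
  rintro (hzD | hzD)
  · exact hDlow z hzs hzD
  · have hzx : z ≠ x := by rintro rfl; exact hx (Or.inr hzD)
    have hzy : z ≠ y := by rintro rfl; exact hy (Or.inr hzD)
    obtain ⟨a, b, hab, ha, hb, has, hbs⟩ := internal_two_nbrs p hp z hzs hzx hzy
    obtain ⟨e, he⟩ := hctr z hzD
    rcases he ha with haD | hae
    · exact hDlow a has haD
    · rcases he hb with hbD | hbe
      · exact hDlow b hbs hbD
      · rw [Set.mem_singleton_iff] at hae hbe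
        exact hab (hae.trans hbe.symm)

lemma reachable_induce {G : SimpleGraph V} {s : Set V} :
    ∀ {x y : V} (w : G.Walk x y) (_ : ∀ z ∈ w.support, z ∈ s)
      (hx : x ∈ s) (hy : y ∈ s),
      (G.induce s).Reachable ⟨x, hx⟩ ⟨y, hy⟩ := by
  intro x y w
  induction w with
  | nil => intro _ hx hy; rfl
  | @cons x x2 y h q ih =>
    intro hw hx hy
    have hx2 : x2 ∈ s := hw x2 (by simp [Walk.support_cons])
    have hadj : (G.induce s).Adj ⟨x, hx⟩ ⟨x2, hx2⟩ := h
    exact hadj.reachable.trans (ih (fun z hz => hw z (by rw [Walk.support_cons]; exact List.mem_cons_of_mem _ hz)) hx2 hy)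

/-- Connectivity of the induced graph on the complement of (up to two) pendant stars. -/
lemma connected_induce_compl [Finite V] {G : SimpleGraph V} (hc : G.Connected)
    {Dlow Dctr : Set V}
    (hlow : ∀ a ∈ Dlow, (G.neighborSet a).ncard ≤ 1)
    (hctr : ∀ c ∈ Dctr, ∃ e, G.neighborSet c ⊆ Dlow ∪ {e})
    (hne : ((Dlow ∪ Dctr)ᶜ).Nonempty) :
    (G.induce (Dlow ∪ Dctr)ᶜ).Connected := by
  rw [connected_iff]
  refine ⟨fun a b => ?_, ⟨⟨hne.choose, hne.choose_spec⟩⟩⟩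
  obtain ⟨w⟩ := hc a.1 b.1
  obtain ⟨p, hp⟩ := path_avoid hlow hctr a.2 b.2 w
  have := reachable_induce p hp a.2 b.2
  exact this

lemma isAcyclic_induce_s3 {G : SimpleGraph V} (h : G.IsAcyclic) (s : Set V) :
    (G.induce s).IsAcyclic := by
  intro x c hc
  have emb : G.induce s ↪g G := Embedding.induce (G := G) s
  exact h (c.map emb.toHom) (hc.map emb.injective)

lemma isTree_induce_compl [Finite V] {G : SimpleGraph V} (hT : G.IsTree)
    {Dlow Dctr : Set V}
    (hlow : ∀ a ∈ Dlow, (G.neighborSet a).ncard ≤ 1)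
    (hctr : ∀ c ∈ Dctr, ∃ e, G.neighborSet c ⊆ Dlow ∪ {e})
    (hne : ((Dlow ∪ Dctr)ᶜ).Nonempty) :
    (G.induce (Dlow ∪ Dctr)ᶜ).IsTree :=
  ⟨connected_induce_compl hT.isConnected hlow hctr hne, isAcyclic_induce_s3 hT.IsAcyclic _⟩

lemma mem_of_closed {G : SimpleGraph V} (hc : G.Connected) {C : Set V}
    (hne : ∃ x, x ∈ C) (hcl : ∀ x ∈ C, ∀ y, G.Adj x y → y ∈ C) : ∀ z, z ∈ C := by
  obtain ⟨x, hx⟩ := hne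
  have key : ∀ {a b : V} (_ : G.Walk a b), a ∈ C → b ∈ C := by
    intro a b p
    induction p with
    | nil => exact id
    | cons h q ih => exact fun ha => ih (hcl _ ha _ h)
  intro z
  obtain ⟨w⟩ := hc x z
  exact key w hx

lemma exists_adj {G : SimpleGraph V} (hc : G.Connected) {x y : V} (hxy : x ≠ y) :
    (G.neighborSet x).Nonempty := by
  obtain ⟨w⟩ := hc x y
  cases w with
  | nil => exact absurd rfl hxy
  | cons h _ => exact ⟨_, h⟩

lemma pairing_update {α W : Type} [DecidableEq α] {w : α → W} {f : α → α}
    {s t : Finset α} {a b : α} (ha : a ∈ s) (hb : b ∈ t)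
    (hf : Set.BijOn f ↑(s.erase a) ↑(t.erase b))
    (hw : ∀ x ∈ s.erase a, w (f x) = w x) (hwab : w b = w a) :
    Set.BijOn (Function.update f a b) ↑s ↑t ∧ (∀ x ∈ s, w (Function.update f a b x) = w x)
      ∧ Function.update f a b a = b := by
  have hupd : ∀ x, x ≠ a → Function.update f a b x = f x := fun x hx =>
    Function.update_of_ne hx _ _
  refine ⟨⟨?_, ?_, ?_⟩, ?_, Function.update_self _ _ _⟩
  · intro x hx
    by_cases hxa : x = a
    · rw [hxa, Function.update_self]; exact hb
    · rw [hupd x hxa]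
      have := hf.mapsTo (by simp [Finset.mem_coe, Finset.mem_erase, hxa, hx] : x ∈ (↑(s.erase a) : Set α))
      simp only [Finset.mem_coe, Finset.mem_erase] at this
      exact Finset.mem_coe.mpr this.2
  · intro x hx y hy hxy
    simp only [Finset.mem_coe] at hx hy
    by_cases hxa : x = a <;> by_cases hya : y = a
    · rw [hxa, hya]
    · rw [hxa, Function.update_self, hupd y hya] at hxy
      have := hf.mapsTo (by simp [Finset.mem_erase, hya, hy] : y ∈ (↑(s.erase a) : Set α))
      rw [← hxy] at this
      simp [Finset.mem_erase] at this
    · rw [hya, Function.update_self, hupd x hxa] at hxy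
      have := hf.mapsTo (by simp [Finset.mem_erase, hxa, hx] : x ∈ (↑(s.erase a) : Set α))
      rw [hxy] at this
      simp [Finset.mem_erase] at this
    · rw [hupd x hxa, hupd y hya] at hxy
      exact hf.injOn (by simp [Finset.mem_erase, hxa, hx]) (by simp [Finset.mem_erase, hya, hy]) hxy
  · intro y hy
    simp only [Finset.mem_coe] at hy
    by_cases hyb : y = b
    · exact ⟨a, Finset.mem_coe.mpr ha, by rw [hyb]; exact Function.update_self _ _ _⟩
    · obtain ⟨x, hx, hxy⟩ := hf.surjOn (by simp [Finset.mem_erase, hyb, hy] : y ∈ (↑(t.erase b) : Set α))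
      simp only [Finset.mem_coe, Finset.mem_erase] at hx
      exact ⟨x, Finset.mem_coe.mpr hx.2, by rw [hupd x hx.1]; exact hxy⟩
  · intro x hx
    by_cases hxa : x = a
    · rw [hxa, Function.update_self]; exact hwab
    · rw [hupd x hxa]; exact hw x (Finset.mem_erase.mpr ⟨hxa, hx⟩)

lemma exists_pairing {α W : Type} [DecidableEq α] (w : α → W) :
    ∀ (n : ℕ) (s t : Finset α), s.card = n → s.val.map w = t.val.map w →
      ∃ f : α → α, Set.BijOn f ↑s ↑t ∧ ∀ x ∈ s, w (f x) = w x := by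
  intro n
  induction n with
  | zero =>
    intro s t hs h
    rw [Finset.card_eq_zero] at hs
    subst hs
    simp only [Finset.empty_val, Multiset.map_zero] at h
    have : t = ∅ := by
      rw [← Finset.card_eq_zero]
      have := congrArg Multiset.card h
      simpa using this.symm
    subst this
    exact ⟨id, by simp [Set.BijOn], by simp⟩
  | succ k ih =>
    intro s t hs h
    have hsne : s.Nonempty := by rw [← Finset.card_pos, hs]; omega
    obtain ⟨a, ha⟩ := hsne
    have hwa : w a ∈ t.val.map w := by
      rw [← h]
      exact Multiset.mem_map_of_mem w ha
    obtain ⟨b, hb, hwb⟩ := Multiset.mem_map.mp hwa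
    have herase : (s.erase a).val.map w = (t.erase b).val.map w := by
      have hsv : s.val = a ::ₘ (s.erase a).val := by
        rw [Finset.erase_val]
        exact (Multiset.cons_erase ha).symm
      have htv : t.val = b ::ₘ (t.erase b).val := by
        rw [Finset.erase_val]
        exact (Multiset.cons_erase hb).symm
      rw [hsv, htv] at h
      simp only [Multiset.map_cons, hwb] at h
      exact (Multiset.cons_inj_right _).mp h
    obtain ⟨f, hf, hw⟩ := ih (s.erase a) (t.erase b)
      (by rw [Finset.card_erase_of_mem ha, hs]; rfl) herase
    obtain ⟨h1, h2, _⟩ := pairing_update ha (Finset.mem_coe.mp hb) hf hw hwb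
    exact ⟨_, h1, h2⟩

lemma exists_pairing_on {α W : Type} [DecidableEq α] (w : α → W) (s t : Finset α)
    (h : s.val.map w = t.val.map w) {a b : α} (ha : a ∈ s) (hb : b ∈ t) (hab : w b = w a) :
    ∃ f : α → α, Set.BijOn f ↑s ↑t ∧ (∀ x ∈ s, w (f x) = w x) ∧ f a = b := by
  have herase : (s.erase a).val.map w = (t.erase b).val.map w := by
    have hsv : s.val = a ::ₘ (s.erase a).val := by
      rw [Finset.erase_val]; exact (Multiset.cons_erase ha).symm
    have htv : t.val = b ::ₘ (t.erase b).val := by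
      rw [Finset.erase_val]; exact (Multiset.cons_erase hb).symm
    rw [hsv, htv] at h
    simp only [Multiset.map_cons, hab] at h
    exact (Multiset.cons_inj_right _).mp h
  obtain ⟨f, hf, hw⟩ := exists_pairing w (s.erase a).card (s.erase a) (t.erase b) rfl herase
  exact ⟨_, pairing_update ha hb hf hw hab⟩

lemma exists_pairing_on2 {α W : Type} [DecidableEq α] (w : α → W) (s t : Finset α)
    (h : s.val.map w = t.val.map w) {a1 a2 b1 b2 : α}
    (ha1 : a1 ∈ s) (ha2 : a2 ∈ s) (ha12 : a1 ≠ a2)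
    (hb1 : b1 ∈ t) (hb2 : b2 ∈ t) (hb12 : b1 ≠ b2)
    (hw1 : w b1 = w a1) (hw2 : w b2 = w a2) :
    ∃ f : α → α, Set.BijOn f ↑s ↑t ∧ (∀ x ∈ s, w (f x) = w x) ∧ f a1 = b1 ∧ f a2 = b2 := by
  have herase : (s.erase a1).val.map w = (t.erase b1).val.map w := by
    have hsv : s.val = a1 ::ₘ (s.erase a1).val := by
      rw [Finset.erase_val]; exact (Multiset.cons_erase ha1).symm
    have htv : t.val = b1 ::ₘ (t.erase b1).val := by
      rw [Finset.erase_val]; exact (Multiset.cons_erase hb1).symm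
    rw [hsv, htv] at h
    simp only [Multiset.map_cons, hw1] at h
    exact (Multiset.cons_inj_right _).mp h
  obtain ⟨f, hf, hfw, hfa2⟩ := exists_pairing_on w (s.erase a1) (t.erase b1) herase
    (Finset.mem_erase.mpr ⟨ha12.symm, ha2⟩) (Finset.mem_erase.mpr ⟨hb12.symm, hb2⟩) hw2
  obtain ⟨h1, h2, h3⟩ := pairing_update ha1 hb1 hf hfw hw1
  refine ⟨_, h1, h2, h3, ?_⟩
  rw [Function.update_of_ne ha12.symm]
  exact hfa2

noncomputable def isoRestrictFull {G : SimpleGraph V} (f : G ≃g G) (t : Set V)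
    (hf : ∀ x ∈ t, f x ∈ t) (hg : ∀ x ∈ t, f.symm x ∈ t) : G.induce t ≃g G.induce t where
  toEquiv :=
  { toFun := fun x => ⟨f x.1, hf x.1 x.2⟩
    invFun := fun y => ⟨f.symm y.1, hg y.1 y.2⟩
    left_inv := fun x => Subtype.ext (by simp)
    right_inv := fun y => Subtype.ext (by simp) }
  map_rel_iff' := by intro a b; exact f.map_rel_iff

@[simp] lemma isoRestrictFull_apply {G : SimpleGraph V} (f : G ≃g G) (t : Set V)
    (hf : ∀ x ∈ t, f x ∈ t) (hg : ∀ x ∈ t, f.symm x ∈ t) (x : ↥t) :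
    (isoRestrictFull f t hf hg x : V) = f x.1 := rfl

lemma iso_image_neighborSet {G : SimpleGraph V} {H : SimpleGraph W} (f : G ≃g H) (x : V) :
    ⇑f '' G.neighborSet x = H.neighborSet (f x) := by
  ext y
  constructor
  · rintro ⟨z, hz, rfl⟩
    exact f.map_rel_iff.mpr hz
  · intro hy
    refine ⟨f.symm y, ?_, by simp⟩
    have h1 : H.Adj (f x) (f (f.symm y)) := by simpa using hy
    exact f.map_rel_iff.mp h1

/-- Extend a weighted automorphism of the non-leaf part of a graph to the whole graph,
using a compatible family of bijections on the leaf-fibers. -/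
lemma extend_iso {α : Type} [Fintype α] (S : SimpleGraph α) {W : Type} (w : α → W)
    (L : Set α) (hLL : ∀ x ∈ L, ∀ y ∈ L, ¬S.Adj x y)
    (par : α → α) (hpar : ∀ x ∈ L, S.neighborSet x = {par x})
    (hparL : ∀ x ∈ L, par x ∉ L)
    (τ' : S.induce Lᶜ ≃g S.induce Lᶜ)
    (F : ∀ _ : ↥(Lᶜ), α → α)
    (hF : ∀ q : ↥(Lᶜ), Set.BijOn (F q) {x | x ∈ L ∧ par x = q.1}
        {x | x ∈ L ∧ par x = (τ' q).1})
    (hFw : ∀ q : ↥(Lᶜ), ∀ x, x ∈ L → par x = q.1 → w (F q x) = w x)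
    (hτw : ∀ q : ↥(Lᶜ), w ((τ' q) : α) = w q.1) :
    ∃ τ : S ≃g S, (∀ x, w (τ x) = w x) ∧ (∀ q (hq : q ∈ (Lᶜ : Set α)), τ q = ((τ' ⟨q, hq⟩) : α))
      ∧ (∀ x (hx : x ∈ L), τ x = F ⟨par x, hparL x hx⟩ x) := by
  classical
  set g : α → α := fun x => if hx : x ∈ L then F ⟨par x, hparL x hx⟩ x
    else ((τ' ⟨x, hx⟩) : α) with hgdef
  have hgleaf : ∀ x (hx : x ∈ L), g x = F ⟨par x, hparL x hx⟩ x := by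
    intro x hx; simp [hgdef, hx]
  have hgnon : ∀ x (hx : x ∉ L), g x = ((τ' ⟨x, hx⟩) : α) := by
    intro x hx; simp [hgdef, hx]
  have hgL : ∀ x (hx : x ∈ L), g x ∈ L ∧ par (g x) = ((τ' ⟨par x, hparL x hx⟩) : α) := by
    intro x hx
    have h1 := (hF ⟨par x, hparL x hx⟩).mapsTo (Set.mem_setOf.mpr ⟨hx, rfl⟩)
    rw [← hgleaf x hx] at h1
    exact h1
  have hgLc : ∀ x (hx : x ∉ L), g x ∉ L := by
    intro x hx
    rw [hgnon x hx]
    exact (τ' ⟨x, hx⟩).2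
  have hginj : Function.Injective g := by
    intro x y hxy
    by_cases hx : x ∈ L <;> by_cases hy : y ∈ L
    · have h1 := hgL x hx
      have h2 := hgL y hy
      have hq : (⟨par x, hparL x hx⟩ : ↥(Lᶜ)) = ⟨par y, hparL y hy⟩ := by
        apply τ'.injective
        apply Subtype.ext
        rw [← h1.2, ← h2.2, hxy]
      have hqv : par x = par y := congrArg Subtype.val hq
      have := (hF ⟨par x, hparL x hx⟩).injOn (Set.mem_setOf.mpr ⟨hx, rfl⟩)
        (Set.mem_setOf.mpr ⟨hy, hqv.symm⟩) ?_
      · exact this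
      · rw [← hgleaf x hx, hxy, hgleaf y hy]
        congr 1
        exact hq.symm
    · exact absurd (hxy ▸ (hgL x hx).1) (hgLc y hy)
    · exact absurd ((hxy.symm) ▸ (hgL y hy).1) (hgLc x hx)
    · have : (⟨x, hx⟩ : ↥(Lᶜ)) = ⟨y, hy⟩ := by
        apply τ'.injective
        apply Subtype.ext
        rw [← hgnon x hx, ← hgnon y hy, hxy]
      exact congrArg Subtype.val this
  have hadj : ∀ x y, S.Adj x y → S.Adj (g x) (g y) := by
    have key : ∀ x y, x ∈ L → y ∉ L → S.Adj x y → S.Adj (g x) (g y) := by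
      intro x y hx hy hxy
      have hyp : y = par x := by
        have : y ∈ S.neighborSet x := hxy
        rwa [hpar x hx, Set.mem_singleton_iff] at this
      have h1 := hgL x hx
      have hadj2 : S.Adj (g x) (par (g x)) := by
        have hmem : par (g x) ∈ S.neighborSet (g x) := by
          rw [hpar (g x) h1.1]; rfl
        exact hmem
      rw [h1.2] at hadj2
      rw [hgnon y hy]
      have : (⟨par x, hparL x hx⟩ : ↥(Lᶜ)) = ⟨y, hy⟩ := Subtype.ext hyp.symm
      rw [← this]
      exact hadj2
    intro x y hxy
    by_cases hx : x ∈ L <;> by_cases hy : y ∈ L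
    · exact absurd hxy (hLL x hx y hy)
    · exact key x y hx hy hxy
    · exact (key y x hy hx hxy.symm).symm
    · rw [hgnon x hx, hgnon y hy]
      exact τ'.map_rel_iff.mpr hxy
  have hgbij : Function.Bijective g := Finite.injective_iff_bijective.mp hginj
  refine ⟨isoOfMapAdj S (Equiv.ofBijective g hgbij) hadj, ?_, ?_, ?_⟩
  · intro x
    show w (g x) = w x
    by_cases hx : x ∈ L
    · rw [hgleaf x hx]
      exact hFw ⟨par x, hparL x hx⟩ x hx rfl
    · rw [hgnon x hx]
      exact hτw ⟨x, hx⟩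
  · intro q hq
    show g q = _
    rw [hgnon q hq]
  · intro x hx
    show g x = _
    rw [hgleaf x hx]

lemma bijOn_swap {α : Type} [DecidableEq α] {s : Set α} {a b : α} (ha : a ∈ s) (hb : b ∈ s) :
    Set.BijOn (Equiv.swap a b) s s := by
  refine ⟨?_, (Equiv.injective _).injOn, ?_⟩
  · intro x hx
    rcases eq_or_ne x a with h | h
    · rw [h, Equiv.swap_apply_left]; exact hb
    · rcases eq_or_ne x b with h2 | h2
      · rw [h2, Equiv.swap_apply_right]; exact ha
      · rw [Equiv.swap_apply_of_ne_of_ne h h2]; exact hx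
  · intro y hy
    refine ⟨Equiv.swap a b y, ?_, by simp⟩
    rcases eq_or_ne y a with h | h
    · rw [h, Equiv.swap_apply_left]; exact hb
    · rcases eq_or_ne y b with h2 | h2
      · rw [h2, Equiv.swap_apply_right]; exact ha
      · rw [Equiv.swap_apply_of_ne_of_ne h h2]; exact hy

/-- In a finite tree, for any automorphism `σ` preserving a weight function `w` and any
vertex `a`, there is a `w`-preserving automorphism swapping `a` and `σ a`. -/
lemma swap_similar : ∀ (n : ℕ) (α : Type) (_ : Fintype α) (S : SimpleGraph α),
    Fintype.card α ≤ n → S.IsTree → ∀ (W : Type) (w : α → W) (σ : S ≃g S),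
    (∀ x, w (σ x) = w x) → ∀ a : α,
    ∃ τ : S ≃g S, (∀ x, w (τ x) = w x) ∧ τ a = σ a ∧ τ (σ a) = a := by
  intro n
  induction n with
  | zero =>
    intro α inst S hcard hT W w σ hw a
    have : 0 < Fintype.card α := Fintype.card_pos_iff.mpr ⟨a⟩
    omega
  | succ k ih =>
    intro α inst S hcard hT W w σ hw a
    classical
    by_cases hab : σ a = a
    · exact ⟨RelIso.refl _, fun x => rfl, hab.symm, hab⟩
    have hconn := hT.isConnected
    have hnt : Nontrivial α := ⟨σ a, a, hab⟩
    have hdegpos : ∀ x : α, 1 ≤ (S.neighborSet x).ncard := by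
      intro x
      obtain ⟨y, hy⟩ := exists_ne x
      exact (Set.ncard_pos (Set.toFinite _)).mpr (exists_adj hconn hy.symm)
    have hsingle : ∀ x : α, (S.neighborSet x).ncard ≤ 1 → ∃ p, S.neighborSet x = {p} :=
      fun x hx => Set.ncard_eq_one.mp (le_antisymm hx (hdegpos x))
    set L : Set α := {x : α | (S.neighborSet x).ncard ≤ 1} with hLdef
    have hσL : ∀ (f : S ≃g S) (x : α), x ∈ L ↔ f x ∈ L := by
      intro f x
      simp only [hLdef, Set.mem_setOf_eq, nd_map f x]
    by_cases h2 : Fintype.card α = 2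
    · have hne_ab : a ≠ σ a := fun h => hab h.symm
      have hcard_ab : ({a, σ a} : Finset α).card = 2 := by
        rw [Finset.card_insert_of_notMem (by simpa using hne_ab), Finset.card_singleton]
      have huniv : (Finset.univ : Finset α) = {a, σ a} := by
        apply (Finset.eq_of_subset_of_card_le (Finset.subset_univ _) ?_).symm
        rw [Finset.card_univ, h2, hcard_ab]
      have hba : σ (σ a) = a := by
        have hm : σ (σ a) ∈ ({a, σ a} : Finset α) := by rw [← huniv]; exact Finset.mem_univ _
        simp only [Finset.mem_insert, Finset.mem_singleton] at hm
        rcases hm with h | h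
        · exact h
        · exact absurd (σ.injective h) hab
      exact ⟨σ, hw, rfl, hba⟩
    have hcard3 : 3 ≤ Fintype.card α := by
      have : 1 < Fintype.card α := Fintype.one_lt_card_iff_nontrivial.mpr hnt
      omega
    have hLL : ∀ x ∈ L, ∀ y ∈ L, ¬S.Adj x y := by
      intro x hx y hy hxy
      obtain ⟨p, hp⟩ := hsingle x hx
      obtain ⟨q, hq⟩ := hsingle y hy
      have hpy : p = y := by
        have h0 : y ∈ S.neighborSet x := hxy
        rw [hp, Set.mem_singleton_iff] at h0
        exact h0.symm
      have hqx : q = x := by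
        have h0 : x ∈ S.neighborSet y := hxy.symm
        rw [hq, Set.mem_singleton_iff] at h0
        exact h0.symm
      rw [hpy] at hp
      rw [hqx] at hq
      have hclosed := mem_of_closed hconn (C := {x, y}) ⟨x, Or.inl rfl⟩ ?_
      · obtain ⟨z, hz1, hz2⟩ : ∃ z : α, z ≠ x ∧ z ≠ y := by
          by_contra hcon
          push_neg at hcon
          have hsub : (Finset.univ : Finset α) ⊆ {x, y} := by
            intro z _
            simp only [Finset.mem_insert, Finset.mem_singleton]
            by_cases hzx : z = x
            · exact Or.inl hzx
            · exact Or.inr (hcon z hzx)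
          have hle := Finset.card_le_card hsub
          rw [Finset.card_univ] at hle
          have : ({x, y} : Finset α).card ≤ 2 := Finset.card_insert_le _ _ |>.trans (by simp)
          omega
        rcases hclosed z with h | h
        · exact hz1 h
        · exact hz2 h
      · rintro s (rfl | hs) t hst
        · right
          have h0 : t ∈ S.neighborSet s := hst
          rw [hp, Set.mem_singleton_iff] at h0
          exact h0
        · left
          rw [Set.mem_singleton_iff] at hs
          subst hs
          have h0 : t ∈ S.neighborSet s := hst
          rw [hq, Set.mem_singleton_iff] at h0
          exact h0
    have hparex : ∀ x, x ∈ L → ∃ p, S.neighborSet x = {p} := fun x hx => hsingle x hx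
    set par : α → α := fun x => if hx : x ∈ L then (hparex x hx).choose else x with hpardef
    have hpar : ∀ x ∈ L, S.neighborSet x = {par x} := by
      intro x hx
      have : par x = (hparex x hx).choose := by simp [hpardef, hx]
      rw [this]
      exact (hparex x hx).choose_spec
    have hparadj : ∀ x ∈ L, S.Adj x (par x) := by
      intro x hx
      have : par x ∈ S.neighborSet x := by rw [hpar x hx]; rfl
      exact this
    have hparL : ∀ x ∈ L, par x ∉ L :=
      fun x hx hcon => hLL x hx (par x) hcon (hparadj x hx)
    have hLne : ∃ x, x ∈ L := by
      by_contra hcon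
      push_neg at hcon
      have hdeg2 : ∀ x : α, 2 ≤ S.degree x := by
        intro x
        have h1 := hcon x
        simp only [hLdef, Set.mem_setOf_eq, not_le] at h1
        have h2 : (S.neighborSet x).ncard = S.degree x := by
          rw [← card_neighborSet_eq_degree, Set.ncard_eq_toFinset_card', Set.toFinset_card]
        omega
      have hsum := S.sum_degrees_eq_twice_card_edges
      have hedge : S.edgeFinset.card + 1 = Fintype.card α := hT.card_edgeFinset
      have hge : 2 * Fintype.card α ≤ ∑ v : α, S.degree v := by
        calc 2 * Fintype.card α = ∑ _v : α, 2 := by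
              rw [Finset.sum_const, Finset.card_univ, smul_eq_mul, mul_comm]
          _ ≤ _ := Finset.sum_le_sum (fun i _ => hdeg2 i)
      omega
    have hLcne : (Lᶜ : Set α).Nonempty := by
      obtain ⟨ℓ, hℓ⟩ := hLne
      exact ⟨par ℓ, hparL ℓ hℓ⟩
    have hS' : (S.induce (Lᶜ : Set α)).IsTree := by
      have h0 := isTree_induce_compl (Dlow := L) (Dctr := ∅) hT
        (fun y hy => hy) (fun c hc => absurd hc (Set.notMem_empty c))
        (by rw [Set.union_empty]; exact hLcne)
      rwa [Set.union_empty] at h0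
    have hσLc : ∀ x ∈ (Lᶜ : Set α), σ x ∈ (Lᶜ : Set α) :=
      fun x hx hc => hx ((hσL σ x).mpr hc)
    have hσLc' : ∀ x ∈ (Lᶜ : Set α), σ.symm x ∈ (Lᶜ : Set α) := by
      intro x hx hc
      have h0 : σ (σ.symm x) ∈ L := (hσL σ _).mp hc
      simp only [RelIso.apply_symm_apply] at h0
      exact hx h0
    set σ' := isoRestrictFull σ (Lᶜ : Set α) hσLc hσLc' with hσ'def
    have hparmap : ∀ (f : S ≃g S), (∀ x, x ∈ L ↔ f x ∈ L) → ∀ x ∈ L, par (f x) = f (par x) := by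
      intro f hfL x hx
      have h1 : S.neighborSet (f x) = {f (par x)} := by
        rw [← iso_image_neighborSet f x, hpar x hx, Set.image_singleton]
      have h2 := hpar (f x) ((hfL x).mp hx)
      rw [h1] at h2
      exact (Set.singleton_eq_singleton_iff.mp h2).symm
    set LC : α → Finset α := fun p => Finset.univ.filter (fun x => x ∈ L ∧ par x = p) with hLCdef
    have hLCmem : ∀ x p, x ∈ LC p ↔ (x ∈ L ∧ par x = p) := by
      intro x p; simp [hLCdef]
    have hLCcoe : ∀ p, (↑(LC p) : Set α) = {x | x ∈ L ∧ par x = p} := by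
      intro p; ext x; simp [hLCdef]
    have hLCmap : ∀ (f : S ≃g S), (∀ x, x ∈ L ↔ f x ∈ L) → ∀ p, LC (f p) = (LC p).image f := by
      intro f hfL p
      ext x
      simp only [hLCmem, Finset.mem_image]
      constructor
      · rintro ⟨hx1, hx2⟩
        have hfsx : f.symm x ∈ L := by
          have h0 := hfL (f.symm x)
          simp only [RelIso.apply_symm_apply] at h0
          exact h0.mpr hx1
        refine ⟨f.symm x, ⟨hfsx, ?_⟩, by simp⟩
        have h1 := hparmap f hfL (f.symm x) hfsx
        simp only [RelIso.apply_symm_apply] at h1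
        rw [hx2] at h1
        exact f.injective h1.symm
      · rintro ⟨y, ⟨hy1, hy2⟩, rfl⟩
        exact ⟨(hfL y).mp hy1, by rw [hparmap f hfL y hy1, hy2]⟩
    have hLCmul : ∀ (f : S ≃g S), (∀ x, x ∈ L ↔ f x ∈ L) → (∀ x, w (f x) = w x) →
        ∀ p, (LC (f p)).val.map w = (LC p).val.map w := by
      intro f hfL hfw p
      rw [hLCmap f hfL p, Finset.image_val_of_injOn (f.injective.injOn), Multiset.map_map]
      exact Multiset.map_congr rfl (fun x _ => hfw x)
    set w' : ↥(Lᶜ : Set α) → W × Multiset W := fun q => (w q.1, (LC q.1).val.map w) with hw'def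
    have hσ'w : ∀ q, w' (σ' q) = w' q := by
      intro q
      have hval : ((σ' q) : α) = σ q.1 := rfl
      simp only [hw'def, hval]
      exact Prod.ext (hw q.1) (hLCmul σ (hσL σ) hw q.1)
    have hcard' : Fintype.card ↥(Lᶜ : Set α) ≤ k := by
      obtain ⟨ℓ, hℓ⟩ := hLne
      have hnr : ℓ ∉ Set.range (Subtype.val : ↥(Lᶜ : Set α) → α) := by
        rw [Subtype.range_coe]
        exact fun hc => hc hℓ
      have hlt := Fintype.card_lt_of_injective_of_notMem
        (Subtype.val : ↥(Lᶜ : Set α) → α) Subtype.val_injective hnr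
      have hbr : Fintype.card {x // x ∈ (Lᶜ : Set α)} = Fintype.card ↥(Lᶜ : Set α) :=
        Fintype.card_congr (Equiv.refl _)
      omega
    -- generic fiber pairing data from a w'-preserving automorphism of the induced graph
    have hfibgen : ∀ (τ' : S.induce (Lᶜ : Set α) ≃g S.induce (Lᶜ : Set α)),
        (∀ q, w' (τ' q) = w' q) →
        ∀ q : ↥(Lᶜ : Set α), (LC q.1).val.map w = (LC ((τ' q) : α)).val.map w := by
      intro τ' hτ'w q
      exact (congrArg Prod.snd (hτ'w q)).symm
    by_cases haL : a ∈ L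
    · -- `a` is a leaf
      have hbL : σ a ∈ L := (hσL σ a).mp haL
      have habar : par a ∉ L := hparL a haL
      have hbbar : par (σ a) ∉ L := hparL _ hbL
      have hσabar : σ (par a) = par (σ a) := (hparmap σ (hσL σ) a haL).symm
      obtain ⟨τ', hτ'w, hτ'1, hτ'2⟩ := ih ↥(Lᶜ : Set α) _ (S.induce (Lᶜ : Set α)) hcard' hS'
        _ w' σ' hσ'w ⟨par a, habar⟩
      have hσ'abar : σ' ⟨par a, habar⟩ = ⟨par (σ a), hbbar⟩ := Subtype.ext hσabar
      rw [hσ'abar] at hτ'1 hτ'2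
      have hfib := hfibgen τ' hτ'w
      have hwba : w (σ a) = w a := hw a
      have hane : a ≠ σ a := fun h => hab h.symm
      by_cases heq : par a = par (σ a)
      · -- siblings
        obtain ⟨f0, hf0b, hf0w, hf0a, hf0b'⟩ := exists_pairing_on2 w (LC (par a))
          (LC ((τ' ⟨par a, habar⟩) : α)) (hfib ⟨par a, habar⟩)
          ((hLCmem a _).mpr ⟨haL, rfl⟩) ((hLCmem (σ a) _).mpr ⟨hbL, heq.symm⟩) hane
          (by rw [hτ'1]; exact (hLCmem _ _).mpr ⟨hbL, rfl⟩)
          (by rw [hτ'1]; exact (hLCmem _ _).mpr ⟨haL, heq⟩) (Ne.symm hane)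
          hwba hwba.symm
        set F : ↥(Lᶜ : Set α) → α → α := fun q =>
          if q = ⟨par a, habar⟩ then f0
          else (exists_pairing w (LC q.1).card (LC q.1) (LC ((τ' q) : α)) rfl (hfib q)).choose
          with hFdef
        have hFspec : ∀ q : ↥(Lᶜ : Set α), Set.BijOn (F q) ↑(LC q.1) ↑(LC ((τ' q) : α))
            ∧ ∀ x ∈ LC q.1, w (F q x) = w x := by
          intro q
          by_cases hq : q = ⟨par a, habar⟩
          · subst hq
            simp only [hFdef, if_pos rfl]
            exact ⟨hf0b, hf0w⟩
          · simp only [hFdef, if_neg hq]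
            exact (exists_pairing w (LC q.1).card (LC q.1) (LC ((τ' q) : α)) rfl
              (hfib q)).choose_spec
        obtain ⟨τ, hτw, hτ1, hτ2⟩ := extend_iso S w L hLL par hpar hparL τ' F
          (fun q => by rw [← hLCcoe, ← hLCcoe]; exact (hFspec q).1)
          (fun q x hx hpx => (hFspec q).2 x ((hLCmem _ _).mpr ⟨hx, hpx⟩))
          (fun q => congrArg Prod.fst (hτ'w q))
        refine ⟨τ, hτw, ?_, ?_⟩
        · rw [hτ2 a haL]
          show F ⟨par a, habar⟩ a = σ a
          simp only [hFdef, if_pos rfl]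
          exact hf0a
        · rw [hτ2 (σ a) hbL]
          have hsub : (⟨par (σ a), hparL (σ a) hbL⟩ : ↥(Lᶜ : Set α)) = ⟨par a, habar⟩ :=
            Subtype.ext heq.symm
          rw [hsub]
          show F ⟨par a, habar⟩ (σ a) = a
          simp only [hFdef, if_pos rfl]
          exact hf0b'
      · -- distinct parent case
        have hne' : (⟨par (σ a), hbbar⟩ : ↥(Lᶜ : Set α)) ≠ ⟨par a, habar⟩ :=
          fun h => heq (congrArg Subtype.val h).symm
        obtain ⟨f1, hf1b, hf1w, hf1a⟩ := exists_pairing_on w (LC (par a))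
          (LC ((τ' ⟨par a, habar⟩) : α)) (hfib ⟨par a, habar⟩)
          ((hLCmem _ _).mpr ⟨haL, rfl⟩)
          (by rw [hτ'1]; exact (hLCmem _ _).mpr ⟨hbL, rfl⟩) hwba
        obtain ⟨f2, hf2b, hf2w, hf2a⟩ := exists_pairing_on w (LC (par (σ a)))
          (LC ((τ' ⟨par (σ a), hbbar⟩) : α)) (hfib ⟨par (σ a), hbbar⟩)
          ((hLCmem _ _).mpr ⟨hbL, rfl⟩)
          (by rw [hτ'2]; exact (hLCmem _ _).mpr ⟨haL, rfl⟩) hwba.symm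
        set F : ↥(Lᶜ : Set α) → α → α := fun q =>
          if q = ⟨par a, habar⟩ then f1
          else if q = ⟨par (σ a), hbbar⟩ then f2
          else (exists_pairing w (LC q.1).card (LC q.1) (LC ((τ' q) : α)) rfl (hfib q)).choose
          with hFdef
        have hFspec : ∀ q : ↥(Lᶜ : Set α), Set.BijOn (F q) ↑(LC q.1) ↑(LC ((τ' q) : α))
            ∧ ∀ x ∈ LC q.1, w (F q x) = w x := by
          intro q
          by_cases hq1 : q = ⟨par a, habar⟩
          · subst hq1
            simp only [hFdef, if_pos rfl]
            exact ⟨hf1b, hf1w⟩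
          · by_cases hq2 : q = ⟨par (σ a), hbbar⟩
            · subst hq2
              simp only [hFdef, if_neg hq1, if_pos rfl]
              exact ⟨hf2b, hf2w⟩
            · simp only [hFdef, if_neg hq1, if_neg hq2]
              exact (exists_pairing w (LC q.1).card (LC q.1) (LC ((τ' q) : α)) rfl
                (hfib q)).choose_spec
        obtain ⟨τ, hτw, hτ1, hτ2⟩ := extend_iso S w L hLL par hpar hparL τ' F
          (fun q => by rw [← hLCcoe, ← hLCcoe]; exact (hFspec q).1)
          (fun q x hx hpx => (hFspec q).2 x ((hLCmem _ _).mpr ⟨hx, hpx⟩))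
          (fun q => congrArg Prod.fst (hτ'w q))
        refine ⟨τ, hτw, ?_, ?_⟩
        · rw [hτ2 a haL]
          show F ⟨par a, habar⟩ a = σ a
          simp only [hFdef, if_pos rfl]
          exact hf1a
        · rw [hτ2 (σ a) hbL]
          have hsub : (⟨par (σ a), hparL (σ a) hbL⟩ : ↥(Lᶜ : Set α)) = ⟨par (σ a), hbbar⟩ := rfl
          rw [hsub]
          show F ⟨par (σ a), hbbar⟩ (σ a) = a
          simp only [hFdef, if_neg hne', if_pos rfl]
          exact hf2a
    · -- a not a leaf
      have hbL : σ a ∉ L := fun h => haL ((hσL σ a).mpr h)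
      obtain ⟨τ', hτ'w, hτ'1, hτ'2⟩ := ih ↥(Lᶜ : Set α) _ (S.induce (Lᶜ : Set α)) hcard' hS'
        _ w' σ' hσ'w ⟨a, haL⟩
      have hσ'a : σ' ⟨a, haL⟩ = ⟨σ a, hbL⟩ := Subtype.ext rfl
      rw [hσ'a] at hτ'1 hτ'2
      have hfib := hfibgen τ' hτ'w
      set F : ↥(Lᶜ : Set α) → α → α := fun q =>
        (exists_pairing w (LC q.1).card (LC q.1) (LC ((τ' q) : α)) rfl (hfib q)).choose
        with hFdef
      have hFspec : ∀ q : ↥(Lᶜ : Set α), Set.BijOn (F q) ↑(LC q.1) ↑(LC ((τ' q) : α))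
          ∧ ∀ x ∈ LC q.1, w (F q x) = w x := fun q =>
        (exists_pairing w (LC q.1).card (LC q.1) (LC ((τ' q) : α)) rfl (hfib q)).choose_spec
      obtain ⟨τ, hτw, hτ1, hτ2⟩ := extend_iso S w L hLL par hpar hparL τ' F
        (fun q => by rw [← hLCcoe, ← hLCcoe]; exact (hFspec q).1)
        (fun q x hx hpx => (hFspec q).2 x ((hLCmem _ _).mpr ⟨hx, hpx⟩))
        (fun q => congrArg Prod.fst (hτ'w q))
      refine ⟨τ, hτw, ?_, ?_⟩
      · rw [hτ1 a haL, hτ'1]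
      · rw [hτ1 (σ a) hbL, hτ'2]

lemma ecv_struct {V : Type} [Finite V] {T : SimpleGraph V} {u : V}
    (hu : IsEndCutvertex T u) :
    ∃ u' : V, T.Adj u u' ∧ 2 ≤ (T.neighborSet u').ncard ∧
      (∀ x, T.Adj u x → x ≠ u' → T.neighborSet x = {u}) ∧
      {w | w ∈ T.neighborSet u ∧ 2 ≤ (T.neighborSet w).ncard} = {u'} := by
  obtain ⟨u', hset⟩ := Set.ncard_eq_one.mp hu.2
  have hmem : u' ∈ {w | w ∈ T.neighborSet u ∧ 2 ≤ (T.neighborSet w).ncard} := by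
    rw [hset]; rfl
  obtain ⟨h1, h2⟩ := hmem
  refine ⟨u', h1, h2, ?_, hset⟩
  intro x hx hxu'
  have hxnot : ¬(2 ≤ (T.neighborSet x).ncard) := by
    intro hc
    have hxs : x ∈ {w | w ∈ T.neighborSet u ∧ 2 ≤ (T.neighborSet w).ncard} := ⟨hx, hc⟩
    rw [hset, Set.mem_singleton_iff] at hxs
    exact hxu' hxs
  have hu_mem : u ∈ T.neighborSet x := hx.symm
  have hpos : 1 ≤ (T.neighborSet x).ncard :=
    (Set.ncard_pos (Set.toFinite _)).mpr ⟨u, hu_mem⟩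
  have hone : (T.neighborSet x).ncard = 1 := by omega
  obtain ⟨p, hp⟩ := Set.ncard_eq_one.mp hone
  rw [hp, Set.mem_singleton_iff] at hu_mem
  rw [hp, ← hu_mem]

lemma val_image_compl_singleton {V : Type} (s : Set V) (x : ↥s) :
    Subtype.val '' ({x}ᶜ : Set ↥s) = s \ {x.1} := by
  ext y
  constructor
  · rintro ⟨z, hz, rfl⟩
    exact ⟨z.2, fun hc => hz (Subtype.ext (Set.mem_singleton_iff.mp hc))⟩
  · rintro ⟨hy, hyx⟩
    exact ⟨⟨y, hy⟩, fun hc => hyx (Set.mem_singleton_iff.mpr (congrArg Subtype.val hc)), rfl⟩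

/-- The main recursion: removal-similar end-cutvertices of a tree are similar. -/
lemma main_rec : ∀ (n : ℕ) (V : Type) (_ : Fintype V) (T : SimpleGraph V),
    Fintype.card V ≤ n → T.IsTree → ∀ u v : V, IsEndCutvertex T u → IsEndCutvertex T v →
    Nonempty (T.induce ({u}ᶜ : Set V) ≃g T.induce ({v}ᶜ : Set V)) →
    ∃ φ : T ≃g T, φ u = v := by
  intro n
  induction n with
  | zero =>
    intro V inst T hcard hT u v hu hv h
    have : 0 < Fintype.card V := Fintype.card_pos_iff.mpr ⟨u⟩
    omega
  | succ k ih =>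
    intro V inst T hcard hT u v hu hv h
    classical
    by_cases huv : u = v
    · exact ⟨RelIso.refl _, huv⟩
    have hconn := hT.isConnected
    obtain ⟨u', hadj_uu', hnd_u', hAfacts_u, hbig_u⟩ := ecv_struct hu
    obtain ⟨v', hadj_vv', hnd_v', hAfacts_v, hbig_v⟩ := ecv_struct hv
    set A : Set V := T.neighborSet u \ {u'} with hAdef
    set B : Set V := T.neighborSet v \ {v'} with hBdef
    have hA_nbr : ∀ a ∈ A, T.neighborSet a = {u} := by
      rintro a ⟨ha1, ha2⟩
      exact hAfacts_u a ha1 ha2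
    have hB_nbr : ∀ b ∈ B, T.neighborSet b = {v} := by
      rintro b ⟨hb1, hb2⟩
      exact hAfacts_v b hb1 hb2
    have hA_nd : ∀ a ∈ A, (T.neighborSet a).ncard = 1 := by
      intro a ha; rw [hA_nbr a ha]; exact Set.ncard_singleton u
    have hB_nd : ∀ b ∈ B, (T.neighborSet b).ncard = 1 := by
      intro b hb; rw [hB_nbr b hb]; exact Set.ncard_singleton v
    have hNu : T.neighborSet u = A ∪ {u'} := by
      ext y
      constructor
      · intro hy
        by_cases hyu' : y = u'
        · exact Or.inr hyu'
        · exact Or.inl ⟨hy, hyu'⟩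
      · rintro (⟨hy, -⟩ | hy)
        · exact hy
        · rw [Set.mem_singleton_iff] at hy; rw [hy]; exact hadj_uu'
    have hNv : T.neighborSet v = B ∪ {v'} := by
      ext y
      constructor
      · intro hy
        by_cases hyv' : y = v'
        · exact Or.inr hyv'
        · exact Or.inl ⟨hy, hyv'⟩
      · rintro (⟨hy, -⟩ | hy)
        · exact hy
        · rw [Set.mem_singleton_iff] at hy; rw [hy]; exact hadj_vv'
    -- basic non-membership facts
    have huA : u ∉ A := fun hc => (T.irrefl (hc.1 : T.Adj u u))
    have hvB : v ∉ B := fun hc => (T.irrefl (hc.1 : T.Adj v v))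
    have hvA : v ∉ A := by
      intro hc
      have := hA_nd v hc
      have := hv.1
      omega
    have huB : u ∉ B := by
      intro hc
      have := hB_nd u hc
      have := hu.1
      omega
    have hu'A : u' ∉ A := fun hc => hc.2 rfl
    have hv'B : v' ∉ B := fun hc => hc.2 rfl
    have hu'B : u' ∉ B := by
      intro hc
      have := hB_nd u' hc
      omega
    have hv'A : v' ∉ A := by
      intro hc
      have := hA_nd v' hc
      omega
    have hAB : ∀ x, x ∈ A → x ∈ B → False := by
      intro x hxA hxB
      have h1 := hA_nbr x hxA
      have h2 := hB_nbr x hxB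
      rw [h1] at h2
      exact huv (Set.singleton_eq_singleton_iff.mp h2)
    have hu'u : u' ≠ u := fun hc => T.irrefl (hc ▸ hadj_uu')
    have hv'v : v' ≠ v := fun hc => T.irrefl (hc ▸ hadj_vv')
    -- the non-isolated sets
    set Pu : Set V := ({u} ∪ A)ᶜ with hPudef
    set Pv : Set V := ({v} ∪ B)ᶜ with hPvdef
    have hPu_mem : ∀ x, x ∈ Pu ↔ (x ≠ u ∧ x ∉ A) := by
      intro x
      simp [hPudef, not_or]
    have hPv_mem : ∀ x, x ∈ Pv ↔ (x ≠ v ∧ x ∉ B) := by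
      intro x
      simp [hPvdef, not_or]
    have hvPu : v ∈ Pu := (hPu_mem v).mpr ⟨Ne.symm huv, hvA⟩
    have huPv : u ∈ Pv := (hPv_mem u).mpr ⟨huv, huB⟩
    have hu'Pu : u' ∈ Pu := (hPu_mem u').mpr ⟨hu'u, hu'A⟩
    have hv'Pv : v' ∈ Pv := (hPv_mem v').mpr ⟨hv'v, hv'B⟩
    -- characterization of Pu by non-isolation
    have hPu_char : ∀ x, x ∈ Pu ↔ (x ≠ u ∧ ∃ y, y ≠ u ∧ T.Adj x y) := by
      intro x
      rw [hPu_mem]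
      constructor
      · rintro ⟨hxu, hxA⟩
        refine ⟨hxu, ?_⟩
        obtain ⟨y, hy⟩ := exists_adj hconn hxu
        by_cases hyu : y = u
        · have hxNu : x ∈ T.neighborSet u := by
            rw [hyu] at hy
            exact hy.symm
          have hxu' : x = u' := by
            rw [hNu] at hxNu
            rcases hxNu with h0 | h0
            · exact absurd h0 hxA
            · exact h0
          rw [hxu']
          obtain ⟨a, b, haN, hbN, hab⟩ :=
            (Set.one_lt_ncard_iff (Set.toFinite _)).mp (by omega : 1 < (T.neighborSet u').ncard)
          by_cases hau : a = u
          · refine ⟨b, ?_, hbN⟩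
            rintro rfl
            exact hab (hau.symm ▸ rfl)
          · exact ⟨a, hau, haN⟩
        · exact ⟨y, hyu, hy⟩
      · rintro ⟨hxu, y, hyu, hxy⟩
        refine ⟨hxu, fun hxA => ?_⟩
        have := hA_nbr x hxA
        have hyN : y ∈ T.neighborSet x := hxy
        rw [this, Set.mem_singleton_iff] at hyN
        exact hyu hyN
    have hPv_char : ∀ x, x ∈ Pv ↔ (x ≠ v ∧ ∃ y, y ≠ v ∧ T.Adj x y) := by
      intro x
      rw [hPv_mem]
      constructor
      · rintro ⟨hxv, hxB⟩
        refine ⟨hxv, ?_⟩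
        obtain ⟨y, hy⟩ := exists_adj hconn hxv
        by_cases hyv : y = v
        · have hxNv : x ∈ T.neighborSet v := by
            rw [hyv] at hy
            exact hy.symm
          have hxv' : x = v' := by
            rw [hNv] at hxNv
            rcases hxNv with h0 | h0
            · exact absurd h0 hxB
            · exact h0
          rw [hxv']
          obtain ⟨a, b, haN, hbN, hab⟩ :=
            (Set.one_lt_ncard_iff (Set.toFinite _)).mp (by omega : 1 < (T.neighborSet v').ncard)
          by_cases hav : a = v
          · refine ⟨b, ?_, hbN⟩
            rintro rfl
            exact hab (hav.symm ▸ rfl)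
          · exact ⟨a, hav, haN⟩
        · exact ⟨y, hyv, hy⟩
      · rintro ⟨hxv, y, hyv, hxy⟩
        refine ⟨hxv, fun hxB => ?_⟩
        have h0 := hB_nbr x hxB
        have hyN : y ∈ T.neighborSet x := hxy
        rw [h0, Set.mem_singleton_iff] at hyN
        exact hyv hyN
    -- restriction of the given isomorphism to the non-isolated parts
    have hPusub : Pu ⊆ ({u}ᶜ : Set V) := fun x hx hc => ((hPu_mem x).mp hx).1 hc
    have hPvsub : Pv ⊆ ({v}ᶜ : Set V) := fun x hx hc => ((hPv_mem x).mp hx).1 hc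
    obtain ⟨f0⟩ := h
    have hfwd : ∀ x (hx : x ∈ Pu), ((f0 ⟨x, hPusub hx⟩ : ↥({v}ᶜ : Set V)) : V) ∈ Pv := by
      intro x hx
      obtain ⟨hxu, y, hyu, hxy⟩ := (hPu_char x).mp hx
      have hyc : y ∈ ({u}ᶜ : Set V) := fun hc => hyu hc
      have hadj0 : (T.induce ({u}ᶜ : Set V)).Adj ⟨x, hPusub hx⟩ ⟨y, hyc⟩ := hxy
      have hadj1 := f0.map_rel_iff.mpr hadj0
      rw [hPv_char]
      exact ⟨(f0 ⟨x, hPusub hx⟩).2, ((f0 ⟨y, hyc⟩ : ↥({v}ᶜ : Set V)) : V),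
        (f0 ⟨y, hyc⟩).2, hadj1⟩
    have hbwd : ∀ y (hy : y ∈ Pv), ((f0.symm ⟨y, hPvsub hy⟩ : ↥({u}ᶜ : Set V)) : V) ∈ Pu := by
      intro x hx
      obtain ⟨hxv, y, hyv, hxy⟩ := (hPv_char x).mp hx
      have hyc : y ∈ ({v}ᶜ : Set V) := fun hc => hyv hc
      have hadj0 : (T.induce ({v}ᶜ : Set V)).Adj ⟨x, hPvsub hx⟩ ⟨y, hyc⟩ := hxy
      have hadj1 := f0.symm.map_rel_iff.mpr hadj0
      rw [hPu_char]
      exact ⟨(f0.symm ⟨x, hPvsub hx⟩).2, ((f0.symm ⟨y, hyc⟩ : ↥({u}ᶜ : Set V)) : V),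
        (f0.symm ⟨y, hyc⟩).2, hadj1⟩
    have χ₀ : T.induce Pu ≃g T.induce Pv := isoRestrict f0 hPusub hPvsub hfwd hbwd
    -- cardinalities: |A| = |B|
    have hcardPuPv : Fintype.card ↥Pu = Fintype.card ↥Pv := Fintype.card_congr χ₀.toEquiv
    have hins_u : ({u} ∪ A).ncard = A.ncard + 1 := by
      rw [Set.singleton_union, Set.ncard_insert_of_notMem huA (Set.toFinite _)]
    have hins_v : ({v} ∪ B).ncard = B.ncard + 1 := by
      rw [Set.singleton_union, Set.ncard_insert_of_notMem hvB (Set.toFinite _)]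
    have hcompl_u : ({u} ∪ A).ncard + Pu.ncard = Fintype.card V := by
      rw [hPudef, ← Nat.card_eq_fintype_card]
      exact Set.ncard_add_ncard_compl _
    have hcompl_v : ({v} ∪ B).ncard + Pv.ncard = Fintype.card V := by
      rw [hPvdef, ← Nat.card_eq_fintype_card]
      exact Set.ncard_add_ncard_compl _
    have hPu_ncard : Pu.ncard = Fintype.card ↥Pu := by
      rw [← Nat.card_coe_set_eq, Nat.card_eq_fintype_card]
    have hPv_ncard : Pv.ncard = Fintype.card ↥Pv := by
      rw [← Nat.card_coe_set_eq, Nat.card_eq_fintype_card]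
    have hAB_card : A.ncard = B.ncard := by omega
    have hABequiv : Nonempty (↥A ≃ ↥B) := by
      rw [← Fintype.card_eq, ← Nat.card_eq_fintype_card, ← Nat.card_eq_fintype_card,
        Nat.card_coe_set_eq, Nat.card_coe_set_eq, hAB_card]
    obtain ⟨β⟩ := hABequiv
    -- the basic involution swapping the two pendant stars
    set g1 : V → V := fun x => if x = u then v else if x = v then u
      else if hx : x ∈ A then (β ⟨x, hx⟩ : V) else if hx : x ∈ B then (β.symm ⟨x, hx⟩ : V)
      else x with hg1def
    have hg1u : g1 u = v := by simp [hg1def]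
    have hg1v : g1 v = u := by simp [hg1def, Ne.symm huv]
    have hg1A : ∀ x (hx : x ∈ A), g1 x = (β ⟨x, hx⟩ : V) := by
      intro x hx
      have h1 : x ≠ u := fun hc => huA (hc ▸ hx)
      have h2 : x ≠ v := fun hc => hvA (hc ▸ hx)
      simp [hg1def, h1, h2, hx]
    have hβB : ∀ (z : ↥A), (β z : V) ∈ B := fun z => (β z).2
    have hβA : ∀ (z : ↥B), (β.symm z : V) ∈ A := fun z => (β.symm z).2
    have hg1B : ∀ x (hx : x ∈ B), g1 x = (β.symm ⟨x, hx⟩ : V) := by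
      intro x hx
      have h1 : x ≠ u := fun hc => huB (hc ▸ hx)
      have h2 : x ≠ v := fun hc => hvB (hc ▸ hx)
      have h3 : x ∉ A := fun hc => hAB x hc hx
      simp [hg1def, h1, h2, h3, hx]
    have hg1id : ∀ x, x ≠ u → x ≠ v → x ∉ A → x ∉ B → g1 x = x := by
      intro x h1 h2 h3 h4; simp [hg1def, h1, h2, h3, h4]
    have hg1inv : Function.Involutive g1 := by
      intro x
      by_cases h1 : x = u
      · rw [h1, hg1u, hg1v]
      by_cases h2 : x = v
      · rw [h2, hg1v, hg1u]
      by_cases h3 : x ∈ A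
      · rw [hg1A x h3]
        have hb := hβB ⟨x, h3⟩
        rw [hg1B _ hb]
        have h0 : (⟨(β ⟨x, h3⟩ : V), hb⟩ : ↥B) = β ⟨x, h3⟩ := Subtype.ext rfl
        rw [h0, Equiv.symm_apply_apply]
      by_cases h4 : x ∈ B
      · rw [hg1B x h4]
        have ha := hβA ⟨x, h4⟩
        rw [hg1A _ ha]
        have h0 : (⟨(β.symm ⟨x, h4⟩ : V), ha⟩ : ↥A) = β.symm ⟨x, h4⟩ := Subtype.ext rfl
        rw [h0, Equiv.apply_symm_apply]
      · rw [hg1id x h1 h2 h3 h4, hg1id x h1 h2 h3 h4]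
    by_cases huv_adj : T.Adj u v
    · -- CASE: u and v adjacent (double star)
      have hu'_eq : u' = v := by
        have h0 : v ∈ {w | w ∈ T.neighborSet u ∧ 2 ≤ (T.neighborSet w).ncard} :=
          ⟨huv_adj, hv.1⟩
        rw [hbig_u, Set.mem_singleton_iff] at h0
        exact h0.symm
      have hv'_eq : v' = u := by
        have h0 : u ∈ {w | w ∈ T.neighborSet v ∧ 2 ≤ (T.neighborSet w).ncard} :=
          ⟨huv_adj.symm, hu.1⟩
        rw [hbig_v, Set.mem_singleton_iff] at h0
        exact h0.symm
      have huniv : ∀ z, z ∈ (({u, v} ∪ A) ∪ B : Set V) := by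
        apply mem_of_closed hconn
        · exact ⟨u, Or.inl (Or.inl (Or.inl rfl))⟩
        · rintro x hx y hxy
          rcases hx with (hx | hx) | hx
          · rcases hx with hx | hx
            · rw [hx] at hxy
              have hyN : y ∈ T.neighborSet u := hxy
              rw [hNu] at hyN
              rcases hyN with hy | hy
              · exact Or.inl (Or.inr hy)
              · rw [Set.mem_singleton_iff] at hy
                rw [hy, hu'_eq]
                exact Or.inl (Or.inl (Or.inr rfl))
            · rw [Set.mem_singleton_iff] at hx
              rw [hx] at hxy
              have hyN : y ∈ T.neighborSet v := hxy
              rw [hNv] at hyN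
              rcases hyN with hy | hy
              · exact Or.inr hy
              · rw [Set.mem_singleton_iff] at hy
                rw [hy, hv'_eq]
                exact Or.inl (Or.inl (Or.inl rfl))
          · have hyN : y ∈ T.neighborSet x := hxy
            rw [hA_nbr x hx, Set.mem_singleton_iff] at hyN
            rw [hyN]
            exact Or.inl (Or.inl (Or.inl rfl))
          · have hyN : y ∈ T.neighborSet x := hxy
            rw [hB_nbr x hx, Set.mem_singleton_iff] at hyN
            rw [hyN]
            exact Or.inl (Or.inl (Or.inr rfl))
      have key : ∀ x : V, x = u ∨ x = v ∨ x ∈ A ∨ x ∈ B := by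
        intro x
        rcases huniv x with (hx | hx) | hx
        · rcases hx with hx | hx
          · exact Or.inl hx
          · exact Or.inr (Or.inl (Set.mem_singleton_iff.mp hx))
        · exact Or.inr (Or.inr (Or.inl hx))
        · exact Or.inr (Or.inr (Or.inr hx))
      have hadjg : ∀ x y, T.Adj x y → T.Adj (g1 x) (g1 y) := by
        intro x y hxy
        rcases key x with rfl | h | hxA | hxB
        · have hyN : y ∈ T.neighborSet x := hxy
          rw [hNu] at hyN
          rcases hyN with hyA | hyu'
          · rw [hg1u, hg1A y hyA]
            exact (hβB ⟨y, hyA⟩).1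
          · rw [Set.mem_singleton_iff] at hyu'
            rw [hyu', hu'_eq, hg1u, hg1v]
            exact huv_adj.symm
        · rw [h] at hxy ⊢
          have hyN : y ∈ T.neighborSet v := hxy
          rw [hNv] at hyN
          rcases hyN with hyB | hyv'
          · rw [hg1v, hg1B y hyB]
            exact (hβA ⟨y, hyB⟩).1
          · rw [Set.mem_singleton_iff] at hyv'
            rw [hyv', hv'_eq, hg1v, hg1u]
            exact huv_adj
        · have hyu : y = u := by
            have h0 : y ∈ T.neighborSet x := hxy
            rw [hA_nbr x hxA, Set.mem_singleton_iff] at h0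
            exact h0
          rw [hyu, hg1u, hg1A x hxA]
          exact ((hβB ⟨x, hxA⟩).1 : T.Adj v _).symm
        · have hyv : y = v := by
            have h0 : y ∈ T.neighborSet x := hxy
            rw [hB_nbr x hxB, Set.mem_singleton_iff] at h0
            exact h0
          rw [hyv, hg1v, hg1B x hxB]
          exact ((hβA ⟨x, hxB⟩).1 : T.Adj u _).symm
      refine ⟨isoOfMapAdj T hg1inv.toPerm (fun x y hxy => hadjg x y hxy), ?_⟩
      show g1 u = v
      exact hg1u
    -- CASE: u and v are not adjacent
    have hu'v : u' ≠ v := fun hc => huv_adj (hc ▸ hadj_uu')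
    have hv'u : v' ≠ u := fun hc => huv_adj ((hc ▸ hadj_vv') : T.Adj v u).symm
    have hbig_u'' : ∀ x, T.Adj u x → 2 ≤ (T.neighborSet x).ncard → x = u' := by
      intro x h1 h2
      have h0 : x ∈ {w | w ∈ T.neighborSet u ∧ 2 ≤ (T.neighborSet w).ncard} := ⟨h1, h2⟩
      rw [hbig_u, Set.mem_singleton_iff] at h0
      exact h0
    have hbig_v'' : ∀ x, T.Adj v x → 2 ≤ (T.neighborSet x).ncard → x = v' := by
      intro x h1 h2
      have h0 : x ∈ {w | w ∈ T.neighborSet v ∧ 2 ≤ (T.neighborSet w).ncard} := ⟨h1, h2⟩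
      rw [hbig_v, Set.mem_singleton_iff] at h0
      exact h0
    have hg1u' : g1 u' = u' := hg1id u' hu'u hu'v hu'A hu'B
    have hg1v' : g1 v' = v' := hg1id v' hv'u hv'v hv'A hv'B
    have hnotadj_A : ∀ x ∈ A, ∀ y, y ≠ u → ¬ T.Adj x y := by
      intro x hx y hyu hadj
      have h0 : y ∈ T.neighborSet x := hadj
      rw [hA_nbr x hx, Set.mem_singleton_iff] at h0
      exact hyu h0
    have hnotadj_B : ∀ x ∈ B, ∀ y, y ≠ v → ¬ T.Adj x y := by
      intro x hx y hyv hadj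
      have h0 : y ∈ T.neighborSet x := hadj
      rw [hB_nbr x hx, Set.mem_singleton_iff] at h0
      exact hyv h0
    by_cases hsmall : u' = v' ∧ (T.neighborSet u').ncard = 2
    · -- CASE: the small spider
      obtain ⟨heqc, hnd2⟩ := hsmall
      have hNu' : T.neighborSet u' = {u, v} := by
        apply (Set.eq_of_subset_of_ncard_le ?_ ?_ (Set.toFinite _)).symm
        · intro z hz
          rcases hz with hz | hz
          · rw [hz]; exact hadj_uu'.symm
          · rw [Set.mem_singleton_iff] at hz
            rw [hz]
            exact ((heqc ▸ hadj_vv') : T.Adj v u').symm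
        · rw [hnd2, Set.ncard_pair huv]
      have key : ∀ x : V, x = u ∨ x = v ∨ x ∈ A ∨ x ∈ B ∨ x = u' := by
        have huniv : ∀ z, z ∈ ((({u, v} ∪ A) ∪ B) ∪ {u'} : Set V) := by
          apply mem_of_closed hconn
          · exact ⟨u, Or.inl (Or.inl (Or.inl (Or.inl rfl)))⟩
          · rintro x hx y hxy
            rcases hx with ((hx | hx) | hx) | hx
            · rcases hx with hx | hx
              · rw [hx] at hxy
                have hyN : y ∈ T.neighborSet u := hxy
                rw [hNu] at hyN
                rcases hyN with hy | hy
                · exact Or.inl (Or.inl (Or.inr hy))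
                · exact Or.inr hy
              · rw [Set.mem_singleton_iff] at hx
                rw [hx] at hxy
                have hyN : y ∈ T.neighborSet v := hxy
                rw [hNv] at hyN
                rcases hyN with hy | hy
                · exact Or.inl (Or.inr hy)
                · rw [Set.mem_singleton_iff] at hy
                  rw [hy, ← heqc]
                  exact Or.inr rfl
            · have hyN : y ∈ T.neighborSet x := hxy
              rw [hA_nbr x hx, Set.mem_singleton_iff] at hyN
              rw [hyN]
              exact Or.inl (Or.inl (Or.inl (Or.inl rfl)))
            · have hyN : y ∈ T.neighborSet x := hxy
              rw [hB_nbr x hx, Set.mem_singleton_iff] at hyN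
              rw [hyN]
              exact Or.inl (Or.inl (Or.inl (Or.inr rfl)))
            · rw [Set.mem_singleton_iff] at hx
              rw [hx] at hxy
              have hyN : y ∈ T.neighborSet u' := hxy
              rw [hNu'] at hyN
              rcases hyN with hy | hy
              · rw [hy]
                exact Or.inl (Or.inl (Or.inl (Or.inl rfl)))
              · rw [Set.mem_singleton_iff] at hy
                rw [hy]
                exact Or.inl (Or.inl (Or.inl (Or.inr rfl)))
        intro x
        rcases huniv x with ((hx | hx) | hx) | hx
        · rcases hx with hx | hx
          · exact Or.inl hx
          · exact Or.inr (Or.inl (Set.mem_singleton_iff.mp hx))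
        · exact Or.inr (Or.inr (Or.inl hx))
        · exact Or.inr (Or.inr (Or.inr (Or.inl hx)))
        · exact Or.inr (Or.inr (Or.inr (Or.inr (Set.mem_singleton_iff.mp hx))))
      have hadjg : ∀ x y, T.Adj x y → T.Adj (g1 x) (g1 y) := by
        intro x y hxy
        rcases key x with rfl | h | hxA | hxB | h
        · have hyN : y ∈ T.neighborSet x := hxy
          rw [hNu] at hyN
          rcases hyN with hyA | hyu'
          · rw [hg1u, hg1A y hyA]
            exact (hβB ⟨y, hyA⟩).1
          · rw [Set.mem_singleton_iff] at hyu'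
            rw [hyu', hg1u, hg1u']
            exact (heqc ▸ hadj_vv' : T.Adj v u')
        · rw [h] at hxy ⊢
          have hyN : y ∈ T.neighborSet v := hxy
          rw [hNv] at hyN
          rcases hyN with hyB | hyv'
          · rw [hg1v, hg1B y hyB]
            exact (hβA ⟨y, hyB⟩).1
          · rw [Set.mem_singleton_iff] at hyv'
            rw [hyv', ← heqc, hg1v, hg1u']
            exact hadj_uu'
        · have hyu : y = u := by
            have h0 : y ∈ T.neighborSet x := hxy
            rw [hA_nbr x hxA, Set.mem_singleton_iff] at h0
            exact h0
          rw [hyu, hg1u, hg1A x hxA]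
          exact ((hβB ⟨x, hxA⟩).1 : T.Adj v _).symm
        · have hyv : y = v := by
            have h0 : y ∈ T.neighborSet x := hxy
            rw [hB_nbr x hxB, Set.mem_singleton_iff] at h0
            exact h0
          rw [hyv, hg1v, hg1B x hxB]
          exact ((hβA ⟨x, hxB⟩).1 : T.Adj u _).symm
        · rw [h] at hxy ⊢
          have hyN : y ∈ T.neighborSet u' := hxy
          rw [hNu'] at hyN
          rw [hg1u']
          rcases hyN with hy | hy
          · rw [hy, hg1u]
            exact (heqc ▸ hadj_vv' : T.Adj v u').symm
          · rw [Set.mem_singleton_iff] at hy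
            rw [hy, hg1v]
            exact hadj_uu'.symm
      refine ⟨isoOfMapAdj T hg1inv.toPerm (fun x y hxy => hadjg x y hxy), ?_⟩
      show g1 u = v
      exact hg1u
    -- CASE: the general machinery
    have hkey : u' ≠ v' ∨ 3 ≤ (T.neighborSet u').ncard := by
      by_cases hc : u' = v'
      · right
        have : (T.neighborSet u').ncard ≠ 2 := fun h2 => hsmall ⟨hc, h2⟩
        omega
      · exact Or.inl hc
    clear hsmall
    set Sset : Set V := (({u} ∪ A) ∪ ({v} ∪ B))ᶜ with hSdef
    have hSset_mem : ∀ x, x ∈ Sset ↔ (x ≠ u ∧ x ∉ A ∧ x ≠ v ∧ x ∉ B) := by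
      intro x
      simp only [hSdef, Set.mem_compl_iff, Set.mem_union, Set.mem_singleton_iff, not_or]
      tauto
    have hu'S : u' ∈ Sset := (hSset_mem u').mpr ⟨hu'u, hu'A, hu'v, hu'B⟩
    have hv'S : v' ∈ Sset := (hSset_mem v').mpr ⟨hv'u, hv'A, hv'v, hv'B⟩
    have hv'Pu : v' ∈ Pu := (hPu_mem v').mpr ⟨hv'u, hv'A⟩
    have hu'Pv : u' ∈ Pv := (hPv_mem u').mpr ⟨hu'v, hu'B⟩
    have hSsubPu : Sset ⊆ Pu := by
      intro x hx
      obtain ⟨h1, h2, h3, h4⟩ := (hSset_mem x).mp hx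
      exact (hPu_mem x).mpr ⟨h1, h2⟩
    have hSsubPv : Sset ⊆ Pv := by
      intro x hx
      obtain ⟨h1, h2, h3, h4⟩ := (hSset_mem x).mp hx
      exact (hPv_mem x).mpr ⟨h3, h4⟩
    -- the three trees
    have hlowA : ∀ a ∈ A, (T.neighborSet a).ncard ≤ 1 := fun a ha => le_of_eq (hA_nd a ha)
    have hlowB : ∀ b ∈ B, (T.neighborSet b).ncard ≤ 1 := fun b hb => le_of_eq (hB_nd b hb)
    have hT' : (T.induce Pu).IsTree := by
      have h0 := isTree_induce_compl (Dlow := A) (Dctr := {u}) hT hlowA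
        (by
          intro c hc
          rw [Set.mem_singleton_iff] at hc
          rw [hc]
          exact ⟨u', by rw [hNu]⟩)
        (by
          refine ⟨v, ?_⟩
          rintro (hc | hc)
          · exact hvA hc
          · exact huv (Set.mem_singleton_iff.mp hc).symm)
      have hseteq : ((A ∪ {u})ᶜ : Set V) = Pu := by rw [hPudef, Set.union_comm]
      rwa [hseteq] at h0
    have hT'' : (T.induce Pv).IsTree := by
      have h0 := isTree_induce_compl (Dlow := B) (Dctr := {v}) hT hlowB
        (by
          intro c hc
          rw [Set.mem_singleton_iff] at hc
          rw [hc]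
          exact ⟨v', by rw [hNv]⟩)
        (by
          refine ⟨u, ?_⟩
          rintro (hc | hc)
          · exact huB hc
          · exact huv (Set.mem_singleton_iff.mp hc))
      have hseteq : ((B ∪ {v})ᶜ : Set V) = Pv := by rw [hPvdef, Set.union_comm]
      rwa [hseteq] at h0
    have hS : (T.induce Sset).IsTree := by
      have h0 := isTree_induce_compl (Dlow := A ∪ B) (Dctr := {u, v}) hT
        (by
          rintro a (ha | ha)
          · exact hlowA a ha
          · exact hlowB a ha)
        (by
          rintro c (hc | hc)
          · rw [hc]
            refine ⟨u', ?_⟩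
            rw [hNu]
            intro z hz
            rcases hz with hz | hz
            · exact Or.inl (Or.inl hz)
            · exact Or.inr hz
          · rw [Set.mem_singleton_iff] at hc
            rw [hc]
            refine ⟨v', ?_⟩
            rw [hNv]
            intro z hz
            rcases hz with hz | hz
            · exact Or.inl (Or.inr hz)
            · exact Or.inr hz)
        (by
          refine ⟨u', ?_⟩
          rintro ((hc | hc) | hc)
          · exact hu'A hc
          · exact hu'B hc
          · rcases hc with hc | hc
            · exact hu'u hc
            · exact hu'v (Set.mem_singleton_iff.mp hc))
      have hseteq : (((A ∪ B) ∪ {u, v})ᶜ : Set V) = Sset := by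
        rw [hSdef]
        ext x
        simp only [Set.mem_compl_iff, Set.mem_union, Set.mem_singleton_iff,
          Set.mem_insert_iff, not_or]
        tauto
      rwa [hseteq] at h0
    -- degree computations in the induced trees
    have hnd'_B : ∀ (b : V) (hb : b ∈ B) (hbPu : b ∈ Pu),
        ((T.induce Pu).neighborSet ⟨b, hbPu⟩).ncard = 1 := by
      intro b hb hbPu
      rw [induce_neighborSet_ncard, hB_nbr b hb,
        Set.inter_eq_self_of_subset_left (Set.singleton_subset_iff.mpr hvPu),
        Set.ncard_singleton]
    have hnd''_A : ∀ (a : V) (ha : a ∈ A) (haPv : a ∈ Pv),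
        ((T.induce Pv).neighborSet ⟨a, haPv⟩).ncard = 1 := by
      intro a ha haPv
      rw [induce_neighborSet_ncard, hA_nbr a ha,
        Set.inter_eq_self_of_subset_left (Set.singleton_subset_iff.mpr huPv),
        Set.ncard_singleton]
    have hNvPu : T.neighborSet v ∩ Pu = T.neighborSet v := by
      apply Set.inter_eq_self_of_subset_left
      intro y hy
      refine (hPu_mem y).mpr ⟨?_, ?_⟩
      · intro hc
        rw [hc] at hy
        exact huv_adj (hy : T.Adj v u).symm
      · intro hyA
        exact hnotadj_A y hyA v (Ne.symm huv) (hy : T.Adj v y).symm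
    have hNuPv : T.neighborSet u ∩ Pv = T.neighborSet u := by
      apply Set.inter_eq_self_of_subset_left
      intro y hy
      refine (hPv_mem y).mpr ⟨?_, ?_⟩
      · intro hc
        rw [hc] at hy
        exact huv_adj (hy : T.Adj u v)
      · intro hyB
        exact hnotadj_B y hyB u huv (hy : T.Adj u y).symm
    have hnd'_v : ((T.induce Pu).neighborSet ⟨v, hvPu⟩).ncard = (T.neighborSet v).ncard := by
      rw [induce_neighborSet_ncard, hNvPu]
    have hnd''_u : ((T.induce Pv).neighborSet ⟨u, huPv⟩).ncard = (T.neighborSet u).ncard := by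
      rw [induce_neighborSet_ncard, hNuPv]
    have hdiffu : T.neighborSet v' ∩ Pu = T.neighborSet v' \ {u} := by
      rw [hPudef]
      rw [show (T.neighborSet v' ∩ ({u} ∪ A)ᶜ) = T.neighborSet v' \ ({u} ∪ A) from
        (Set.diff_eq _ _).symm]
      ext z
      simp only [Set.mem_diff, Set.mem_union, Set.mem_singleton_iff, not_or]
      constructor
      · rintro ⟨h1, h2, h3⟩
        exact ⟨h1, h2⟩
      · rintro ⟨h1, h2⟩
        refine ⟨h1, h2, ?_⟩
        intro hzA
        exact hv'u (Set.mem_singleton_iff.mp ((hA_nbr z hzA) ▸ (h1 : T.Adj v' z).symm :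
          v' ∈ ({u} : Set V)))
    have hdiffv : T.neighborSet u' ∩ Pv = T.neighborSet u' \ {v} := by
      rw [hPvdef]
      rw [show (T.neighborSet u' ∩ ({v} ∪ B)ᶜ) = T.neighborSet u' \ ({v} ∪ B) from
        (Set.diff_eq _ _).symm]
      ext z
      simp only [Set.mem_diff, Set.mem_union, Set.mem_singleton_iff, not_or]
      constructor
      · rintro ⟨h1, h2, h3⟩
        exact ⟨h1, h2⟩
      · rintro ⟨h1, h2⟩
        refine ⟨h1, h2, ?_⟩
        intro hzB
        exact hu'v (Set.mem_singleton_iff.mp ((hB_nbr z hzB) ▸ (h1 : T.Adj u' z).symm :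
          u' ∈ ({v} : Set V)))
    have hnd'_v' : 2 ≤ ((T.induce Pu).neighborSet ⟨v', hv'Pu⟩).ncard := by
      rw [induce_neighborSet_ncard, hdiffu]
      by_cases hmem : u ∈ T.neighborSet v'
      · have hveq : v' = u' := hbig_u'' v' (hmem : T.Adj v' u).symm hnd_v'
        have h3 : 3 ≤ (T.neighborSet v').ncard := by
          rcases hkey with hk | hk
          · exact absurd hveq.symm hk
          · rw [hveq]; exact hk
        rw [Set.ncard_diff_singleton_of_mem hmem]
        omega
      · rw [Set.diff_singleton_eq_self hmem]
        exact hnd_v'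
    have hnd''_u' : 2 ≤ ((T.induce Pv).neighborSet ⟨u', hu'Pv⟩).ncard := by
      rw [induce_neighborSet_ncard, hdiffv]
      by_cases hmem : v ∈ T.neighborSet u'
      · have hveq : u' = v' := hbig_v'' u' (hmem : T.Adj u' v).symm hnd_u'
        have h3 : 3 ≤ (T.neighborSet u').ncard := by
          rcases hkey with hk | hk
          · exact absurd hveq hk
          · exact hk
        rw [Set.ncard_diff_singleton_of_mem hmem]
        omega
      · rw [Set.diff_singleton_eq_self hmem]
        exact hnd_u'
    have hbig'set : {w : ↥Pu | w ∈ (T.induce Pu).neighborSet ⟨v, hvPu⟩ ∧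
        2 ≤ ((T.induce Pu).neighborSet w).ncard} = {⟨v', hv'Pu⟩} := by
      ext w
      simp only [Set.mem_setOf_eq, Set.mem_singleton_iff]
      constructor
      · rintro ⟨hw1, hw2⟩
        have hwN : (w : V) ∈ T.neighborSet v := hw1
        rw [hNv] at hwN
        rcases hwN with hwB | hwv'
        · have h0 := hnd'_B w.1 hwB w.2
          rw [Subtype.coe_eta] at h0
          omega
        · exact Subtype.ext (Set.mem_singleton_iff.mp hwv')
      · rintro rfl
        exact ⟨(hadj_vv' : T.Adj v v'), hnd'_v'⟩
    have hbig''set : {w : ↥Pv | w ∈ (T.induce Pv).neighborSet ⟨u, huPv⟩ ∧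
        2 ≤ ((T.induce Pv).neighborSet w).ncard} = {⟨u', hu'Pv⟩} := by
      ext w
      simp only [Set.mem_setOf_eq, Set.mem_singleton_iff]
      constructor
      · rintro ⟨hw1, hw2⟩
        have hwN : (w : V) ∈ T.neighborSet u := hw1
        rw [hNu] at hwN
        rcases hwN with hwA | hwu'
        · have h0 := hnd''_A w.1 hwA w.2
          rw [Subtype.coe_eta] at h0
          omega
        · exact Subtype.ext (Set.mem_singleton_iff.mp hwu')
      · rintro rfl
        exact ⟨(hadj_uu' : T.Adj u u'), hnd''_u'⟩
    have hecv' : IsEndCutvertex (T.induce Pu) ⟨v, hvPu⟩ := by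
      constructor
      · rw [hnd'_v]; exact hv.1
      · rw [hbig'set]; exact Set.ncard_singleton _
    have hecv'' : IsEndCutvertex (T.induce Pv) ⟨u, huPv⟩ := by
      constructor
      · rw [hnd''_u]; exact hu.1
      · rw [hbig''set]; exact Set.ncard_singleton _
    -- the swap of the two pendant stars as an isomorphism between deleted graphs
    set Qv : Set V := Pv \ {u} with hQvdef
    set Qu : Set V := Pu \ {v} with hQudef
    have hQv_mem : ∀ x, x ∈ Qv ↔ x ∈ Pv ∧ x ≠ u := by
      intro x
      simp [hQvdef]
    have hQu_mem : ∀ x, x ∈ Qu ↔ x ∈ Pu ∧ x ≠ v := by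
      intro x
      simp [hQudef]
    set gAB : V → V := fun x => if hx : x ∈ A then (β ⟨x, hx⟩ : V)
      else if hx : x ∈ B then (β.symm ⟨x, hx⟩ : V) else x with hgABdef
    have hgAB_A : ∀ x (hx : x ∈ A), gAB x = (β ⟨x, hx⟩ : V) := by
      intro x hx; simp [hgABdef, hx]
    have hgAB_B : ∀ x (hx : x ∈ B), gAB x = (β.symm ⟨x, hx⟩ : V) := by
      intro x hx
      have h3 : x ∉ A := fun hc => hAB x hc hx
      simp [hgABdef, h3, hx]
    have hgAB_id : ∀ x, x ∉ A → x ∉ B → gAB x = x := by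
      intro x h3 h4; simp [hgABdef, h3, h4]
    have hgAB_inv : Function.Involutive gAB := by
      intro x
      by_cases h3 : x ∈ A
      · rw [hgAB_A x h3]
        have hb := hβB ⟨x, h3⟩
        rw [hgAB_B _ hb]
        have h0 : (⟨(β ⟨x, h3⟩ : V), hb⟩ : ↥B) = β ⟨x, h3⟩ := Subtype.ext rfl
        rw [h0, Equiv.symm_apply_apply]
      by_cases h4 : x ∈ B
      · rw [hgAB_B x h4]
        have ha := hβA ⟨x, h4⟩
        rw [hgAB_A _ ha]
        have h0 : (⟨(β.symm ⟨x, h4⟩ : V), ha⟩ : ↥A) = β.symm ⟨x, h4⟩ := Subtype.ext rfl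
        rw [h0, Equiv.apply_symm_apply]
      · rw [hgAB_id x h3 h4, hgAB_id x h3 h4]
    have hgAB_Qv : ∀ x, x ∈ Qv → gAB x ∈ Qu := by
      intro x hx
      obtain ⟨hxPv, hxu⟩ := (hQv_mem x).mp hx
      by_cases h3 : x ∈ A
      · rw [hgAB_A x h3]
        have hb := hβB ⟨x, h3⟩
        refine (hQu_mem _).mpr ⟨(hPu_mem _).mpr ⟨fun hc => huB (hc ▸ hb),
          fun hc => hAB _ hc hb⟩, fun hc => hvB (hc ▸ hb)⟩
      · have h4 : x ∉ B := ((hPv_mem x).mp hxPv).2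
        rw [hgAB_id x h3 h4]
        exact (hQu_mem x).mpr ⟨(hPu_mem x).mpr ⟨hxu, h3⟩, ((hPv_mem x).mp hxPv).1⟩
    have hgAB_Qu : ∀ x, x ∈ Qu → gAB x ∈ Qv := by
      intro x hx
      obtain ⟨hxPu, hxv⟩ := (hQu_mem x).mp hx
      by_cases h4 : x ∈ B
      · rw [hgAB_B x h4]
        have ha := hβA ⟨x, h4⟩
        refine (hQv_mem _).mpr ⟨(hPv_mem _).mpr ⟨fun hc => hvA (hc ▸ ha),
          fun hc => hAB _ ha hc⟩, fun hc => huA (hc ▸ ha)⟩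
      · have h3 : x ∉ A := ((hPu_mem x).mp hxPu).2
        rw [hgAB_id x h3 h4]
        exact (hQv_mem x).mpr ⟨(hPv_mem x).mpr ⟨hxv, h4⟩, ((hPu_mem x).mp hxPu).1⟩
    have J : T.induce Qv ≃g T.induce Qu := by
      refine ⟨⟨fun x => ⟨gAB x.1, hgAB_Qv x.1 x.2⟩, fun y => ⟨gAB y.1, hgAB_Qu y.1 y.2⟩,
        fun x => Subtype.ext (hgAB_inv x.1), fun y => Subtype.ext (hgAB_inv y.1)⟩, ?_⟩
      intro x y
      show T.Adj (gAB x.1) (gAB y.1) ↔ T.Adj x.1 y.1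
      obtain ⟨hxPv, hxu⟩ := (hQv_mem x.1).mp x.2
      obtain ⟨hyPv, hyu⟩ := (hQv_mem y.1).mp y.2
      have hxB : x.1 ∉ B := ((hPv_mem x.1).mp hxPv).2
      have hyB : y.1 ∉ B := ((hPv_mem y.1).mp hyPv).2
      by_cases hx3 : x.1 ∈ A
      · constructor
        · intro hc
          exfalso
          rw [hgAB_A x.1 hx3] at hc
          have hQy := (hQu_mem _).mp (hgAB_Qv y.1 y.2)
          exact hnotadj_B _ (hβB ⟨x.1, hx3⟩) _ hQy.2 hc
        · intro hc
          exact absurd hc (hnotadj_A x.1 hx3 y.1 hyu)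
      · by_cases hy3 : y.1 ∈ A
        · constructor
          · intro hc
            exfalso
            rw [hgAB_A y.1 hy3, hgAB_id x.1 hx3 hxB] at hc
            exact hnotadj_B _ (hβB ⟨y.1, hy3⟩) _ ((hPv_mem x.1).mp hxPv).1 hc.symm
          · intro hc
            exact absurd hc.symm (hnotadj_A y.1 hy3 x.1 hxu)
        · rw [hgAB_id x.1 hx3 hxB, hgAB_id y.1 hy3 hyB]
    -- the chain of isomorphisms for the induction hypothesis
    have hviq : Subtype.val '' ({(⟨u, huPv⟩ : ↥Pv)}ᶜ : Set ↥Pv) = Qv := by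
      rw [val_image_compl_singleton]
    have hviq' : Subtype.val '' ({(⟨v, hvPu⟩ : ↥Pu)}ᶜ : Set ↥Pu) = Qu := by
      rw [val_image_compl_singleton]
    have hchain : Nonempty ((T.induce Pv).induce ({χ₀ ⟨v, hvPu⟩}ᶜ) ≃g
        (T.induce Pv).induce ({(⟨u, huPv⟩ : ↥Pv)}ᶜ)) := by
      refine ⟨RelIso.symm ?_⟩
      exact ((((induceInduce T Pv _).trans (induceSetCongr T hviq)).trans J).trans
        (((induceSetCongr T hviq'.symm).trans (induceInduce T Pu _).symm).trans
          (isoDelete χ₀ ⟨v, hvPu⟩)))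
    have hcardPv : Fintype.card ↥Pv ≤ k := by
      have hnr : v ∉ Set.range (Subtype.val : ↥Pv → V) := by
        rw [Subtype.range_coe]
        exact fun hc => ((hPv_mem v).mp hc).1 rfl
      have hlt := Fintype.card_lt_of_injective_of_notMem
        (Subtype.val : ↥Pv → V) Subtype.val_injective hnr
      omega
    obtain ⟨ρ, hρ⟩ := ih ↥Pv _ (T.induce Pv) hcardPv hT'' (χ₀ ⟨v, hvPu⟩) ⟨u, huPv⟩
      (isEndCutvertex_map χ₀ hecv') hecv'' hchain
    set χ : T.induce Pu ≃g T.induce Pv := χ₀.trans ρ with hχdef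
    have hχv : χ ⟨v, hvPu⟩ = ⟨u, huPv⟩ := hρ
    have hχv' : χ ⟨v', hv'Pu⟩ = ⟨u', hu'Pv⟩ := by
      have hadj1 : (T.induce Pu).Adj ⟨v, hvPu⟩ ⟨v', hv'Pu⟩ := hadj_vv'
      have hadj2 := χ.map_rel_iff.mpr hadj1
      rw [hχv] at hadj2
      have hnd2 : 2 ≤ ((T.induce Pv).neighborSet (χ ⟨v', hv'Pu⟩)).ncard := by
        rw [nd_map χ ⟨v', hv'Pu⟩]
        exact hnd'_v'
      have hmem : χ ⟨v', hv'Pu⟩ ∈ {w : ↥Pv | w ∈ (T.induce Pv).neighborSet ⟨u, huPv⟩ ∧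
          2 ≤ ((T.induce Pv).neighborSet w).ncard} := ⟨hadj2, hnd2⟩
      rw [hbig''set, Set.mem_singleton_iff] at hmem
      exact hmem
    -- restrict χ to an automorphism of the inner tree
    have hfwdS : ∀ x (hx : x ∈ Sset), ((χ ⟨x, hSsubPu hx⟩ : ↥Pv) : V) ∈ Sset := by
      intro x hx
      obtain ⟨hx1, hx2, hx3, hx4⟩ := (hSset_mem x).mp hx
      have hzPv : ((χ ⟨x, hSsubPu hx⟩ : ↥Pv) : V) ∈ Pv := (χ ⟨x, hSsubPu hx⟩).2
      rw [hSset_mem]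
      refine ⟨?_, ?_, ((hPv_mem _).mp hzPv).1, ((hPv_mem _).mp hzPv).2⟩
      · intro hzu
        have h0 : χ ⟨x, hSsubPu hx⟩ = ⟨u, huPv⟩ := Subtype.ext hzu
        rw [← hχv] at h0
        exact hx3 (congrArg Subtype.val (χ.injective h0))
      · intro hzA
        have hadjz : (T.induce Pv).Adj ⟨u, huPv⟩ (χ ⟨x, hSsubPu hx⟩) := (hzA.1 : T.Adj u _)
        rw [← hχv] at hadjz
        have hadjvx := χ.map_rel_iff.mp hadjz
        have hxNv : x ∈ T.neighborSet v := hadjvx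
        rw [hNv] at hxNv
        rcases hxNv with hxB | hxv'
        · exact hx4 hxB
        · rw [Set.mem_singleton_iff] at hxv'
          have h0 : (⟨x, hSsubPu hx⟩ : ↥Pu) = ⟨v', hv'Pu⟩ := Subtype.ext hxv'
          rw [h0, hχv'] at hzA
          exact hu'A hzA
    have hbwdS : ∀ y (hy : y ∈ Sset), ((χ.symm ⟨y, hSsubPv hy⟩ : ↥Pu) : V) ∈ Sset := by
      intro y hy
      obtain ⟨hy1, hy2, hy3, hy4⟩ := (hSset_mem y).mp hy
      have hzPu : ((χ.symm ⟨y, hSsubPv hy⟩ : ↥Pu) : V) ∈ Pu := (χ.symm ⟨y, hSsubPv hy⟩).2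
      rw [hSset_mem]
      refine ⟨((hPu_mem _).mp hzPu).1, ((hPu_mem _).mp hzPu).2, ?_, ?_⟩
      · intro hzv
        have h0 : χ.symm ⟨y, hSsubPv hy⟩ = ⟨v, hvPu⟩ := Subtype.ext hzv
        have h1 : (⟨y, hSsubPv hy⟩ : ↥Pv) = χ ⟨v, hvPu⟩ := by
          rw [← h0]
          simp
        rw [hχv] at h1
        exact hy1 (congrArg Subtype.val h1)
      · intro hzB
        have hadjz : (T.induce Pu).Adj ⟨v, hvPu⟩ (χ.symm ⟨y, hSsubPv hy⟩) :=
          (hzB.1 : T.Adj v _)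
        have h2 := χ.map_rel_iff.mpr hadjz
        rw [hχv] at h2
        have h3 : (T.induce Pv).Adj ⟨u, huPv⟩ ⟨y, hSsubPv hy⟩ := by
          have h4 : χ (χ.symm ⟨y, hSsubPv hy⟩) = ⟨y, hSsubPv hy⟩ := by simp
          rwa [h4] at h2
        have hyNu : y ∈ T.neighborSet u := h3
        rw [hNu] at hyNu
        rcases hyNu with hyA | hyu'
        · exact hy2 hyA
        · rw [Set.mem_singleton_iff] at hyu'
          have h4 : (⟨y, hSsubPv hy⟩ : ↥Pv) = ⟨u', hu'Pv⟩ := Subtype.ext hyu'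
          have h5 : χ.symm ⟨y, hSsubPv hy⟩ = ⟨v', hv'Pu⟩ := by
            rw [h4, ← hχv']
            simp
          rw [h5] at hzB
          exact hv'B hzB
    set σ₀ : T.induce Sset ≃g T.induce Sset := isoRestrict χ hSsubPu hSsubPv hfwdS hbwdS
      with hσ₀def
    have hσ₀v' : σ₀ ⟨v', hv'S⟩ = ⟨u', hu'S⟩ := by
      apply Subtype.ext
      rw [hσ₀def]
      show ((χ ⟨v', hSsubPu hv'S⟩ : ↥Pv) : V) = u'
      have h0 : (⟨v', hSsubPu hv'S⟩ : ↥Pu) = ⟨v', hv'Pu⟩ := rfl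
      rw [h0, hχv']
    obtain ⟨τ₀, -, hτ₀1, hτ₀2⟩ := swap_similar (Fintype.card ↥Sset) ↥Sset _ (T.induce Sset)
      le_rfl hS Unit (fun _ => ()) σ₀ (fun _ => rfl) ⟨v', hv'S⟩
    rw [hσ₀v'] at hτ₀1 hτ₀2
    -- assemble the final automorphism
    set π : V → V := fun x => if hx : x ∈ Sset then ((τ₀ ⟨x, hx⟩ : ↥Sset) : V) else g1 x
      with hπdef
    have hπS : ∀ x (hx : x ∈ Sset), π x = ((τ₀ ⟨x, hx⟩ : ↥Sset) : V) := by
      intro x hx; simp [hπdef, hx]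
    have hπnonS : ∀ x, x ∉ Sset → π x = g1 x := by
      intro x hx; simp [hπdef, hx]
    have huS : u ∉ Sset := fun hc => ((hSset_mem u).mp hc).1 rfl
    have hvS : v ∉ Sset := fun hc => ((hSset_mem v).mp hc).2.2.1 rfl
    have hπu : π u = v := by rw [hπnonS u huS, hg1u]
    have hπv : π v = u := by rw [hπnonS v hvS, hg1v]
    have hπA : ∀ x (hx : x ∈ A), π x = (β ⟨x, hx⟩ : V) := by
      intro x hx
      have h0 : x ∉ Sset := fun hc => ((hSset_mem x).mp hc).2.1 hx
      rw [hπnonS x h0, hg1A x hx]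
    have hπB : ∀ x (hx : x ∈ B), π x = (β.symm ⟨x, hx⟩ : V) := by
      intro x hx
      have h0 : x ∉ Sset := fun hc => ((hSset_mem x).mp hc).2.2.2 hx
      rw [hπnonS x h0, hg1B x hx]
    have hπu' : π u' = v' := by
      rw [hπS u' hu'S, hτ₀2]
    have hπv' : π v' = u' := by
      rw [hπS v' hv'S, hτ₀1]
    have hpart : ∀ x : V, x ∉ Sset → (x = u ∨ x = v ∨ x ∈ A ∨ x ∈ B) := by
      intro x hx
      by_contra hcon
      push_neg at hcon
      exact hx ((hSset_mem x).mpr ⟨hcon.1, hcon.2.2.1, hcon.2.1, hcon.2.2.2⟩)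
    have hg1nonS : ∀ y, y ∉ Sset → g1 y ∉ Sset := by
      intro y hy
      rcases hpart y hy with rfl | h | h | h
      · rw [hg1u]; exact hvS
      · rw [h, hg1v]; exact huS
      · rw [hg1A y h]; exact fun hc => ((hSset_mem _).mp hc).2.2.2 (hβB ⟨y, h⟩)
      · rw [hg1B y h]; exact fun hc => ((hSset_mem _).mp hc).2.1 (hβA ⟨y, h⟩)
    have hπinj : Function.Injective π := by
      intro x y hxy
      by_cases hx : x ∈ Sset <;> by_cases hy : y ∈ Sset
      · rw [hπS x hx, hπS y hy] at hxy
        exact congrArg Subtype.val (τ₀.injective (Subtype.ext hxy))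
      · exfalso
        have h1 : π x ∈ Sset := by rw [hπS x hx]; exact (τ₀ ⟨x, hx⟩).2
        have h2 : π y ∉ Sset := by rw [hπnonS y hy]; exact hg1nonS y hy
        rw [hxy] at h1
        exact h2 h1
      · exfalso
        have h1 : π y ∈ Sset := by rw [hπS y hy]; exact (τ₀ ⟨y, hy⟩).2
        have h2 : π x ∉ Sset := by rw [hπnonS x hx]; exact hg1nonS x hx
        rw [← hxy] at h1
        exact h2 h1
      · rw [hπnonS x hx, hπnonS y hy] at hxy
        exact hg1inv.injective hxy
    have hπbij := Finite.injective_iff_bijective.mp hπinj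
    have hadjπ : ∀ x y, T.Adj x y → T.Adj (π x) (π y) := by
      have keyS : ∀ x y, x ∈ Sset → y ∉ Sset → T.Adj x y → T.Adj (π x) (π y) := by
        intro x y hxS hyS hxy
        rcases hpart y hyS with rfl | h | h | h
        · have hxNu : x ∈ T.neighborSet y := hxy.symm
          rw [hNu] at hxNu
          rcases hxNu with hxA | hxu'
          · exact absurd hxA (((hSset_mem x).mp hxS).2.1)
          · rw [Set.mem_singleton_iff] at hxu'
            rw [hxu', hπu', hπu]
            exact hadj_vv'.symm
        · rw [h] at hxy
          have hxNv : x ∈ T.neighborSet v := hxy.symm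
          rw [hNv] at hxNv
          rcases hxNv with hxB | hxv'
          · exact absurd hxB (((hSset_mem x).mp hxS).2.2.2)
          · rw [Set.mem_singleton_iff] at hxv'
            rw [h, hπv, hxv', hπv']
            exact hadj_uu'.symm
        · exfalso
          exact hnotadj_A y h x (((hSset_mem x).mp hxS).1) hxy.symm
        · exfalso
          exact hnotadj_B y h x (((hSset_mem x).mp hxS).2.2.1) hxy.symm
      intro x y hxy
      by_cases hxS : x ∈ Sset
      · by_cases hyS : y ∈ Sset
        · rw [hπS x hxS, hπS y hyS]
          have hadj0 : (T.induce Sset).Adj ⟨x, hxS⟩ ⟨y, hyS⟩ := hxy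
          exact τ₀.map_rel_iff.mpr hadj0
        · exact keyS x y hxS hyS hxy
      · by_cases hyS : y ∈ Sset
        · exact (keyS y x hyS hxS hxy.symm).symm
        · rcases hpart x hxS with rfl | h | hxA | hxB
          · have hyN : y ∈ T.neighborSet x := hxy
            rw [hNu] at hyN
            rcases hyN with hyA | hyu'
            · rw [hπu, hπA y hyA]
              exact (hβB ⟨y, hyA⟩).1
            · rw [Set.mem_singleton_iff] at hyu'
              exact absurd (hyu' ▸ hu'S) hyS
          · rw [h] at hxy ⊢
            have hyN : y ∈ T.neighborSet v := hxy
            rw [hNv] at hyN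
            rcases hyN with hyB | hyv'
            · rw [hπv, hπB y hyB]
              exact (hβA ⟨y, hyB⟩).1
            · rw [Set.mem_singleton_iff] at hyv'
              exact absurd (hyv' ▸ hv'S) hyS
          · have hyu : y = u := by
              have h0 : y ∈ T.neighborSet x := hxy
              rw [hA_nbr x hxA, Set.mem_singleton_iff] at h0
              exact h0
            rw [hyu, hπu, hπA x hxA]
            exact ((hβB ⟨x, hxA⟩).1 : T.Adj v _).symm
          · have hyv : y = v := by
              have h0 : y ∈ T.neighborSet x := hxy
              rw [hB_nbr x hxB, Set.mem_singleton_iff] at h0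
              exact h0
            rw [hyv, hπv, hπB x hxB]
            exact ((hβA ⟨x, hxB⟩).1 : T.Adj u _).symm
    refine ⟨isoOfMapAdj T (Equiv.ofBijective π hπbij) hadjπ, ?_⟩
    show π u = v
    exact hπu





/-- Removal-similar end-cutvertices of a finite tree are similar: if `u`, `v` are
end-cutvertices with `T - u ≅ T - v`, then some automorphism of `T` maps `u` to `v`. -/
theorem stmt3 {V : Type} [Fintype V] (T : SimpleGraph V) (hT : T.IsTree) (u v : V)
    (hu : IsEndCutvertex T u) (hv : IsEndCutvertex T v)
    (h : Nonempty (T.induce ({u}ᶜ : Set V) ≃g T.induce ({v}ᶜ : Set V))) :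
    ∃ φ : T ≃g T, φ u = v :=
  main_rec (Fintype.card V) V _ T le_rfl hT u v hu hv h

end ErnPaper
end

section
/- Let G be a finite simple graph with distinct edges e_1 and e_2. Suppose G − e_1 has exactly two connected components, both trees, of orders p_1 and p_2, and G − e_2 has exactly two connected components, both trees, of orders q_1 and q_2. If the pair {p_1, p_2} is not equal to the pair {q_1, q_2} (as unordered pairs), then G is a tree. -/
open SimpleGraph

namespace ErnPaper

/-- `G` has exactly two connected components, both of which are trees,
of orders `p₁` and `p₂`. -/
def TwoTreeComponents {V : Type} [Fintype V] (G : SimpleGraph V) (p1 p2 : ℕ) : Prop :=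
  ∃ c1 c2 : G.ConnectedComponent, c1 ≠ c2 ∧ (∀ c : G.ConnectedComponent, c = c1 ∨ c = c2) ∧
    (G.induce c1.supp).IsTree ∧ (G.induce c2.supp).IsTree ∧
    Nat.card c1.supp = p1 ∧ Nat.card c2.supp = p2

lemma reachable_of_mem_support {V : Type} {H : SimpleGraph V} {u v x : V}
    (p : H.Walk u v) (hx : x ∈ p.support) : H.Reachable u x := by
  induction p with
  | nil => simp at hx; subst hx; rfl
  | cons h p ih =>
    rcases (SimpleGraph.Walk.mem_support_iff _).mp hx with rfl | hx'
    · rfl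
    · exact h.reachable.trans (ih hx')

lemma exists_walk_induce {V : Type} {H : SimpleGraph V} {s : Set V} {u v : V}
    (p : H.Walk u v) (hu : u ∈ s) (hv : v ∈ s) (hp : ∀ x ∈ p.support, x ∈ s) :
    ∃ q : (H.induce s).Walk ⟨u, hu⟩ ⟨v, hv⟩,
      q.map (SimpleGraph.Embedding.induce s).toHom = p := by
  induction p with
  | nil => exact ⟨SimpleGraph.Walk.nil, rfl⟩
  | @cons u x v h p ih =>
    have hx : x ∈ s := hp x (by simp)
    obtain ⟨q, hq⟩ := ih hx hv (fun y hy => hp y (by simp [hy]))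
    exact ⟨SimpleGraph.Walk.cons (by exact h) q, by subst hq; rfl⟩

lemma isAcyclic_of_components {V : Type} {H : SimpleGraph V}
    (htree : ∀ c : H.ConnectedComponent, (H.induce c.supp).IsAcyclic) :
    H.IsAcyclic := by
  intro v p hp
  have hsupp : ∀ x ∈ p.support, x ∈ (H.connectedComponentMk v).supp := by
    intro x hx
    exact (SimpleGraph.ConnectedComponent.mem_supp_iff _ _).mpr
      (SimpleGraph.ConnectedComponent.sound (reachable_of_mem_support p hx).symm)
  have hvmem : v ∈ (H.connectedComponentMk v).supp :=
    (SimpleGraph.ConnectedComponent.mem_supp_iff _ _).mpr rfl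
  obtain ⟨q, hq⟩ := exists_walk_induce p hvmem hvmem hsupp
  have hq' : q.IsCycle := by
    rw [← SimpleGraph.Walk.map_isCycle_iff_of_injective
      (p := q) (f := (SimpleGraph.Embedding.induce _).toHom) Subtype.val_injective]
    rw [hq]; exact hp
  exact htree _ q hq'

lemma reachable_deleteEdges_iff' {V : Type} {G : SimpleGraph V} {a b : V}
    (hr : (G.deleteEdges {s(a, b)}).Reachable a b) (u v : V) :
    G.Reachable u v ↔ (G.deleteEdges {s(a, b)}).Reachable u v := by
  constructor
  · rintro ⟨p⟩
    induction p with
    | nil => rfl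
    | @cons u x v h p ih =>
      refine SimpleGraph.Reachable.trans ?_ ih
      by_cases he : s(u, x) = s(a, b)
      · rw [Sym2.eq_iff] at he
        rcases he with ⟨rfl, rfl⟩ | ⟨rfl, rfl⟩
        · exact hr
        · exact hr.symm
      · exact (SimpleGraph.deleteEdges_adj.mpr ⟨h, by simpa using he⟩).reachable
  · exact fun h => h.mono (SimpleGraph.deleteEdges_le _)

lemma isTree_of_bridge {V : Type} [Fintype V] {G : SimpleGraph V} {a b : V}
    (hab : G.Adj a b) (hbr : ¬(G.deleteEdges {s(a, b)}).Reachable a b)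
    {p1 p2 : ℕ} (h : TwoTreeComponents (G.deleteEdges {s(a, b)}) p1 p2) : G.IsTree := by
  set H := G.deleteEdges {s(a, b)} with hH
  obtain ⟨c1, c2, hc12, hall, ht1, ht2, -, -⟩ := h
  have hmkab : H.connectedComponentMk a ≠ H.connectedComponentMk b := by
    intro hmk
    exact hbr (SimpleGraph.ConnectedComponent.exact hmk)
  have hreach : ∀ x : V, H.Reachable x a ∨ H.Reachable x b := by
    intro x
    rcases hall (H.connectedComponentMk x) with hx | hx <;>
    rcases hall (H.connectedComponentMk a) with ha | ha <;>
    rcases hall (H.connectedComponentMk b) with hb | hb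
    all_goals first
      | (left; exact SimpleGraph.ConnectedComponent.exact (hx.trans ha.symm))
      | (right; exact SimpleGraph.ConnectedComponent.exact (hx.trans hb.symm))
      | (exact absurd (ha.trans hb.symm) hmkab)
  have hHle : H ≤ G := SimpleGraph.deleteEdges_le _
  have hconn : G.Connected := by
    rw [SimpleGraph.connected_iff]
    refine ⟨?_, ⟨a⟩⟩
    intro u v
    have hu := hreach u
    have hv := hreach v
    have hra : G.Reachable a b := hab.reachable
    rcases hu with hu | hu <;> rcases hv with hv | hv
    · exact (hu.mono hHle).trans (hv.mono hHle).symm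
    · exact ((hu.mono hHle).trans hra).trans (hv.mono hHle).symm
    · exact ((hu.mono hHle).trans hra.symm).trans (hv.mono hHle).symm
    · exact (hu.mono hHle).trans (hv.mono hHle).symm
  have hHacyclic : H.IsAcyclic := by
    apply isAcyclic_of_components
    intro c
    rcases hall c with rfl | rfl
    · exact ht1.IsAcyclic
    · exact ht2.IsAcyclic
  have hbridge : G.IsBridge s(a, b) := SimpleGraph.isBridge_iff.mpr hbr
  refine ⟨hconn, ?_⟩
  intro v p hp
  have hnot : s(a, b) ∉ p.edges :=
    (SimpleGraph.isBridge_iff_adj_and_forall_cycle_notMem (G.mem_edgeSet.mpr hab)).mp hbridge p hp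
  have hedges : ∀ e, e ∈ p.edges → e ∉ ({s(a, b)} : Set (Sym2 V)) := by
    intro e he
    simp only [Set.mem_singleton_iff]
    rintro rfl
    exact hnot he
  exact hHacyclic (p.toDeleteEdges {s(a, b)} hedges) (SimpleGraph.Walk.IsCycle.toDeleteEdges G {s(a, b)} hp hedges)

lemma multiset_eq_of_reach {V : Type} [Fintype V] {H1 H2 : SimpleGraph V}
    (hr : ∀ u v, H1.Reachable u v ↔ H2.Reachable u v)
    {p1 p2 q1 q2 : ℕ}
    (h1 : TwoTreeComponents H1 p1 p2) (h2 : TwoTreeComponents H2 q1 q2) :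
    ({p1, p2} : Multiset ℕ) = ({q1, q2} : Multiset ℕ) := by
  obtain ⟨c1, c2, hc12, hall1, -, -, hp1, hp2⟩ := h1
  obtain ⟨d1, d2, hd12, hall2, -, -, hq1, hq2⟩ := h2
  have hsupp : ∀ v : V, (H1.connectedComponentMk v).supp = (H2.connectedComponentMk v).supp := by
    intro v
    ext x
    simp only [SimpleGraph.ConnectedComponent.mem_supp_iff, SimpleGraph.ConnectedComponent.eq]
    exact hr x v
  obtain ⟨v1, hv1⟩ := c1.exists_rep
  obtain ⟨v2, hv2⟩ := c2.exists_rep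
  have hv1' : H1.connectedComponentMk v1 = c1 := hv1
  have hv2' : H1.connectedComponentMk v2 = c2 := hv2
  have key : ∀ (v : V) (c : H1.ConnectedComponent) (d : H2.ConnectedComponent),
      H1.connectedComponentMk v = c → H2.connectedComponentMk v = d →
      Nat.card c.supp = Nat.card d.supp := by
    intro v c d hc hd
    rw [← hc, ← hd, hsupp v]
  have hmk2 : H2.connectedComponentMk v1 ≠ H2.connectedComponentMk v2 := by
    intro hmk
    apply hc12
    rw [← hv1', ← hv2']
    exact SimpleGraph.ConnectedComponent.sound
      ((hr v1 v2).mpr (SimpleGraph.ConnectedComponent.exact hmk))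
  rcases hall2 (H2.connectedComponentMk v1) with h1' | h1'
  · have h2' : H2.connectedComponentMk v2 = d2 := by
      rcases hall2 (H2.connectedComponentMk v2) with h | h
      · exact absurd (h1'.trans h.symm) hmk2
      · exact h
    rw [← hp1, ← hp2, ← hq1, ← hq2, key v1 c1 d1 hv1' h1', key v2 c2 d2 hv2' h2']
  · have h2' : H2.connectedComponentMk v2 = d1 := by
      rcases hall2 (H2.connectedComponentMk v2) with h | h
      · exact h
      · exact absurd (h1'.trans h.symm) hmk2
    rw [← hp1, ← hp2, ← hq1, ← hq2, key v1 c1 d2 hv1' h1', key v2 c2 d1 hv2' h2']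
    exact Multiset.cons_swap _ _ _


/-- Molina's Lemma: if `G - e₁` has exactly two components, both trees, of orders `p₁, p₂`,
and `G - e₂` has exactly two components, both trees, of orders `q₁, q₂`, and
`{p₁, p₂} ≠ {q₁, q₂}` as unordered pairs, then `G` is a tree. -/
theorem stmt5 {V : Type} [Fintype V] (G : SimpleGraph V) (e1 e2 : Sym2 V)
    (he1 : e1 ∈ G.edgeSet) (he2 : e2 ∈ G.edgeSet) (hne : e1 ≠ e2)
    (p1 p2 q1 q2 : ℕ)
    (h1 : TwoTreeComponents (G.deleteEdges {e1}) p1 p2)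
    (h2 : TwoTreeComponents (G.deleteEdges {e2}) q1 q2)
    (hpq : ({p1, p2} : Multiset ℕ) ≠ ({q1, q2} : Multiset ℕ)) :
    G.IsTree := by
  revert he1 he2 hne h1 h2 hpq
  induction e1, e2 using Sym2.inductionOn₂ with
  | _ a b c d =>
    intro he1 he2 hne h1 h2 hpq
    by_cases hb1 : (G.deleteEdges {s(a, b)}).Reachable a b
    · by_cases hb2 : (G.deleteEdges {s(c, d)}).Reachable c d
      · exact absurd (multiset_eq_of_reach
          (fun u v => (reachable_deleteEdges_iff' hb1 u v).symm.trans
            (reachable_deleteEdges_iff' hb2 u v)) h1 h2) hpq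
      · exact isTree_of_bridge (G.mem_edgeSet.mp he2) hb2 h2
    · exact isTree_of_bridge (G.mem_edgeSet.mp he1) hb1 h1

end ErnPaper
end

section
/- For every integer s ≥ 3, the disjoint union C_s ∪ P_{s+1} of the cycle on s vertices and the path on s + 1 vertices is not isomorphic to the path P_{2s+1}, yet it has two distinct edges f_1 and f_2 such that deleting f_i (for i = 1, 2) yields a graph isomorphic to the disjoint union P_s ∪ P_{s+1}; consequently it has two edge-cards isomorphic to the two edge-cards of P_{2s+1} obtained by deleting each of the two edges incident to the central vertex of P_{2s+1}. -/
open SimpleGraph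

namespace ErnPaper

section AuxiliaryLemmas

variable {α β : Type} {G : SimpleGraph α} {H : SimpleGraph β}

@[simp] lemma disjUnion_adj_inl_inl {a b : α} :
    (disjUnion G H).Adj (Sum.inl a) (Sum.inl b) ↔ G.Adj a b := by
  constructor
  · rintro ⟨h, h1 | h1⟩
    · exact h1
    · exact h1.symm
  · intro h
    exact ⟨by simp [G.ne_of_adj h], Or.inl h⟩

@[simp] lemma disjUnion_adj_inr_inr {a b : β} :
    (disjUnion G H).Adj (Sum.inr a) (Sum.inr b) ↔ H.Adj a b := by
  constructor
  · rintro ⟨h, h1 | h1⟩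
    · exact h1
    · exact h1.symm
  · intro h
    exact ⟨by simp [H.ne_of_adj h], Or.inl h⟩

@[simp] lemma disjUnion_adj_inl_inr {a : α} {b : β} :
    ¬ (disjUnion G H).Adj (Sum.inl a) (Sum.inr b) := by
  rintro ⟨h, h1 | h1⟩ <;> exact h1

@[simp] lemma disjUnion_adj_inr_inl {a : β} {b : α} :
    ¬ (disjUnion G H).Adj (Sum.inr a) (Sum.inl b) := by
  rintro ⟨h, h1 | h1⟩ <;> exact h1

lemma disjUnion_walk_isLeft {x y : α ⊕ β} (w : (disjUnion G H).Walk x y) :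
    x.isLeft = y.isLeft := by
  induction w with
  | nil => rfl
  | @cons u v _ h _ ih =>
    rw [← ih]
    cases u <;> cases v <;> simp_all

lemma disjUnion_not_connected [Nonempty α] [Nonempty β] :
    ¬ (disjUnion G H).Connected := by
  intro hc
  obtain ⟨w⟩ := hc.preconnected (Sum.inl (Classical.arbitrary α))
    (Sum.inr (Classical.arbitrary β))
  simpa using disjUnion_walk_isLeft w

/-- An isomorphism transfers edge deletion. -/
def isoDeleteEdges {α β : Type} {G : SimpleGraph α} {H : SimpleGraph β} (φ : G ≃g H)
    (e : Sym2 α) : G.deleteEdges {e} ≃g H.deleteEdges {Sym2.map φ e} where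
  toEquiv := φ.toEquiv
  map_rel_iff' := by
    intro a b
    simp only [Equiv.toFun_as_coe, deleteEdges_adj, Set.mem_singleton_iff]
    rw [show s((φ.toEquiv a : β), φ.toEquiv b) = Sym2.map φ s(a, b) from
      (Sym2.map_pair_eq _ _ _).symm, (Sym2.map.injective (RelIso.injective φ)).eq_iff]
    have := φ.map_adj_iff (v := a) (w := b)
    tauto

/-- Congruence of the disjoint union in the left argument. -/
def disjUnionCongrLeft {α α' β : Type} {G : SimpleGraph α} {G' : SimpleGraph α'}
    {H : SimpleGraph β} (φ : G ≃g G') : disjUnion G H ≃g disjUnion G' H where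
  toEquiv := Equiv.sumCongr φ.toEquiv (Equiv.refl β)
  map_rel_iff' := by
    rintro (a | a) (b | b) <;>
      simp [φ.map_adj_iff]

/-- Deleting a left-edge of a disjoint union. -/
def disjUnionDeleteLeft (G : SimpleGraph α) (H : SimpleGraph β) (e : Sym2 α) :
    (disjUnion G H).deleteEdges {Sym2.map Sum.inl e} ≃g disjUnion (G.deleteEdges {e}) H where
  toEquiv := Equiv.refl _
  map_rel_iff' := by
    induction e using Sym2.ind with
    | _ x y =>
      rintro (a | a) (b | b) <;>
        simp [Sym2.map_pair_eq, Sym2.eq_iff, and_or_left]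

lemma modAux {s a b : ℕ} (hs : 2 ≤ s) (ha : a < s) (hb : b < s) :
    ((s - b) + a) % s = 1 ↔ (a = b + 1 ∨ (b = s - 1 ∧ a = 0)) := by
  rcases le_or_gt b a with h | h
  · rw [show (s - b) + a = (a - b) + s by omega, Nat.add_mod_right,
      Nat.mod_eq_of_lt (by omega)]
    omega
  · rw [Nat.mod_eq_of_lt (by omega)]
    omega

lemma cycle_del (s : ℕ) (hs : 3 ≤ s) :
    (cycleGraph s).deleteEdges {s((⟨0, by omega⟩ : Fin s), (⟨s - 1, by omega⟩ : Fin s))} =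
      pathGraph s := by
  ext u v
  simp only [deleteEdges_adj, cycleGraph_adj', pathGraph_adj, Set.mem_singleton_iff,
    Sym2.eq_iff, Fin.sub_def, Fin.ext_iff]
  rw [modAux (by omega) u.isLt v.isLt, modAux (by omega) v.isLt u.isLt]
  have := u.isLt
  have := v.isLt
  omega

/-- The rotation automorphism of the cycle. -/
def cycleRot (s : ℕ) [NeZero s] : cycleGraph s ≃g cycleGraph s where
  toEquiv := Equiv.addRight (1 : Fin s)
  map_rel_iff' := by
    intro a b
    simp [cycleGraph_adj', add_sub_add_right_eq_sub]

/-- First split of the long path. -/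
def split1 (s : ℕ) (hs : 3 ≤ s) :
    disjUnion (pathGraph s) (pathGraph (s + 1)) ≃g
      (pathGraph (2 * s + 1)).deleteEdges
        {s((⟨s - 1, by have := hs; omega⟩ : Fin (2 * s + 1)), (⟨s, by have := hs; omega⟩ : Fin (2 * s + 1)))} where
  toEquiv :=
    { toFun := Sum.elim (fun i => ⟨i, by omega⟩) (fun j => ⟨s + j, by omega⟩)
      invFun := fun k => if h : k.val < s then Sum.inl ⟨k, h⟩
        else Sum.inr ⟨k - s, by have := k.isLt; omega⟩
      left_inv := by
        rintro (i | j)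
        · simp [i.isLt]
        · have := j.isLt
          simp only [Sum.elim_inr]
          simp only [show ¬ (s + (j : ℕ) < s) by omega, ↓reduceDIte]
          simp
      right_inv := by
        intro k
        dsimp only
        by_cases h : k.val < s
        · simp [h]
        · rw [dif_neg h]
          have := k.isLt
          simp only [Sum.elim_inr]
          ext
          simp
          omega }
  map_rel_iff' := by
    rintro (a | a) (b | b) <;>
      (have ha := a.isLt; have hb := b.isLt) <;>
      simp only [Equiv.coe_fn_mk, Sum.elim_inl, Sum.elim_inr, deleteEdges_adj, pathGraph_adj,
        Set.mem_singleton_iff, Sym2.eq_iff, Fin.ext_iff, disjUnion_adj_inl_inl,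
        disjUnion_adj_inr_inr, disjUnion_adj_inl_inr, disjUnion_adj_inr_inl,
        iff_false, not_and, not_or, not_not] <;>
      omega

/-- Second split of the long path. -/
def split2 (s : ℕ) (hs : 3 ≤ s) :
    disjUnion (pathGraph s) (pathGraph (s + 1)) ≃g
      (pathGraph (2 * s + 1)).deleteEdges
        {s((⟨s, by have := hs; omega⟩ : Fin (2 * s + 1)), (⟨s + 1, by have := hs; omega⟩ : Fin (2 * s + 1)))} where
  toEquiv :=
    { toFun := Sum.elim (fun i => ⟨s + 1 + i, by omega⟩) (fun j => ⟨j, by omega⟩)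
      invFun := fun k => if h : k.val < s + 1 then Sum.inr ⟨k, h⟩
        else Sum.inl ⟨k - (s + 1), by have := k.isLt; omega⟩
      left_inv := by
        rintro (i | j)
        · have := i.isLt
          simp only [Sum.elim_inl]
          simp only [show ¬ (s + 1 + (i : ℕ) < s + 1) by omega, ↓reduceDIte]
          simp
        · have := j.isLt
          simp only [Sum.elim_inr]
          exact dif_pos (show (j : ℕ) < s + 1 by omega)
      right_inv := by
        intro k
        dsimp only
        by_cases h : k.val < s + 1
        · simp [h]
        · rw [dif_neg h]
          have := k.isLt
          simp only [Sum.elim_inl]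
          ext
          simp
          omega }
  map_rel_iff' := by
    rintro (a | a) (b | b) <;>
      (have ha := a.isLt; have hb := b.isLt) <;>
      simp only [Equiv.coe_fn_mk, Sum.elim_inl, Sum.elim_inr, deleteEdges_adj, pathGraph_adj,
        Set.mem_singleton_iff, Sym2.eq_iff, Fin.ext_iff, disjUnion_adj_inl_inl,
        disjUnion_adj_inr_inr, disjUnion_adj_inl_inr, disjUnion_adj_inr_inl,
        iff_false, not_and, not_or, not_not] <;>
      omega

end AuxiliaryLemmas

/-- For every `s ≥ 3`, the disjoint union `C_s ∪ P_{s+1}` is not isomorphic to `P_{2s+1}`,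
yet it has two distinct edges whose deletion in each case yields a graph isomorphic to
`P_s ∪ P_{s+1}`; consequently it has two edge-cards isomorphic to the two edge-cards of
`P_{2s+1}` obtained by deleting each of the two edges incident to the central vertex. -/
theorem stmt16 (s : ℕ) (hs : 3 ≤ s) :
    ¬ Nonempty (disjUnion (cycleGraph s) (pathGraph (s + 1)) ≃g pathGraph (2 * s + 1)) ∧
    ∃ f1 f2 : Sym2 (Fin s ⊕ Fin (s + 1)),
      f1 ∈ (disjUnion (cycleGraph s) (pathGraph (s + 1))).edgeSet ∧
      f2 ∈ (disjUnion (cycleGraph s) (pathGraph (s + 1))).edgeSet ∧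
      f1 ≠ f2 ∧
      Nonempty ((disjUnion (cycleGraph s) (pathGraph (s + 1))).deleteEdges {f1} ≃g
        disjUnion (pathGraph s) (pathGraph (s + 1))) ∧
      Nonempty ((disjUnion (cycleGraph s) (pathGraph (s + 1))).deleteEdges {f2} ≃g
        disjUnion (pathGraph s) (pathGraph (s + 1))) ∧
      Nonempty ((disjUnion (cycleGraph s) (pathGraph (s + 1))).deleteEdges {f1} ≃g
        (pathGraph (2 * s + 1)).deleteEdges
          {s((⟨s - 1, by omega⟩ : Fin (2 * s + 1)), (⟨s, by omega⟩ : Fin (2 * s + 1)))}) ∧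
      Nonempty ((disjUnion (cycleGraph s) (pathGraph (s + 1))).deleteEdges {f2} ≃g
        (pathGraph (2 * s + 1)).deleteEdges
          {s((⟨s, by omega⟩ : Fin (2 * s + 1)), (⟨s + 1, by omega⟩ : Fin (2 * s + 1)))}) := by
  haveI : NeZero s := ⟨by omega⟩
  haveI : Nonempty (Fin s) := ⟨⟨0, by omega⟩⟩
  constructor
  · rintro ⟨φ⟩
    exact disjUnion_not_connected ((Iso.connected_iff φ).mpr (pathGraph_connected (2 * s)))
  · set e1 : Sym2 (Fin s) := s(⟨0, by omega⟩, ⟨s - 1, by omega⟩) with he1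
    set e2 : Sym2 (Fin s) := s(⟨s - 1, by omega⟩, ⟨s - 2, by omega⟩) with he2
    have hC1 : (cycleGraph s).deleteEdges {e1} = pathGraph s := cycle_del s hs
    have hone : (1 : Fin s).val = 1 := by
      rw [Fin.val_one']
      exact Nat.mod_eq_of_lt (by omega)
    have hrot : Sym2.map (cycleRot s) e2 = e1 := by
      rw [he1, he2, Sym2.map_pair_eq]
      have h1 : (cycleRot s) ⟨s - 1, by omega⟩ = (⟨0, by omega⟩ : Fin s) := by
        show (⟨s - 1, by omega⟩ : Fin s) + 1 = _
        rw [Fin.add_def]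
        ext
        simp only [hone]
        rw [show s - 1 + 1 = s by omega, Nat.mod_self]
      have h2 : (cycleRot s) ⟨s - 2, by omega⟩ = (⟨s - 1, by omega⟩ : Fin s) := by
        show (⟨s - 2, by omega⟩ : Fin s) + 1 = _
        rw [Fin.add_def]
        ext
        simp only [hone]
        rw [show s - 2 + 1 = s - 1 by omega, Nat.mod_eq_of_lt (by omega)]
      rw [h1, h2]
    have i1 : (disjUnion (cycleGraph s) (pathGraph (s + 1))).deleteEdges {Sym2.map Sum.inl e1}
        ≃g disjUnion (pathGraph s) (pathGraph (s + 1)) := by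
      have h := disjUnionDeleteLeft (cycleGraph s) (pathGraph (s + 1)) e1
      rwa [hC1] at h
    have i2 : (disjUnion (cycleGraph s) (pathGraph (s + 1))).deleteEdges {Sym2.map Sum.inl e2}
        ≃g disjUnion (pathGraph s) (pathGraph (s + 1)) := by
      have h0 : (cycleGraph s).deleteEdges {e2} ≃g pathGraph s := by
        have h := isoDeleteEdges (cycleRot s) e2
        rwa [hrot, hC1] at h
      exact (disjUnionDeleteLeft _ _ e2).trans (disjUnionCongrLeft h0)
    have m1 : Sym2.map Sum.inl e1 ∈
        (disjUnion (cycleGraph s) (pathGraph (s + 1))).edgeSet := by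
      rw [he1, Sym2.map_pair_eq, mem_edgeSet, disjUnion_adj_inl_inl, cycleGraph_adj']
      left
      rw [Fin.sub_def]
      show (s - (s - 1) + 0) % s = 1
      rw [show s - (s - 1) + 0 = 1 by omega, Nat.mod_eq_of_lt (by omega)]
    have m2 : Sym2.map Sum.inl e2 ∈
        (disjUnion (cycleGraph s) (pathGraph (s + 1))).edgeSet := by
      rw [he2, Sym2.map_pair_eq, mem_edgeSet, disjUnion_adj_inl_inl]
      refine pathGraph_le_cycleGraph ?_
      rw [pathGraph_adj]
      right
      show s - 2 + 1 = s - 1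
      omega
    have hne : Sym2.map (Sum.inl : Fin s → Fin s ⊕ Fin (s + 1)) e1 ≠ Sym2.map Sum.inl e2 := by
      intro h
      have h' := Sym2.map.injective Sum.inl_injective h
      rw [he1, he2, Sym2.eq_iff] at h'
      rcases h' with ⟨h1, h2⟩ | ⟨h1, h2⟩ <;>
        simp only [Fin.mk.injEq] at h1 h2 <;> omega
    exact ⟨Sym2.map Sum.inl e1, Sym2.map Sum.inl e2, m1, m2, hne, ⟨i1⟩, ⟨i2⟩,
      ⟨i1.trans (split1 s hs)⟩, ⟨i2.trans (split2 s hs)⟩⟩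

end ErnPaper
end

section
/- Let s ≥ 2 and let i, j be integers with 1 ≤ i ≤ j ≤ s and 2s − i − j ≥ 1. Then the spider S_{i, j, 2s−i−j} is a tree on 2s + 1 vertices that is not isomorphic to the path P_{2s+1}, yet it has two distinct edges f_1 and f_2 such that deleting f_1 yields a graph isomorphic to P_i ∪ P_{2s+1−i} and deleting f_2 yields a graph isomorphic to P_j ∪ P_{2s+1−j}; consequently it has edge-cards isomorphic to the edge-cards P_{2s+1} − e_i and P_{2s+1} − e_j of the path P_{2s+1} (where e_1, …, e_{2s} are the edges of P_{2s+1} in order along the path). -/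
open SimpleGraph

namespace ErnPaper

-- invariant transport along reachability
lemma reach_invariant {V : Type} {G : SimpleGraph V} (S : V → Prop)
    (h : ∀ x y, G.Adj x y → S x → S y) {u v : V} (hr : G.Reachable u v) (hu : S u) : S v := by
  obtain ⟨p⟩ := hr
  induction p with
  | nil => exact hu
  | cons ha _ ih => exact ih (h _ _ ha hu)

-- connectivity
lemma spider_reach1 (p q r : ℕ) : ∀ (n : ℕ) (h : n < p),
    (spider p q r).Reachable (Sum.inl ()) (Sum.inr (Sum.inl ⟨n, h⟩)) := by
  intro n
  induction n with
  | zero => exact fun h => Adj.reachable (by simp [spider, fromRel_adj])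
  | succ k ih =>
      intro h
      refine (ih (by omega)).trans (Adj.reachable ?_)
      simp [spider, fromRel_adj]

lemma spider_reach2 (p q r : ℕ) : ∀ (n : ℕ) (h : n < q),
    (spider p q r).Reachable (Sum.inl ()) (Sum.inr (Sum.inr (Sum.inl ⟨n, h⟩))) := by
  intro n
  induction n with
  | zero => exact fun h => Adj.reachable (by simp [spider, fromRel_adj])
  | succ k ih =>
      intro h
      refine (ih (by omega)).trans (Adj.reachable ?_)
      simp [spider, fromRel_adj]

lemma spider_reach3 (p q r : ℕ) : ∀ (n : ℕ) (h : n < r),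
    (spider p q r).Reachable (Sum.inl ()) (Sum.inr (Sum.inr (Sum.inr ⟨n, h⟩))) := by
  intro n
  induction n with
  | zero => exact fun h => Adj.reachable (by simp [spider, fromRel_adj])
  | succ k ih =>
      intro h
      refine (ih (by omega)).trans (Adj.reachable ?_)
      simp [spider, fromRel_adj]

lemma spider_connected (p q r : ℕ) : (spider p q r).Connected := by
  rw [connected_iff]
  refine ⟨?_, ⟨Sum.inl ()⟩⟩
  have key : ∀ x, (spider p q r).Reachable (Sum.inl ()) x := by
    rintro (u | ⟨k, hk⟩ | ⟨k, hk⟩ | ⟨k, hk⟩)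
    · exact Reachable.refl _
    · exact spider_reach1 p q r k hk
    · exact spider_reach2 p q r k hk
    · exact spider_reach3 p q r k hk
  exact fun x y => (key x).symm.trans (key y)

-- predecessor map
def sPred (p q r : ℕ) : (Unit ⊕ (Fin p ⊕ Fin q ⊕ Fin r)) → (Unit ⊕ (Fin p ⊕ Fin q ⊕ Fin r))
  | Sum.inl _ => Sum.inl ()
  | Sum.inr (Sum.inl ⟨k, h⟩) =>
      if hk : k = 0 then Sum.inl () else Sum.inr (Sum.inl ⟨k - 1, by omega⟩)
  | Sum.inr (Sum.inr (Sum.inl ⟨k, h⟩)) =>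
      if hk : k = 0 then Sum.inl () else Sum.inr (Sum.inr (Sum.inl ⟨k - 1, by omega⟩))
  | Sum.inr (Sum.inr (Sum.inr ⟨k, h⟩)) =>
      if hk : k = 0 then Sum.inl () else Sum.inr (Sum.inr (Sum.inr ⟨k - 1, by omega⟩))

def sInv (p q r : ℕ) : (Unit ⊕ (Fin p ⊕ Fin q ⊕ Fin r)) → (Unit ⊕ (Fin p ⊕ Fin q ⊕ Fin r)) → Prop
  | Sum.inr (Sum.inl m), Sum.inr (Sum.inl t) => (m : ℕ) ≤ (t : ℕ)
  | Sum.inr (Sum.inr (Sum.inl m)), Sum.inr (Sum.inr (Sum.inl t)) => (m : ℕ) ≤ (t : ℕ)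
  | Sum.inr (Sum.inr (Sum.inr m)), Sum.inr (Sum.inr (Sum.inr t)) => (m : ℕ) ≤ (t : ℕ)
  | _, _ => False

lemma sInv_closed (p q r : ℕ) (w x y : Unit ⊕ (Fin p ⊕ Fin q ⊕ Fin r))
    (hadj : ((spider p q r) \ fromEdgeSet {s(sPred p q r w, w)}).Adj x y)
    (hx : sInv p q r w x) : sInv p q r w y := by
  rcases w with _ | ⟨m, hm⟩ | ⟨m, hm⟩ | ⟨m, hm⟩ <;>
    [skip; by_cases hm0 : m = 0; by_cases hm0 : m = 0; by_cases hm0 : m = 0] <;>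
    rcases x with _ | ⟨k, hk⟩ | ⟨k, hk⟩ | ⟨k, hk⟩ <;>
    rcases y with _ | ⟨t, ht⟩ | ⟨t, ht⟩ | ⟨t, ht⟩ <;>
    simp_all [spider, sPred, sInv, fromRel_adj, sdiff_adj, fromEdgeSet_adj, Sym2.eq_iff] <;>
    omega

lemma spider_bridge (p q r : ℕ) (w : Unit ⊕ (Fin p ⊕ Fin q ⊕ Fin r))
    (hadj : (spider p q r).Adj (sPred p q r w) w) :
    (spider p q r).IsBridge s(sPred p q r w, w) := by
  rw [isBridge_iff]
  intro hreach
  have h1 : sInv p q r w w := by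
    rcases w with _ | ⟨m, hm⟩ | ⟨m, hm⟩ | ⟨m, hm⟩
    · exact absurd rfl hadj.ne
    all_goals simp [sInv]
  have h2 := reach_invariant _ (sInv_closed p q r w) hreach.symm h1
  rcases w with _ | ⟨m, hm⟩ | ⟨m, hm⟩ | ⟨m, hm⟩ <;>
    [exact absurd rfl hadj.ne; by_cases hm0 : m = 0; by_cases hm0 : m = 0;
     by_cases hm0 : m = 0] <;>
    simp_all [sInv, sPred] <;> omega

lemma spider_adj_form (p q r : ℕ) (u v : Unit ⊕ (Fin p ⊕ Fin q ⊕ Fin r))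
    (huv : (spider p q r).Adj u v) :
    u = sPred p q r v ∨ v = sPred p q r u := by
  rcases u with _ | ⟨k, hk⟩ | ⟨k, hk⟩ | ⟨k, hk⟩ <;>
    rcases v with _ | ⟨t, ht⟩ | ⟨t, ht⟩ | ⟨t, ht⟩ <;>
    simp_all [spider, fromRel_adj, sPred] <;>
    split_ifs <;> simp_all <;> omega

lemma spider_acyclic (p q r : ℕ) : (spider p q r).IsAcyclic := by
  rw [isAcyclic_iff_forall_adj_isBridge]
  intro u v huv
  rcases spider_adj_form p q r u v huv with h | h
  · rw [h]; exact spider_bridge p q r v (h ▸ huv)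
  · rw [h, Sym2.eq_swap]
    exact spider_bridge p q r u (h ▸ huv.symm)

def del1Map (p q r : ℕ) (hq : 0 < q) :
    (Unit ⊕ (Fin p ⊕ Fin q ⊕ Fin r)) → (Fin p ⊕ Fin (q + r + 1))
  | Sum.inl _ => Sum.inr ⟨q, by omega⟩
  | Sum.inr (Sum.inl k) => Sum.inl k
  | Sum.inr (Sum.inr (Sum.inl ⟨k, h⟩)) => Sum.inr ⟨q - 1 - k, by omega⟩
  | Sum.inr (Sum.inr (Sum.inr ⟨k, h⟩)) => Sum.inr ⟨q + 1 + k, by omega⟩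

lemma spiderDel1 (p q r : ℕ) (hp : 0 < p) (hq : 0 < q) :
    Nonempty ((spider p q r).deleteEdges
        {s(Sum.inl (), Sum.inr (Sum.inl (⟨0, hp⟩ : Fin p)))} ≃g
      disjUnion (pathGraph p) (pathGraph (q + r + 1))) := by
  have hinj : Function.Injective (del1Map p q r hq) := by
    rintro (_ | ⟨k, hk⟩ | ⟨k, hk⟩ | ⟨k, hk⟩) (_ | ⟨t, ht⟩ | ⟨t, ht⟩ | ⟨t, ht⟩) hxy <;>
      simp_all [del1Map, Fin.ext_iff] <;> omega
  have hbij : Function.Bijective (del1Map p q r hq) := by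
    refine (Fintype.bijective_iff_injective_and_card _).mpr ⟨hinj, by simp; omega⟩
  refine ⟨⟨Equiv.ofBijective _ hbij, ?_⟩⟩
  rintro (_ | ⟨k, hk⟩ | ⟨k, hk⟩ | ⟨k, hk⟩) (_ | ⟨t, ht⟩ | ⟨t, ht⟩ | ⟨t, ht⟩) <;>
    simp [del1Map, spider, disjUnion, Equiv.ofBijective, fromRel_adj, pathGraph_adj,
      deleteEdges_adj, Sym2.eq_iff, Fin.ext_iff] <;> omega

def del2Map (p q r : ℕ) :
    (Unit ⊕ (Fin p ⊕ Fin q ⊕ Fin r)) → (Fin q ⊕ Fin (p + r + 1))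
  | Sum.inl _ => Sum.inr ⟨p, by omega⟩
  | Sum.inr (Sum.inl ⟨k, h⟩) => Sum.inr ⟨p - 1 - k, by omega⟩
  | Sum.inr (Sum.inr (Sum.inl k)) => Sum.inl k
  | Sum.inr (Sum.inr (Sum.inr ⟨k, h⟩)) => Sum.inr ⟨p + 1 + k, by omega⟩

lemma spiderDel2 (p q r : ℕ) (hq : 0 < q) :
    Nonempty ((spider p q r).deleteEdges
        {s(Sum.inl (), Sum.inr (Sum.inr (Sum.inl (⟨0, hq⟩ : Fin q))))} ≃g
      disjUnion (pathGraph q) (pathGraph (p + r + 1))) := by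
  have hinj : Function.Injective (del2Map p q r) := by
    rintro (_ | ⟨k, hk⟩ | ⟨k, hk⟩ | ⟨k, hk⟩) (_ | ⟨t, ht⟩ | ⟨t, ht⟩ | ⟨t, ht⟩) hxy <;>
      simp_all [del2Map, Fin.ext_iff] <;> omega
  have hbij : Function.Bijective (del2Map p q r) := by
    refine (Fintype.bijective_iff_injective_and_card _).mpr ⟨hinj, by simp; omega⟩
  refine ⟨⟨Equiv.ofBijective _ hbij, ?_⟩⟩
  rintro (_ | ⟨k, hk⟩ | ⟨k, hk⟩ | ⟨k, hk⟩) (_ | ⟨t, ht⟩ | ⟨t, ht⟩ | ⟨t, ht⟩) <;>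
    simp [del2Map, spider, disjUnion, Equiv.ofBijective, fromRel_adj, pathGraph_adj,
      deleteEdges_adj, Sym2.eq_iff, Fin.ext_iff] <;> omega

lemma pathDel (n a : ℕ) (ha : 0 < a) (han : a < n) :
    Nonempty ((pathGraph n).deleteEdges
        {s((⟨a - 1, by omega⟩ : Fin n), (⟨a, by omega⟩ : Fin n))} ≃g
      disjUnion (pathGraph a) (pathGraph (n - a))) := by
  set g : Fin n → Fin a ⊕ Fin (n - a) := fun v =>
    if h : (v : ℕ) < a then Sum.inl ⟨v, h⟩ else Sum.inr ⟨(v : ℕ) - a, by omega⟩ with hg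
  have hinj : Function.Injective g := by
    rintro ⟨x, hx⟩ ⟨y, hy⟩ hxy
    simp only [hg] at hxy
    split_ifs at hxy <;> simp_all [Fin.ext_iff] <;> omega
  have hbij : Function.Bijective g := by
    refine (Fintype.bijective_iff_injective_and_card _).mpr ⟨hinj, by simp; omega⟩
  refine ⟨⟨Equiv.ofBijective _ hbij, ?_⟩⟩
  rintro ⟨x, hx⟩ ⟨y, hy⟩
  show (disjUnion _ _).Adj (g _) (g _) ↔ _
  simp only [hg]
  split_ifs <;>
    simp [disjUnion, fromRel_adj, pathGraph_adj, deleteEdges_adj, Sym2.eq_iff, Fin.ext_iff] <;>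
    omega

lemma spider_not_path (p q r : ℕ) (hp : 0 < p) (hq : 0 < q) (hr : 0 < r) (n : ℕ) :
    ¬ Nonempty (spider p q r ≃g pathGraph n) := by
  rintro ⟨φ⟩
  set w := φ (Sum.inl ()) with hw
  set a := φ (Sum.inr (Sum.inl ⟨0, hp⟩)) with ha0
  set b := φ (Sum.inr (Sum.inr (Sum.inl ⟨0, hq⟩))) with hb0
  set d := φ (Sum.inr (Sum.inr (Sum.inr ⟨0, hr⟩))) with hd0
  have ha : (pathGraph n).Adj w a := φ.map_rel_iff.mpr (by simp [spider, fromRel_adj])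
  have hb : (pathGraph n).Adj w b := φ.map_rel_iff.mpr (by simp [spider, fromRel_adj])
  have hd : (pathGraph n).Adj w d := φ.map_rel_iff.mpr (by simp [spider, fromRel_adj])
  have hab : (a : ℕ) ≠ (b : ℕ) := fun h => by
    have := φ.toEquiv.injective (ha0 ▸ hb0 ▸ Fin.ext h : φ _ = φ _)
    simp at this
  have had : (a : ℕ) ≠ (d : ℕ) := fun h => by
    have := φ.toEquiv.injective (ha0 ▸ hd0 ▸ Fin.ext h : φ _ = φ _)
    simp at this
  have hbd : (b : ℕ) ≠ (d : ℕ) := fun h => by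
    have := φ.toEquiv.injective (hb0 ▸ hd0 ▸ Fin.ext h : φ _ = φ _)
    simp at this
  rw [pathGraph_adj] at ha hb hd
  rcases ha with ha | ha <;> rcases hb with hb | hb <;> rcases hd with hd | hd <;> omega


/-- For `s ≥ 2` and `1 ≤ i ≤ j ≤ s` with `2s - i - j ≥ 1`, the spider `S_{i,j,2s-i-j}` is a
tree on `2s + 1` vertices not isomorphic to `P_{2s+1}`, yet it has two distinct edges
`f₁, f₂` such that deleting `f₁` yields a graph isomorphic to `P_i ∪ P_{2s+1-i}` and
deleting `f₂` yields a graph isomorphic to `P_j ∪ P_{2s+1-j}`; consequently its edge-cards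
are isomorphic to the edge-cards `P_{2s+1} - eᵢ` and `P_{2s+1} - eⱼ` of the path
(where `eᵢ` joins the `(i-1)`-st and `i`-th vertices of the path). -/
theorem stmt17 (s i j : ℕ) (hs : 2 ≤ s) (hi : 1 ≤ i) (hij : i ≤ j) (hjs : j ≤ s)
    (hr : 1 ≤ 2 * s - i - j) :
    (spider i j (2 * s - i - j)).IsTree ∧
    Fintype.card (Unit ⊕ (Fin i ⊕ Fin j ⊕ Fin (2 * s - i - j))) = 2 * s + 1 ∧
    ¬ Nonempty (spider i j (2 * s - i - j) ≃g pathGraph (2 * s + 1)) ∧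
    ∃ f1 f2 : Sym2 (Unit ⊕ (Fin i ⊕ Fin j ⊕ Fin (2 * s - i - j))),
      f1 ∈ (spider i j (2 * s - i - j)).edgeSet ∧
      f2 ∈ (spider i j (2 * s - i - j)).edgeSet ∧
      f1 ≠ f2 ∧
      Nonempty ((spider i j (2 * s - i - j)).deleteEdges {f1} ≃g
        disjUnion (pathGraph i) (pathGraph (2 * s + 1 - i))) ∧
      Nonempty ((spider i j (2 * s - i - j)).deleteEdges {f2} ≃g
        disjUnion (pathGraph j) (pathGraph (2 * s + 1 - j))) ∧
      Nonempty ((spider i j (2 * s - i - j)).deleteEdges {f1} ≃g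
        (pathGraph (2 * s + 1)).deleteEdges
          {s((⟨i - 1, by omega⟩ : Fin (2 * s + 1)), (⟨i, by omega⟩ : Fin (2 * s + 1)))}) ∧
      Nonempty ((spider i j (2 * s - i - j)).deleteEdges {f2} ≃g
        (pathGraph (2 * s + 1)).deleteEdges
          {s((⟨j - 1, by omega⟩ : Fin (2 * s + 1)), (⟨j, by omega⟩ : Fin (2 * s + 1)))}) := by
  have hi' : 0 < i := hi
  have hj' : 0 < j := lt_of_lt_of_le hi' hij
  have hr' : 0 < 2 * s - i - j := hr
  have H1 : Nonempty ((spider i j (2 * s - i - j)).deleteEdges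
      {s(Sum.inl (), Sum.inr (Sum.inl (⟨0, hi'⟩ : Fin i)))} ≃g
      disjUnion (pathGraph i) (pathGraph (2 * s + 1 - i))) := by
    rw [show 2 * s + 1 - i = j + (2 * s - i - j) + 1 by omega]
    exact spiderDel1 i j _ hi' hj'
  have H2 : Nonempty ((spider i j (2 * s - i - j)).deleteEdges
      {s(Sum.inl (), Sum.inr (Sum.inr (Sum.inl (⟨0, hj'⟩ : Fin j))))} ≃g
      disjUnion (pathGraph j) (pathGraph (2 * s + 1 - j))) := by
    rw [show 2 * s + 1 - j = i + (2 * s - i - j) + 1 by omega]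
    exact spiderDel2 i j _ hj'
  refine ⟨⟨spider_connected _ _ _, spider_acyclic _ _ _⟩, ?_, ?_,
    s(Sum.inl (), Sum.inr (Sum.inl (⟨0, hi'⟩ : Fin i))),
    s(Sum.inl (), Sum.inr (Sum.inr (Sum.inl (⟨0, hj'⟩ : Fin j)))),
    ?_, ?_, ?_, H1, H2, ?_, ?_⟩
  · simp only [Fintype.card_sum, Fintype.card_unit, Fintype.card_fin]
    omega
  · exact spider_not_path i j _ hi' hj' hr' _
  · simp [spider, fromRel_adj]
  · simp [spider, fromRel_adj]
  · simp [Sym2.eq_iff]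
  · obtain ⟨e1⟩ := H1
    obtain ⟨e2⟩ := pathDel (2 * s + 1) i hi' (by omega)
    exact ⟨e1.trans e2.symm⟩
  · obtain ⟨e1⟩ := H2
    obtain ⟨e2⟩ := pathDel (2 * s + 1) j hj' (by omega)
    exact ⟨e1.trans e2.symm⟩


end ErnPaper
end
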